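/- arXiv:2504.03542 — 5 statements merged into one kernel-verified Lean document; each statement's English description precedes it below -/
import Mathlib

section
/- Let X = (ℂⁿ, ‖·‖) be a complex normed space whose closed unit ball equals absconv{u₁, …, u_N} for vectors u₁, …, u_N ∈ ℝⁿ (all coordinates real) spanning ℂⁿ. Let Y ⊆ X be a linear subspace with a basis over ℂ consisting of vectors with all coordinates real, and let x ∈ ℝⁿ \ Y be a vector for which y₀ ∈ Y is the unique best approximation in Y. Then y₀ has all coordinates real, and y₀ is a 2-strongly unique best approximation for x: there exists r > 0 such that ‖x − y‖² ≥ ‖x − y₀‖² + r‖y − y₀‖² for all y ∈ Y. -/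
open Finset

section basics
variable {n N : ℕ} (u : Fin N → (Fin n → ℂ)) (nrm : (Fin n → ℂ) → ℝ)

lemma real_smul_eq (t : ℝ) (v : Fin n → ℂ) : t • v = (t : ℂ) • v := by
  funext j; simp [Complex.real_smul]

lemma nrm_zero (hsmul : ∀ (c : ℂ) v, nrm (c • v) = ‖c‖ * nrm v) :
    nrm 0 = 0 := by
  have := hsmul 0 0
  simpa using this

lemma nrm_neg (hsmul : ∀ (c : ℂ) v, nrm (c • v) = ‖c‖ * nrm v) (v : Fin n → ℂ) :
    nrm (-v) = nrm v := by
  have := hsmul (-1) v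
  simpa using this

lemma nrm_nonneg (hadd : ∀ v w, nrm (v + w) ≤ nrm v + nrm w)
    (hsmul : ∀ (c : ℂ) v, nrm (c • v) = ‖c‖ * nrm v) (v : Fin n → ℂ) :
    0 ≤ nrm v := by
  have h0 : nrm 0 = 0 := nrm_zero nrm hsmul
  have := hadd v (-v)
  rw [add_neg_cancel, h0, nrm_neg nrm hsmul] at this
  linarith

lemma nrm_pos (hadd : ∀ v w, nrm (v + w) ≤ nrm v + nrm w)
    (hsmul : ∀ (c : ℂ) v, nrm (c • v) = ‖c‖ * nrm v)
    (hdef : ∀ v, nrm v = 0 → v = 0) {v : Fin n → ℂ} (hv : v ≠ 0) :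
    0 < nrm v := by
  rcases lt_or_eq_of_le (nrm_nonneg nrm hadd hsmul v) with h | h
  · exact h
  · exact absurd (hdef v h.symm) hv

lemma nrm_real_smul (hsmul : ∀ (c : ℂ) v, nrm (c • v) = ‖c‖ * nrm v)
    (t : ℝ) (v : Fin n → ℂ) : nrm (t • v) = |t| * nrm v := by
  rw [real_smul_eq, hsmul]; simp

lemma nrm_sub_le (hadd : ∀ v w, nrm (v + w) ≤ nrm v + nrm w)
    (p q : Fin n → ℂ) : nrm p ≤ nrm q + nrm (p - q) := by
  have := hadd q (p - q)
  simpa using this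

lemma nrm_sum_le (hadd : ∀ v w, nrm (v + w) ≤ nrm v + nrm w)
    (hsmul : ∀ (c : ℂ) v, nrm (c • v) = ‖c‖ * nrm v)
    {ι : Type*} (s : Finset ι) (f : ι → Fin n → ℂ) :
    nrm (∑ j ∈ s, f j) ≤ ∑ j ∈ s, nrm (f j) := by
  classical
  induction s using Finset.induction with
  | empty => simp [nrm_zero nrm hsmul]
  | insert j s hj ih =>
    rw [Finset.sum_insert hj, Finset.sum_insert hj]
    exact le_trans (hadd _ _) (by linarith)

end basics

section reps
variable {n N : ℕ} {u : Fin N → (Fin n → ℂ)} {nrm : (Fin n → ℂ) → ℝ}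

/-- any representation gives an upper bound for the norm -/
lemma nrm_rep_le (hsmul : ∀ (c : ℂ) v, nrm (c • v) = ‖c‖ * nrm v)
    (hball : {v | nrm v ≤ 1} =
      {v | ∃ α : Fin N → ℂ, (∑ j, ‖α j‖) ≤ 1 ∧ v = ∑ j, α j • u j})
    (α : Fin N → ℂ) : nrm (∑ j, α j • u j) ≤ ∑ j, ‖α j‖ := by
  set T : ℝ := ∑ j, ‖α j‖ with hT
  have hT0 : 0 ≤ T := Finset.sum_nonneg fun j _ => norm_nonneg _
  rcases eq_or_lt_of_le hT0 with h0 | hpos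
  · -- all α j = 0
    have : ∀ j ∈ Finset.univ, ‖α j‖ = 0 := by
      intro j hj
      have := (Finset.sum_eq_zero_iff_of_nonneg (fun j _ => norm_nonneg (α j))).1 h0.symm
      exact this j hj
    have hz : ∀ j : Fin N, α j = 0 := fun j => by
      simpa using this j (Finset.mem_univ j)
    have : (∑ j, α j • u j) = 0 := by
      apply Finset.sum_eq_zero; intro j _; rw [hz j, zero_smul]
    rw [this, ← h0]
    have := hsmul 0 0; simpa using this.le
  · have hmem : ((T : ℂ)⁻¹ • ∑ j, α j • u j) ∈
        {v | ∃ α : Fin N → ℂ, (∑ j, ‖α j‖) ≤ 1 ∧ v = ∑ j, α j • u j} := by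
      refine ⟨fun j => (T : ℂ)⁻¹ * α j, ?_, ?_⟩
      · have : (∑ j, ‖(T : ℂ)⁻¹ * α j‖) = T⁻¹ * T := by
          rw [Finset.mul_sum]
          refine Finset.sum_congr rfl fun j _ => ?_
          rw [norm_mul, norm_inv, Complex.norm_real, Real.norm_eq_abs, abs_of_nonneg hT0]
        rw [this, inv_mul_cancel₀ (ne_of_gt hpos)]
      · rw [Finset.smul_sum]; congr 1; funext j; rw [smul_smul]
    rw [← hball] at hmem
    have heq : nrm ((T : ℂ)⁻¹ • ∑ j, α j • u j) = T⁻¹ * nrm (∑ j, α j • u j) := by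
      rw [hsmul, norm_inv, Complex.norm_real, Real.norm_eq_abs, abs_of_nonneg hT0]
    rw [Set.mem_setOf_eq, heq] at hmem
    calc nrm (∑ j, α j • u j) = T * (T⁻¹ * nrm (∑ j, α j • u j)) := by
          field_simp
      _ ≤ T * 1 := mul_le_mul_of_nonneg_left hmem hT0
      _ = T := mul_one T

lemma nrm_rep_le_real (hsmul : ∀ (c : ℂ) v, nrm (c • v) = ‖c‖ * nrm v)
    (hball : {v | nrm v ≤ 1} =
      {v | ∃ α : Fin N → ℂ, (∑ j, ‖α j‖) ≤ 1 ∧ v = ∑ j, α j • u j})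
    (β : Fin N → ℝ) : nrm (∑ j, β j • u j) ≤ ∑ j, |β j| := by
  have h := nrm_rep_le hsmul hball (fun j => (β j : ℂ))
  have e1 : (∑ j, β j • u j) = ∑ j, ((β j : ℂ)) • u j :=
    Finset.sum_congr rfl fun j _ => real_smul_eq _ _
  have e2 : (∑ j, ‖(β j : ℂ)‖) = ∑ j, |β j| :=
    Finset.sum_congr rfl fun j _ => by rw [Complex.norm_real, Real.norm_eq_abs]
  rw [e1, ← e2]; exact h

/-- coordinatewise conjugation -/
def cj {n : ℕ} (v : Fin n → ℂ) : Fin n → ℂ := fun j => (starRingEnd ℂ) (v j)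

lemma cj_add (v w : Fin n → ℂ) : cj (v + w) = cj v + cj w := by
  funext j; simp [cj]

lemma cj_sub (v w : Fin n → ℂ) : cj (v - w) = cj v - cj w := by
  funext j; simp [cj]

lemma cj_smul (c : ℂ) (v : Fin n → ℂ) : cj (c • v) = (starRingEnd ℂ c) • cj v := by
  funext j; simp [cj]

lemma cj_real {v : Fin n → ℂ} (hv : ∀ j, (v j).im = 0) : cj v = v := by
  funext j; exact Complex.conj_eq_iff_im.2 (hv j)

lemma cj_cj (v : Fin n → ℂ) : cj (cj v) = v := by funext j; simp [cj]

lemma cj_sum {ι : Type*} (s : Finset ι) (f : ι → Fin n → ℂ) :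
    cj (∑ j ∈ s, f j) = ∑ j ∈ s, cj (f j) := by
  funext l; simp [cj]

end reps
section conjattain
variable {n N : ℕ} {u : Fin N → (Fin n → ℂ)} {nrm : (Fin n → ℂ) → ℝ}

lemma nrm_cj_le (hu : ∀ k j, (u k j).im = 0)
    (hadd : ∀ v w, nrm (v + w) ≤ nrm v + nrm w)
    (hsmul : ∀ (c : ℂ) v, nrm (c • v) = ‖c‖ * nrm v)
    (hdef : ∀ v, nrm v = 0 → v = 0)
    (hball : {v | nrm v ≤ 1} =
      {v | ∃ α : Fin N → ℂ, (∑ j, ‖α j‖) ≤ 1 ∧ v = ∑ j, α j • u j})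
    (v : Fin n → ℂ) : nrm (cj v) ≤ nrm v := by
  rcases eq_or_ne v 0 with rfl | hv
  · have : cj (0 : Fin n → ℂ) = 0 := by funext j; simp [cj]
    rw [this]
  · set s : ℝ := nrm v with hs
    have hspos : 0 < s := nrm_pos nrm hadd hsmul hdef hv
    have hsne : (s : ℂ) ≠ 0 := by exact_mod_cast ne_of_gt hspos
    have h1 : nrm ((s : ℂ)⁻¹ • v) ≤ 1 := by
      rw [hsmul, norm_inv, Complex.norm_real, Real.norm_eq_abs, abs_of_nonneg hspos.le,
        inv_mul_cancel₀ (ne_of_gt hspos)]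
    have h1m : ((s : ℂ)⁻¹ • v) ∈ {v | nrm v ≤ 1} := h1
    rw [hball] at h1m
    obtain ⟨α, hα1, hα2⟩ := h1m
    have h2 : (s : ℂ)⁻¹ • cj v = ∑ j, (starRingEnd ℂ (α j)) • u j := by
      have := congrArg cj hα2
      rw [cj_smul, cj_sum] at this
      rw [show (starRingEnd ℂ) ((s:ℂ)⁻¹) = (s:ℂ)⁻¹ by
        rw [map_inv₀, Complex.conj_ofReal]] at this
      rw [this]
      refine Finset.sum_congr rfl fun j _ => ?_
      rw [cj_smul, cj_real (hu j)]
    have h3m : ((s : ℂ)⁻¹ • cj v) ∈ {v : Fin n → ℂ | nrm v ≤ 1} := by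
      rw [hball]
      exact ⟨fun j => starRingEnd ℂ (α j), by simpa using hα1, h2⟩
    have h3 : nrm ((s : ℂ)⁻¹ • cj v) ≤ 1 := h3m
    rw [hsmul, norm_inv, Complex.norm_real, Real.norm_eq_abs, abs_of_nonneg hspos.le] at h3
    calc nrm (cj v) = s * (s⁻¹ * nrm (cj v)) := by field_simp
      _ ≤ s * 1 := mul_le_mul_of_nonneg_left h3 hspos.le
      _ = s := mul_one s

lemma nrm_cj (hu : ∀ k j, (u k j).im = 0)
    (hadd : ∀ v w, nrm (v + w) ≤ nrm v + nrm w)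
    (hsmul : ∀ (c : ℂ) v, nrm (c • v) = ‖c‖ * nrm v)
    (hdef : ∀ v, nrm v = 0 → v = 0)
    (hball : {v | nrm v ≤ 1} =
      {v | ∃ α : Fin N → ℂ, (∑ j, ‖α j‖) ≤ 1 ∧ v = ∑ j, α j • u j})
    (v : Fin n → ℂ) : nrm (cj v) = nrm v := by
  refine le_antisymm (nrm_cj_le hu hadd hsmul hdef hball v) ?_
  have := nrm_cj_le hu hadd hsmul hdef hball (cj v)
  rwa [cj_cj] at this

/-- attainment of an optimal real representation for real vectors -/
lemma nrm_attain (hu : ∀ k j, (u k j).im = 0)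
    (hadd : ∀ v w, nrm (v + w) ≤ nrm v + nrm w)
    (hsmul : ∀ (c : ℂ) v, nrm (c • v) = ‖c‖ * nrm v)
    (hdef : ∀ v, nrm v = 0 → v = 0)
    (hball : {v | nrm v ≤ 1} =
      {v | ∃ α : Fin N → ℂ, (∑ j, ‖α j‖) ≤ 1 ∧ v = ∑ j, α j • u j})
    {v : Fin n → ℂ} (hv : ∀ j, (v j).im = 0) :
    ∃ β : Fin N → ℝ, (∑ j, β j • u j) = v ∧ (∑ j, |β j|) = nrm v := by
  rcases eq_or_ne v 0 with rfl | hvne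
  · refine ⟨0, by simp, by simp [nrm_zero nrm hsmul]⟩
  · set s : ℝ := nrm v with hs
    have hspos : 0 < s := nrm_pos nrm hadd hsmul hdef hvne
    have hsne : (s : ℂ) ≠ 0 := by exact_mod_cast ne_of_gt hspos
    have h1 : nrm ((s : ℂ)⁻¹ • v) ≤ 1 := by
      rw [hsmul, norm_inv, Complex.norm_real, Real.norm_eq_abs, abs_of_nonneg hspos.le,
        inv_mul_cancel₀ (ne_of_gt hspos)]
    have h1m : ((s : ℂ)⁻¹ • v) ∈ {v | nrm v ≤ 1} := h1
    rw [hball] at h1m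
    obtain ⟨α, hα1, hα2⟩ := h1m
    have h2 : (s : ℂ)⁻¹ • v = ∑ j, (starRingEnd ℂ (α j)) • u j := by
      have := congrArg cj hα2
      rw [cj_smul, cj_real hv, cj_sum] at this
      rw [show (starRingEnd ℂ) ((s:ℂ)⁻¹) = (s:ℂ)⁻¹ by
        rw [map_inv₀, Complex.conj_ofReal]] at this
      rw [this]
      refine Finset.sum_congr rfl fun j _ => ?_
      rw [cj_smul, cj_real (hu j)]
    have hrep : (∑ j, (fun j => s * (α j).re) j • u j) = v := by
      have key : (2 : ℂ) • v = ∑ j, (((2 * (s * (α j).re) : ℝ) : ℂ)) • u j := by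
        have e1 : (2 : ℂ) • v = (s : ℂ) • ((s : ℂ)⁻¹ • v) + (s : ℂ) • ((s : ℂ)⁻¹ • v) := by
          rw [smul_smul, mul_inv_cancel₀ hsne, one_smul, two_smul]
        rw [e1]
        nth_rewrite 1 [hα2]
        rw [h2, Finset.smul_sum, Finset.smul_sum, ← Finset.sum_add_distrib]
        refine Finset.sum_congr rfl fun j _ => ?_
        rw [smul_smul, smul_smul, ← add_smul]
        congr 1
        rw [← mul_add, Complex.add_conj]
        push_cast
        ring
      have : v = ∑ j, ((s * (α j).re : ℝ)) • u j := by
        have := congrArg (fun w => (2 : ℂ)⁻¹ • w) key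
        rw [smul_smul] at this
        norm_num at this
        rw [this, Finset.smul_sum]
        refine Finset.sum_congr rfl fun j _ => ?_
        rw [real_smul_eq, smul_smul]
        congr 1
        push_cast
        ring
      rw [← this]
    refine ⟨fun j => s * (α j).re, hrep, ?_⟩
    refine le_antisymm ?_ ?_
    · calc (∑ j, |s * (α j).re|) = ∑ j, s * |(α j).re| := by
              refine Finset.sum_congr rfl fun j _ => ?_
              rw [abs_mul, abs_of_nonneg hspos.le]
          _ ≤ ∑ j, s * ‖α j‖ := by
              refine Finset.sum_le_sum fun j _ => ?_
              exact mul_le_mul_of_nonneg_left (Complex.abs_re_le_norm _) hspos.le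
          _ = s * ∑ j, ‖α j‖ := by rw [Finset.mul_sum]
          _ ≤ s * 1 := mul_le_mul_of_nonneg_left hα1 hspos.le
          _ = s := mul_one s
    · have h := nrm_rep_le_real hsmul hball (fun j => s * (α j).re)
      rw [hrep] at h
      exact h

lemma nrm_le_const (hadd : ∀ v w, nrm (v + w) ≤ nrm v + nrm w)
    (hsmul : ∀ (c : ℂ) v, nrm (c • v) = ‖c‖ * nrm v) :
    ∃ C : ℝ, 0 ≤ C ∧ ∀ v, nrm v ≤ C * ‖v‖ := by
  classical
  refine ⟨∑ l, nrm (Pi.single l 1), Finset.sum_nonneg fun l _ => nrm_nonneg nrm hadd hsmul _, ?_⟩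
  intro v
  have hv : v = ∑ l, v l • (Pi.single l (1:ℂ) : Fin n → ℂ) := by
    funext m
    rw [Finset.sum_apply]
    simp [Pi.single_apply, Finset.sum_ite_eq', mul_comm]
  calc nrm v ≤ ∑ l, nrm (v l • (Pi.single l (1:ℂ) : Fin n → ℂ)) := by
        nth_rewrite 1 [hv]; exact nrm_sum_le nrm hadd hsmul _ _
    _ = ∑ l, ‖v l‖ * nrm (Pi.single l 1) := by
        refine Finset.sum_congr rfl fun l _ => hsmul _ _
    _ ≤ ∑ l, ‖v‖ * nrm (Pi.single l 1) := by
        refine Finset.sum_le_sum fun l _ => ?_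
        refine mul_le_mul_of_nonneg_right ?_ (nrm_nonneg nrm hadd hsmul _)
        exact norm_le_pi_norm v l
    _ = (∑ l, nrm (Pi.single l 1)) * ‖v‖ := by
        rw [Finset.sum_mul]
        exact Finset.sum_congr rfl fun l _ => mul_comm _ _

end conjattain
section lemA
variable {n N : ℕ} {u : Fin N → (Fin n → ℂ)} {nrm : (Fin n → ℂ) → ℝ}

lemma cauchy2 (α : Fin N → ℂ) :
    (∑ j, |(α j).re|)^2 + (∑ j, |(α j).im|)^2 ≤ (∑ j, ‖α j‖)^2 := by
  have key : ∀ z w : ℂ, |z.re| * |w.re| + |z.im| * |w.im| ≤ ‖z‖ * ‖w‖ := by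
    intro z w
    have h1 : (|z.re| * |w.re| + |z.im| * |w.im|)^2 ≤ (‖z‖ * ‖w‖)^2 := by
      rw [mul_pow, Complex.sq_norm, Complex.sq_norm, Complex.normSq_apply, Complex.normSq_apply]
      nlinarith [sq_nonneg (|z.re| * |w.im| - |z.im| * |w.re|), sq_abs z.re, sq_abs z.im,
        sq_abs w.re, sq_abs w.im]
    have hb : 0 ≤ ‖z‖ * ‖w‖ :=
      mul_nonneg (norm_nonneg z) (norm_nonneg w)
    have ha : 0 ≤ |z.re| * |w.re| + |z.im| * |w.im| := by positivity
    calc |z.re| * |w.re| + |z.im| * |w.im|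
        = Real.sqrt ((|z.re| * |w.re| + |z.im| * |w.im|)^2) := (Real.sqrt_sq ha).symm
      _ ≤ Real.sqrt ((‖z‖ * ‖w‖)^2) := Real.sqrt_le_sqrt h1
      _ = ‖z‖ * ‖w‖ := Real.sqrt_sq hb
  rw [sq, sq, sq, Finset.sum_mul_sum, Finset.sum_mul_sum, Finset.sum_mul_sum,
    ← Finset.sum_add_distrib]
  refine Finset.sum_le_sum fun j _ => ?_
  rw [← Finset.sum_add_distrib]
  exact Finset.sum_le_sum fun k _ => key (α j) (α k)

lemma lemA (hu : ∀ k j, (u k j).im = 0)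
    (hadd : ∀ v w, nrm (v + w) ≤ nrm v + nrm w)
    (hsmul : ∀ (c : ℂ) v, nrm (c • v) = ‖c‖ * nrm v)
    (hdef : ∀ v, nrm v = 0 → v = 0)
    (hball : {v | nrm v ≤ 1} =
      {v | ∃ α : Fin N → ℂ, (∑ j, ‖α j‖) ≤ 1 ∧ v = ∑ j, α j • u j})
    {p q : Fin n → ℂ} (hp : ∀ j, (p j).im = 0) (hq : ∀ j, (q j).im = 0) :
    nrm p ^ 2 + nrm q ^ 2 ≤ nrm (p + Complex.I • q) ^ 2 := by
  classical
  set v : Fin n → ℂ := p + Complex.I • q with hvdef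
  have hsum : v + cj v = (2 : ℂ) • p := by
    funext j
    have hpj : (starRingEnd ℂ) (p j) = p j := Complex.conj_eq_iff_im.2 (hp j)
    have hqj : (starRingEnd ℂ) (q j) = q j := Complex.conj_eq_iff_im.2 (hq j)
    simp only [hvdef, cj, Pi.add_apply, Pi.smul_apply, smul_eq_mul, map_add, map_mul,
      Complex.conj_I, hpj, hqj]
    ring
  have hdiff : v - cj v = ((2 : ℂ) * Complex.I) • q := by
    funext j
    have hpj : (starRingEnd ℂ) (p j) = p j := Complex.conj_eq_iff_im.2 (hp j)
    have hqj : (starRingEnd ℂ) (q j) = q j := Complex.conj_eq_iff_im.2 (hq j)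
    simp only [hvdef, cj, Pi.add_apply, Pi.sub_apply, Pi.smul_apply, smul_eq_mul, map_add,
      map_mul, Complex.conj_I, hpj, hqj]
    ring
  rcases eq_or_ne v 0 with hv0 | hvne
  · -- then p = q = 0
    have hcj0 : cj v = 0 := by rw [hv0]; funext j; simp [cj]
    have hp0 : p = 0 := by
      have h2 : (2 : ℂ) • p = 0 := by rw [← hsum, hcj0, hv0, add_zero]
      have := smul_right_injective (Fin n → ℂ) (two_ne_zero (α := ℂ))
        (by rw [h2, smul_zero] : (2:ℂ) • p = (2:ℂ) • 0)
      exact this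
    have hq0 : q = 0 := by
      have h2 : ((2 : ℂ) * Complex.I) • q = 0 := by rw [← hdiff, hcj0, hv0, sub_zero]
      have hne : (2 : ℂ) * Complex.I ≠ 0 :=
        mul_ne_zero (two_ne_zero) Complex.I_ne_zero
      exact smul_right_injective (Fin n → ℂ) hne
        (by rw [h2, smul_zero] : ((2:ℂ)*Complex.I) • q = ((2:ℂ)*Complex.I) • 0)
    rw [hv0, hp0, hq0, nrm_zero nrm hsmul]
    norm_num
  · set s : ℝ := nrm v with hs
    have hspos : 0 < s := nrm_pos nrm hadd hsmul hdef hvne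
    have hsne : (s : ℂ) ≠ 0 := by exact_mod_cast ne_of_gt hspos
    have h1 : nrm ((s : ℂ)⁻¹ • v) ≤ 1 := by
      rw [hsmul, norm_inv, Complex.norm_real, Real.norm_eq_abs, abs_of_nonneg hspos.le,
        inv_mul_cancel₀ (ne_of_gt hspos)]
    have h1m : ((s : ℂ)⁻¹ • v) ∈ {v : Fin n → ℂ | nrm v ≤ 1} := h1
    rw [hball] at h1m
    obtain ⟨α, hα1, hα2⟩ := h1m
    have h2 : (s : ℂ)⁻¹ • cj v = ∑ j, (starRingEnd ℂ (α j)) • u j := by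
      have := congrArg cj hα2
      rw [cj_smul, cj_sum] at this
      rw [show (starRingEnd ℂ) ((s:ℂ)⁻¹) = (s:ℂ)⁻¹ by
        rw [map_inv₀, Complex.conj_ofReal]] at this
      rw [this]
      refine Finset.sum_congr rfl fun j _ => ?_
      rw [cj_smul, cj_real (hu j)]
    have hv2 : ∀ w : Fin n → ℂ, (s : ℂ) • ((s : ℂ)⁻¹ • w) = w := fun w => by
      rw [smul_smul, mul_inv_cancel₀ hsne, one_smul]
    -- representation of p
    have hp_rep : p = ∑ j, (s * (α j).re) • u j := by
      have key : (2 : ℂ) • p = (2 : ℂ) • ∑ j, (s * (α j).re) • u j := by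
        rw [← hsum]
        nth_rewrite 1 [← hv2 v, ← hv2 (cj v)]
        rw [hα2, h2, Finset.smul_sum, Finset.smul_sum, ← Finset.sum_add_distrib,
          Finset.smul_sum]
        refine Finset.sum_congr rfl fun j _ => ?_
        rw [real_smul_eq, smul_smul, smul_smul, smul_smul, ← add_smul]
        congr 1
        rw [← mul_add, Complex.add_conj]
        push_cast
        ring
      exact smul_right_injective (Fin n → ℂ) (two_ne_zero (α := ℂ)) key
    -- representation of q
    have hq_rep : q = ∑ j, (s * (α j).im) • u j := by
      have key : ((2 : ℂ) * Complex.I) • q = ((2 : ℂ) * Complex.I) • ∑ j, (s * (α j).im) • u j := by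
        rw [← hdiff]
        nth_rewrite 1 [← hv2 v, ← hv2 (cj v)]
        rw [hα2, h2, Finset.smul_sum, Finset.smul_sum, ← Finset.sum_sub_distrib,
          Finset.smul_sum]
        refine Finset.sum_congr rfl fun j _ => ?_
        rw [real_smul_eq, smul_smul, smul_smul, smul_smul, ← sub_smul]
        congr 1
        rw [← mul_sub, Complex.sub_conj]
        push_cast
        ring
      have hne : (2 : ℂ) * Complex.I ≠ 0 := mul_ne_zero two_ne_zero Complex.I_ne_zero
      exact smul_right_injective (Fin n → ℂ) hne key
    set A : ℝ := ∑ j, |(α j).re| with hA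
    set B : ℝ := ∑ j, |(α j).im| with hB
    have hA0 : 0 ≤ A := Finset.sum_nonneg fun j _ => abs_nonneg _
    have hB0 : 0 ≤ B := Finset.sum_nonneg fun j _ => abs_nonneg _
    have hpA : nrm p ≤ s * A := by
      have := nrm_rep_le_real hsmul hball (fun j => s * (α j).re)
      rw [← hp_rep] at this
      refine this.trans ?_
      rw [hA, Finset.mul_sum]
      refine Finset.sum_congr rfl (fun j _ => ?_) |>.le
      rw [abs_mul, abs_of_nonneg hspos.le]
    have hqB : nrm q ≤ s * B := by
      have := nrm_rep_le_real hsmul hball (fun j => s * (α j).im)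
      rw [← hq_rep] at this
      refine this.trans ?_
      rw [hB, Finset.mul_sum]
      refine Finset.sum_congr rfl (fun j _ => ?_) |>.le
      rw [abs_mul, abs_of_nonneg hspos.le]
    have hAB : A^2 + B^2 ≤ 1 := by
      have h := cauchy2 α
      have h2 : (∑ j, ‖α j‖)^2 ≤ 1 := by
        have h0 : (0:ℝ) ≤ ∑ j, ‖α j‖ :=
          Finset.sum_nonneg fun j _ => norm_nonneg _
        nlinarith
      exact le_trans h h2
    have hpn : 0 ≤ nrm p := nrm_nonneg nrm hadd hsmul p
    have hqn : 0 ≤ nrm q := nrm_nonneg nrm hadd hsmul q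
    have h1' : nrm p ^ 2 ≤ s^2 * A^2 := by nlinarith
    have h2' : nrm q ^ 2 ≤ s^2 * B^2 := by nlinarith
    have : nrm p ^2 + nrm q^2 ≤ s^2 := by nlinarith
    simpa [← hvdef, ← hs] using this

end lemA
section carath
variable {n N : ℕ} {u : Fin N → (Fin n → ℂ)} {nrm : (Fin n → ℂ) → ℝ}

lemma carath (hsmul : ∀ (c : ℂ) v, nrm (c • v) = ‖c‖ * nrm v)
    (hball : {v | nrm v ≤ 1} =
      {v | ∃ α : Fin N → ℂ, (∑ j, ‖α j‖) ≤ 1 ∧ v = ∑ j, α j • u j})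
    (v : Fin n → ℂ) :
    ∀ (m : ℕ) (β : Fin N → ℝ), (Finset.univ.filter fun j => β j ≠ 0).card = m →
      (∑ j, β j • u j = v) → ((∑ j, |β j|) = nrm v) →
      ∃ γ : Fin N → ℝ, (∑ j, γ j • u j = v) ∧ ((∑ j, |γ j|) = nrm v) ∧
        ∀ g : Fin N → ℝ, (∀ j, γ j = 0 → g j = 0) → (∑ j, g j • u j) = 0 → g = 0 := by
  classical
  intro m
  induction m using Nat.strong_induction_on with
  | _ m IH =>
    intro β hcard hrep hopt
    by_cases hU : ∀ g : Fin N → ℝ, (∀ j, β j = 0 → g j = 0) → (∑ j, g j • u j) = 0 → g = 0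
    · exact ⟨β, hrep, hopt, hU⟩
    · push_neg at hU
      obtain ⟨c, hc_supp, hc_sum, hc_ne⟩ := hU
      set P : Finset (Fin N) := Finset.univ.filter fun j => c j ≠ 0 with hP
      have hPne : P.Nonempty := by
        rcases Function.ne_iff.1 hc_ne with ⟨j, hj⟩
        refine ⟨j, ?_⟩
        simp only [hP, Finset.mem_filter, Finset.mem_univ, true_and]
        simpa using hj
      have hβc : ∀ j, c j ≠ 0 → β j ≠ 0 := by
        intro j hcj hβj
        exact hcj (hc_supp j hβj)
      obtain ⟨j₀, hj₀P, hj₀min⟩ := Finset.exists_min_image P (fun j => |β j| / |c j|) hPne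
      have hcj₀ : c j₀ ≠ 0 := by simpa [hP] using hj₀P
      have hβj₀ : β j₀ ≠ 0 := hβc j₀ hcj₀
      set s₀ : ℝ := -(β j₀ / c j₀) with hs₀
      have habs_s₀ : |s₀| = |β j₀| / |c j₀| := by
        rw [hs₀, abs_neg, abs_div]
      have hs₀pos : 0 < |s₀| := by
        rw [habs_s₀]
        exact div_pos (abs_pos.2 hβj₀) (abs_pos.2 hcj₀)
      -- bound: for any s with |s| ≤ |s₀| and any j, |s * c j| ≤ |β j|
      have hbound : ∀ (s : ℝ), |s| ≤ |s₀| → ∀ j, |s * c j| ≤ |β j| := by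
        intro s hs j
        by_cases hcj : c j = 0
        · simp [hcj, abs_nonneg]
        · have hjP : j ∈ P := by simp [hP, hcj]
          have h1 : |s₀| ≤ |β j| / |c j| := habs_s₀ ▸ hj₀min j hjP
          have h2 : |s| ≤ |β j| / |c j| := le_trans hs h1
          rw [abs_mul]
          calc |s| * |c j| ≤ (|β j| / |c j|) * |c j| :=
                mul_le_mul_of_nonneg_right h2 (abs_nonneg _)
            _ = |β j| := div_mul_cancel₀ _ (abs_ne_zero.2 hcj)
      set sg : Fin N → ℝ := fun j => if β j < 0 then -1 else 1 with hsg
      have habs_eq : ∀ (s : ℝ), |s| ≤ |s₀| → ∀ j, |β j + s * c j| = sg j * (β j + s * c j) := by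
        intro s hs j
        have hb := hbound s hs j
        by_cases hβ : β j < 0
        · have h1 : β j + s * c j ≤ 0 := by
            have h2 := le_abs_self (s * c j)
            have h3 := abs_of_neg hβ
            linarith
          rw [abs_of_nonpos h1, hsg]
          simp [hβ]
        · push_neg at hβ
          have h1 : 0 ≤ β j + s * c j := by
            have h2 := neg_abs_le (s * c j)
            have h3 := abs_of_nonneg hβ
            linarith
          rw [abs_of_nonneg h1, hsg]
          simp [not_lt.2 hβ]
      set D : ℝ := ∑ j, sg j * c j with hD
      have hsum_eq : ∀ (s : ℝ), |s| ≤ |s₀| → (∑ j, |β j + s * c j|) = nrm v + s * D := by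
        intro s hs
        have : (∑ j, |β j + s * c j|) = ∑ j, (sg j * β j + s * (sg j * c j)) := by
          refine Finset.sum_congr rfl fun j _ => ?_
          rw [habs_eq s hs j]; ring
        rw [this, Finset.sum_add_distrib, ← Finset.mul_sum, ← hD]
        congr 1
        rw [← hopt]
        refine Finset.sum_congr rfl fun j _ => ?_
        rw [hsg]
        by_cases hβ : β j < 0
        · simp [hβ, abs_of_neg hβ]
        · push_neg at hβ
          simp [not_lt.2 hβ, abs_of_nonneg hβ]
      have hrep_s : ∀ (s : ℝ), (∑ j, (β j + s * c j) • u j) = v := by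
        intro s
        have : (∑ j, (β j + s * c j) • u j) = (∑ j, β j • u j) + s • (∑ j, c j • u j) := by
          rw [Finset.smul_sum, ← Finset.sum_add_distrib]
          refine Finset.sum_congr rfl fun j _ => ?_
          rw [add_smul, smul_smul]
        rw [this, hrep, hc_sum, smul_zero, add_zero]
      have hlow : ∀ (s : ℝ), nrm v ≤ ∑ j, |β j + s * c j| := by
        intro s
        have h := nrm_rep_le_real hsmul hball (fun j => β j + s * c j)
        rwa [hrep_s s] at h
      have hD0 : D = 0 := by
        have h1 := hlow |s₀|
        rw [hsum_eq |s₀| (by rw [abs_abs])] at h1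
        have h2 := hlow (-|s₀|)
        rw [hsum_eq (-|s₀|) (by rw [abs_neg, abs_abs])] at h2
        nlinarith
      set β' : Fin N → ℝ := fun j => β j + s₀ * c j with hβ'
      have hβ'rep : (∑ j, β' j • u j) = v := hrep_s s₀
      have hβ'opt : (∑ j, |β' j|) = nrm v := by
        have := hsum_eq s₀ (le_refl _)
        rw [hD0, mul_zero, add_zero] at this
        exact this
      have hsubset : (Finset.univ.filter fun j => β' j ≠ 0) ⊂
          (Finset.univ.filter fun j => β j ≠ 0) := by
        refine Finset.ssubset_iff_of_subset ?_ |>.2 ?_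
        · intro j hj
          simp only [Finset.mem_filter, Finset.mem_univ, true_and] at hj ⊢
          intro hβj
          exact hj (by rw [hβ']; simp [hβj, hc_supp j hβj])
        · refine ⟨j₀, ?_, ?_⟩
          · simp [hβj₀]
          · simp only [Finset.mem_filter, Finset.mem_univ, true_and, not_not]
            rw [hβ', hs₀]
            field_simp
            ring
      have hlt : (Finset.univ.filter fun j => β' j ≠ 0).card < m := by
        rw [← hcard]
        exact Finset.card_lt_card hsubset
      exact IH _ hlt β' rfl hβ'rep hβ'opt

end carath
section lemB4
variable {n N : ℕ} {u : Fin N → (Fin n → ℂ)} {nrm : (Fin n → ℂ) → ℝ}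

lemma slope_aux (hadd : ∀ v w, nrm (v + w) ≤ nrm v + nrm w)
    (hsmul : ∀ (c : ℂ) v, nrm (c • v) = ‖c‖ * nrm v)
    (w d : Fin n → ℂ) {τ t : ℝ} (hτ : 0 < τ) (hle : τ ≤ t) :
    nrm (w - τ • d) ≤ (1 - τ/t) * nrm w + (τ/t) * nrm (w - t • d) := by
  have ht : 0 < t := lt_of_lt_of_le hτ hle
  have hq1 : τ / t ≤ 1 := (div_le_one ht).2 hle
  have hq0 : 0 ≤ τ / t := div_nonneg hτ.le ht.le
  have key : w - τ • d = (1 - τ/t) • w + (τ/t) • (w - t • d) := by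
    rw [smul_sub, smul_smul, div_mul_cancel₀ _ (ne_of_gt ht), sub_smul, one_smul]
    abel
  rw [key]
  refine (hadd _ _).trans ?_
  rw [nrm_real_smul nrm hsmul, nrm_real_smul nrm hsmul,
    abs_of_nonneg (by linarith), abs_of_nonneg hq0]

set_option maxHeartbeats 1000000 in
lemma lemB4 (hu : ∀ k j, (u k j).im = 0)
    (hadd : ∀ v w, nrm (v + w) ≤ nrm v + nrm w)
    (hsmul : ∀ (c : ℂ) v, nrm (c • v) = ‖c‖ * nrm v)
    (hdef : ∀ v, nrm v = 0 → v = 0)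
    (hball : {v | nrm v ≤ 1} =
      {v | ∃ α : Fin N → ℂ, (∑ j, ‖α j‖) ≤ 1 ∧ v = ∑ j, α j • u j})
    {w d : Fin n → ℂ} (hw : ∀ j, (w j).im = 0) (hd : ∀ j, (d j).im = 0)
    (hgt : ∀ t : ℝ, 0 < t → nrm w < nrm (w - t • d))
    (hP : ∀ ε : ℝ, 0 < ε → ∃ t : ℝ, 0 < t ∧ nrm (w - t • d) ≤ nrm w + ε * t) :
    False := by
  classical
  -- choose the sequence of parameters
  choose t' ht'pos ht'bd using fun m : ℕ => hP (1/((m:ℝ)+1)) (by positivity)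
  set τ : ℕ → ℝ := fun m => min (t' m) (1/((m:ℝ)+1)) with hτdef
  have hτpos : ∀ m, 0 < τ m := fun m => lt_min (ht'pos m) (by positivity)
  have hτle : ∀ m, τ m ≤ 1/((m:ℝ)+1) := fun m => min_le_right _ _
  have hslope : ∀ m, nrm (w - τ m • d) ≤ nrm w + (1/((m:ℝ)+1)) * τ m := by
    intro m
    have h1 := slope_aux hadd hsmul w d (hτpos m) (min_le_left (t' m) (1/((m:ℝ)+1)))
    have h2 := ht'bd m
    have htp := ht'pos m
    have hq0 : 0 ≤ τ m / t' m := div_nonneg (hτpos m).le htp.le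
    have h3 : (τ m / t' m) * nrm (w - t' m • d) ≤
        (τ m / t' m) * (nrm w + (1/((m:ℝ)+1)) * t' m) :=
      mul_le_mul_of_nonneg_left h2 hq0
    have h4 : (τ m / t' m) * ((1/((m:ℝ)+1)) * t' m) = (1/((m:ℝ)+1)) * τ m := by
      calc (τ m / t' m) * ((1/((m:ℝ)+1)) * t' m)
          = (1/((m:ℝ)+1)) * (τ m * (t' m / t' m)) := by ring
        _ = (1/((m:ℝ)+1)) * τ m := by rw [div_self (ne_of_gt htp), mul_one]
    nlinarith [nrm_nonneg nrm hadd hsmul w]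
  -- choose optimal reduced representations
  have hvreal : ∀ (t : ℝ) (j : Fin n), ((w - t • d) j).im = 0 := by
    intro t j
    simp [Complex.sub_im, Complex.smul_im, hw j, hd j]
  have H : ∀ m : ℕ, ∃ γ : Fin N → ℝ, (∑ j, γ j • u j = w - τ m • d) ∧
      ((∑ j, |γ j|) = nrm (w - τ m • d)) ∧
      ∀ g : Fin N → ℝ, (∀ j, γ j = 0 → g j = 0) → (∑ j, g j • u j) = 0 → g = 0 := by
    intro m
    obtain ⟨β₀, h1, h2⟩ := nrm_attain hu hadd hsmul hdef hball (hvreal (τ m))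
    exact carath hsmul hball _ _ β₀ rfl h1 h2
  choose β hβrep hβopt hβuq using H
  -- pigeonhole on supports
  obtain ⟨S, hSfib⟩ := Finite.exists_infinite_fiber
    (f := fun m : ℕ => Finset.univ.filter (fun j => β m j ≠ 0))
  set M : Set ℕ := (fun m : ℕ => Finset.univ.filter (fun j => β m j ≠ 0)) ⁻¹' {S} with hM
  have hMinf : M.Infinite := Set.infinite_coe_iff.1 hSfib
  have hMS : ∀ m ∈ M, Finset.univ.filter (fun j => β m j ≠ 0) = S := fun m hm => hm
  have hMunb : ∀ K : ℕ, ∃ m ∈ M, K ≤ m := by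
    intro K
    by_contra hcon
    push_neg at hcon
    exact hMinf (Set.Finite.subset (Set.finite_Iio K) (fun m hm => hcon m hm))
  -- two base points
  obtain ⟨m₀, hm₀⟩ := hMinf.nonempty
  obtain ⟨K₀, hK₀⟩ := exists_nat_one_div_lt (hτpos m₀)
  obtain ⟨m₁, hm₁M, hm₁K⟩ := hMunb (K₀ + 1)
  have hτm₁ : τ m₁ < τ m₀ := by
    have h1 : τ m₁ ≤ 1/((m₁:ℝ)+1) := hτle m₁
    have h2 : (1:ℝ)/((m₁:ℝ)+1) ≤ 1/((K₀:ℝ)+1+1) := by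
      apply one_div_le_one_div_of_le (by positivity)
      push_cast
      have : (K₀:ℝ) + 1 ≤ (m₁:ℝ) := by exact_mod_cast hm₁K
      linarith
    have h3 : (1:ℝ)/((K₀:ℝ)+1+1) ≤ 1/((K₀:ℝ)+1) := by
      apply one_div_le_one_div_of_le (by positivity)
      linarith
    calc τ m₁ ≤ 1/((K₀:ℝ)+1) := le_trans h1 (le_trans h2 h3)
      _ < τ m₀ := hK₀
  set a₀ : ℝ := τ m₀ with ha₀
  set a₁ : ℝ := τ m₁ with ha₁
  have hane : a₁ - a₀ ≠ 0 := sub_ne_zero.2 (ne_of_lt hτm₁)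
  -- the affine family of representations
  set q : Fin N → ℝ := fun j => (β m₁ j - β m₀ j) / (a₁ - a₀) with hq
  set p : Fin N → ℝ := fun j => β m₀ j - a₀ * q j with hp
  have hqsum : (∑ j, q j • u j) = -d := by
    have e1 : (∑ j, q j • u j) =
        (a₁ - a₀)⁻¹ • ((∑ j, β m₁ j • u j) - (∑ j, β m₀ j • u j)) := by
      rw [smul_sub, Finset.smul_sum, Finset.smul_sum, ← Finset.sum_sub_distrib]
      refine Finset.sum_congr rfl fun j _ => ?_
      rw [smul_smul, smul_smul, ← sub_smul]
      congr 1
      simp only [hq]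
      rw [div_eq_inv_mul, mul_sub]
    rw [e1, hβrep m₁, hβrep m₀]
    have e2 : (w - a₁ • d) - (w - a₀ • d) = (a₀ - a₁) • d := by
      rw [sub_smul]
      abel
    rw [e2, smul_smul, show (a₁ - a₀)⁻¹ * (a₀ - a₁) = -1 by field_simp; ring, neg_one_smul]
  have hpsum : (∑ j, p j • u j) = w := by
    have e1 : (∑ j, p j • u j) = (∑ j, β m₀ j • u j) - a₀ • (∑ j, q j • u j) := by
      rw [Finset.smul_sum, ← Finset.sum_sub_distrib]
      refine Finset.sum_congr rfl fun j _ => ?_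
      rw [smul_smul, ← sub_smul]
    rw [e1, hβrep m₀, hqsum, smul_neg, sub_neg_eq_add]
    abel
  have hBrep : ∀ t : ℝ, (∑ j, (p j + t * q j) • u j) = w - t • d := by
    intro t
    have e1 : (∑ j, (p j + t * q j) • u j) =
        (∑ j, p j • u j) + t • (∑ j, q j • u j) := by
      rw [Finset.smul_sum, ← Finset.sum_add_distrib]
      refine Finset.sum_congr rfl fun j _ => ?_
      rw [add_smul, smul_smul]
    rw [e1, hpsum, hqsum, smul_neg, ← sub_eq_add_neg]
  -- p, q are supported in S
  have hpq_supp : ∀ j, j ∉ S → p j = 0 ∧ q j = 0 := by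
    intro j hj
    have h0 : β m₀ j = 0 := by
      by_contra hne
      exact hj (by rw [← hMS m₀ hm₀]; simp [hne])
    have h1 : β m₁ j = 0 := by
      by_contra hne
      exact hj (by rw [← hMS m₁ hm₁M]; simp [hne])
    have hqj : q j = 0 := by rw [hq]; simp [h0, h1]
    exact ⟨by rw [hp]; simp [h0, hqj], hqj⟩
  -- B agrees with β m at τ m for m ∈ M
  have hBeq : ∀ m ∈ M, ∀ j, p j + τ m * q j = β m j := by
    intro m hm j
    set g : Fin N → ℝ := fun j => (p j + τ m * q j) - β m j with hg
    have hsupp : ∀ j, β m₀ j = 0 → g j = 0 := by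
      intro j hj0
      have hjS : j ∉ S := by
        rw [← hMS m₀ hm₀]
        simp [hj0]
      have hβmj : β m j = 0 := by
        by_contra hne
        exact hjS (by rw [← hMS m hm]; simp [hne])
      obtain ⟨hpj, hqj⟩ := hpq_supp j hjS
      rw [hg]
      simp [hpj, hqj, hβmj]
    have hsum0 : (∑ j, g j • u j) = 0 := by
      have e1 : (∑ j, g j • u j) =
          (∑ j, (p j + τ m * q j) • u j) - (∑ j, β m j • u j) := by
        rw [← Finset.sum_sub_distrib]
        refine Finset.sum_congr rfl fun j _ => ?_
        rw [hg, sub_smul]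
      rw [e1, hBrep (τ m), hβrep m, sub_self]
    have h0 := hβuq m₀ g hsupp hsum0
    have hgj : p j + τ m * q j - β m j = 0 := by
      have h := congrFun h0 j
      simpa [hg] using h
    linarith
  -- the breakpoint-free interval
  set F : Fin N → ℝ := fun j => if p j = 0 then 1 else |p j| / (2 * (|q j| + 1)) with hF
  have hFpos : ∀ j, 0 < F j := by
    intro j
    rw [hF]
    by_cases hpj : p j = 0
    · simp [hpj]
    · simp only [hpj, if_false]
      apply div_pos (abs_pos.2 hpj)
      positivity
  set δ : ℝ := (insert (1:ℝ) (Finset.univ.image F)).min' (Finset.insert_nonempty _ _) with hδ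
  have hδpos : 0 < δ := by
    have hmem := Finset.min'_mem (insert (1:ℝ) (Finset.univ.image F)) (Finset.insert_nonempty _ _)
    rw [← hδ] at hmem
    rcases Finset.mem_insert.1 hmem with h | h
    · rw [h]; norm_num
    · obtain ⟨j, _, hj⟩ := Finset.mem_image.1 h
      rw [← hj]
      exact hFpos j
  have hδF : ∀ j, δ ≤ F j := by
    intro j
    apply Finset.min'_le
    exact Finset.mem_insert_of_mem (Finset.mem_image_of_mem F (Finset.mem_univ j))
  -- the affine formula for the sum of absolute values
  set cc : Fin N → ℝ := fun j => |p j| with hcc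
  set ss : Fin N → ℝ := fun j => if p j = 0 then |q j| else (if p j < 0 then -q j else q j)
    with hss
  have habs : ∀ t : ℝ, 0 < t → t ≤ δ → ∀ j, |p j + t * q j| = cc j + t * ss j := by
    intro t ht htδ j
    by_cases hpj : p j = 0
    · rw [hcc, hss]
      simp only [hpj, if_true]
      simp [hpj, abs_mul, abs_of_pos ht]
    · have hFj : F j = |p j| / (2 * (|q j| + 1)) := by rw [hF]; simp [hpj]
      have htF : t ≤ |p j| / (2 * (|q j| + 1)) := by rw [← hFj]; exact le_trans htδ (hδF j)
      have htq : t * |q j| ≤ |p j| / 2 := by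
        have h1 : t * |q j| ≤ (|p j| / (2 * (|q j| + 1))) * |q j| :=
          mul_le_mul_of_nonneg_right htF (abs_nonneg _)
        have h2 : (|p j| / (2 * (|q j| + 1))) * |q j| ≤ |p j| / 2 := by
          rw [div_mul_eq_mul_div, div_le_div_iff₀ (by positivity) (by norm_num)]
          nlinarith [abs_nonneg (p j), abs_nonneg (q j)]
        linarith
      have hqb1 : t * q j ≤ t * |q j| := mul_le_mul_of_nonneg_left (le_abs_self _) ht.le
      have hqb2 : -(t * |q j|) ≤ t * q j := by
        have := mul_le_mul_of_nonneg_left (neg_abs_le (q j)) ht.le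
        linarith [this]
      rcases lt_or_gt_of_ne hpj with hneg | hpos
      · have habs_p : |p j| = -(p j) := abs_of_neg hneg
        have h1 : p j + t * q j ≤ 0 := by nlinarith
        have hssj : ss j = -q j := by
          simp only [hss]
          rw [if_neg hpj, if_pos hneg]
        have hccj : cc j = -(p j) := by
          simp only [hcc]
          exact abs_of_neg hneg
        rw [abs_of_nonpos h1, hssj, hccj]
        ring
      · have habs_p : |p j| = p j := abs_of_pos hpos
        have h1 : 0 ≤ p j + t * q j := by nlinarith
        have hssj : ss j = q j := by
          simp only [hss]
          rw [if_neg hpj, if_neg (not_lt.2 hpos.le)]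
        have hccj : cc j = p j := by
          simp only [hcc]
          exact abs_of_pos hpos
        rw [abs_of_nonneg h1, hssj, hccj]
  set CC : ℝ := ∑ j, cc j with hCC
  set SS : ℝ := ∑ j, ss j with hSS
  have hC_ge : nrm w ≤ CC := by
    have h := nrm_rep_le_real hsmul hball p
    rw [hpsum] at h
    exact h
  have hkey : ∀ m ∈ M, τ m ≤ δ → nrm (w - τ m • d) = CC + τ m * SS := by
    intro m hm hmδ
    calc nrm (w - τ m • d) = ∑ j, |β m j| := (hβopt m).symm
      _ = ∑ j, |p j + τ m * q j| := by
          refine Finset.sum_congr rfl fun j _ => ?_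
          rw [hBeq m hm j]
      _ = ∑ j, (cc j + τ m * ss j) := by
          refine Finset.sum_congr rfl fun j _ => habs (τ m) (hτpos m) hmδ j
      _ = CC + τ m * SS := by
          rw [Finset.sum_add_distrib, ← Finset.mul_sum]
  -- endgame
  obtain ⟨K₁, hK₁⟩ := exists_nat_one_div_lt hδpos
  have hτδ : ∀ m : ℕ, K₁ ≤ m → τ m ≤ δ := by
    intro m hKm
    have h1 : τ m ≤ 1/((m:ℝ)+1) := hτle m
    have h2 : (1:ℝ)/((m:ℝ)+1) ≤ 1/((K₁:ℝ)+1) := by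
      apply one_div_le_one_div_of_le (by positivity)
      have : (K₁:ℝ) ≤ (m:ℝ) := by exact_mod_cast hKm
      linarith
    linarith [hK₁]
  have hCle : CC ≤ nrm w := by
    by_contra hcon
    push_neg at hcon
    set ε : ℝ := CC - nrm w with hε
    have hεpos : 0 < ε := by rw [hε]; linarith
    obtain ⟨K₂, hK₂⟩ := exists_nat_one_div_lt (show 0 < ε / (1 + |SS|) by positivity)
    obtain ⟨m, hmM, hmK⟩ := hMunb (max K₁ K₂)
    have hmK₁ : K₁ ≤ m := le_trans (le_max_left _ _) hmK
    have hmK₂ : K₂ ≤ m := le_trans (le_max_right _ _) hmK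
    have hmδ : τ m ≤ δ := hτδ m hmK₁
    have h2 := hslope m
    rw [hkey m hmM hmδ] at h2
    -- CC - nrm w ≤ τ m / (m+1) - τ m * SS
    have e1 : ε ≤ τ m * (1/((m:ℝ)+1)) - τ m * SS := by rw [hε]; linarith
    have e2 : τ m * (1/((m:ℝ)+1)) ≤ τ m * 1 :=
      mul_le_mul_of_nonneg_left (by
        rw [div_le_one (by positivity)]
        have : (0:ℝ) ≤ (m:ℝ) := Nat.cast_nonneg m
        linarith) (hτpos m).le
    have e3 : -(τ m * SS) ≤ τ m * |SS| := by
      have := mul_le_mul_of_nonneg_left (neg_le_abs SS) (hτpos m).le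
      linarith
    have e4 : τ m * 1 + τ m * |SS| = τ m * (1 + |SS|) := by ring
    have e5 : τ m * (1 + |SS|) ≤ (1/((K₂:ℝ)+1)) * (1 + |SS|) := by
      apply mul_le_mul_of_nonneg_right _ (by positivity)
      have h1 : τ m ≤ 1/((m:ℝ)+1) := hτle m
      have h2' : (1:ℝ)/((m:ℝ)+1) ≤ 1/((K₂:ℝ)+1) := by
        apply one_div_le_one_div_of_le (by positivity)
        have : (K₂:ℝ) ≤ (m:ℝ) := by exact_mod_cast hmK₂
        linarith
      linarith
    have e6 : (1/((K₂:ℝ)+1)) * (1 + |SS|) < ε := by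
      rw [← lt_div_iff₀ (show (0:ℝ) < 1 + |SS| by positivity)]
      exact hK₂
    linarith
  have hCeq : CC = nrm w := le_antisymm hCle hC_ge
  -- SS > 0
  obtain ⟨m₂, hm₂M, hm₂K⟩ := hMunb K₁
  have hm₂δ : τ m₂ ≤ δ := hτδ m₂ hm₂K
  have hSSpos : 0 < SS := by
    have h1 := hgt (τ m₂) (hτpos m₂)
    rw [hkey m₂ hm₂M hm₂δ, hCeq] at h1
    by_contra hcon
    push_neg at hcon
    nlinarith [hτpos m₂]
  -- final contradiction
  obtain ⟨K₃, hK₃⟩ := exists_nat_one_div_lt hSSpos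
  obtain ⟨m₃, hm₃M, hm₃K⟩ := hMunb (max K₁ K₃)
  have hm₃δ : τ m₃ ≤ δ := hτδ m₃ (le_trans (le_max_left _ _) hm₃K)
  have h2 := hslope m₃
  rw [hkey m₃ hm₃M hm₃δ, hCeq] at h2
  -- τ m₃ * SS ≤ τ m₃ * (1/(m₃+1)) hence SS ≤ 1/(m₃+1)
  have e1 : τ m₃ * SS ≤ τ m₃ * (1/((m₃:ℝ)+1)) := by linarith
  have e2 : SS ≤ 1/((m₃:ℝ)+1) := le_of_mul_le_mul_left e1 (hτpos m₃)
  have e3 : (1:ℝ)/((m₃:ℝ)+1) ≤ 1/((K₃:ℝ)+1) := by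
    apply one_div_le_one_div_of_le (by positivity)
    have : (K₃:ℝ) ≤ (m₃:ℝ) := by exact_mod_cast le_trans (le_max_right _ _) hm₃K
    linarith
  linarith

end lemB4
section lemB
variable {n N : ℕ} {u : Fin N → (Fin n → ℂ)} {nrm : (Fin n → ℂ) → ℝ}

set_option maxHeartbeats 1000000 in
lemma lemB (hu : ∀ k j, (u k j).im = 0)
    (hadd : ∀ v w, nrm (v + w) ≤ nrm v + nrm w)
    (hsmul : ∀ (c : ℂ) v, nrm (c • v) = ‖c‖ * nrm v)
    (hdef : ∀ v, nrm v = 0 → v = 0)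
    (hball : {v | nrm v ≤ 1} =
      {v | ∃ α : Fin N → ℂ, (∑ j, ‖α j‖) ≤ 1 ∧ v = ∑ j, α j • u j})
    (Y : Submodule ℂ (Fin n → ℂ))
    {w : Fin n → ℂ} (hwreal : ∀ j, (w j).im = 0)
    (hgt : ∀ e, e ∈ Y → (∀ j, (e j).im = 0) → e ≠ 0 → nrm w < nrm (w - e)) :
    ∃ c : ℝ, 0 < c ∧ c ≤ 1 ∧ ∀ a, a ∈ Y → (∀ j, (a j).im = 0) →
      nrm w + c * nrm a ≤ nrm (w - a) := by
  classical
  by_contra hcon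
  push_neg at hcon
  have H : ∀ k : ℕ, ∃ a, a ∈ Y ∧ (∀ j, (a j).im = 0) ∧
      nrm (w - a) < nrm w + (1/((k:ℝ)+1)) * nrm a := by
    intro k
    obtain ⟨a, h1, h2, h3⟩ := hcon (1/((k:ℝ)+1)) (by positivity)
      (by
        rw [div_le_one (by positivity)]
        have : (0:ℝ) ≤ (k:ℝ) := Nat.cast_nonneg k
        linarith)
    exact ⟨a, h1, h2, h3⟩
  choose a haY hareal halt using H
  have hane : ∀ k, a k ≠ 0 := by
    intro k hk
    have := halt k
    rw [hk, sub_zero, nrm_zero nrm hsmul, mul_zero, add_zero] at this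
    exact lt_irrefl _ this
  have hapos : ∀ k, 0 < nrm (a k) := fun k => nrm_pos nrm hadd hsmul hdef (hane k)
  set d : ℕ → (Fin n → ℂ) := fun k => (nrm (a k))⁻¹ • a k with hddef
  have hdY : ∀ k, d k ∈ Y := by
    intro k
    simp only [hddef]
    rw [real_smul_eq]
    exact Y.smul_mem _ (haY k)
  have hdreal : ∀ k j, ((d k) j).im = 0 := by
    intro k j
    simp only [hddef]
    simp [Complex.smul_im, hareal k j]
  have hdnrm : ∀ k, nrm (d k) = 1 := by
    intro k
    simp only [hddef]
    rw [nrm_real_smul nrm hsmul, abs_of_pos (inv_pos.2 (hapos k)),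
      inv_mul_cancel₀ (ne_of_gt (hapos k))]
  have hsmul_d : ∀ k, (nrm (a k)) • d k = a k := by
    intro k
    simp only [hddef]
    rw [smul_smul, mul_inv_cancel₀ (ne_of_gt (hapos k)), one_smul]
  have hbad : ∀ k, nrm (w - (nrm (a k)) • d k) < nrm w + (1/((k:ℝ)+1)) * (nrm (a k)) := by
    intro k
    rw [hsmul_d k]
    exact halt k
  -- boundedness of the d k
  set U : ℝ := ∑ j, ‖u j‖ with hUdef
  have hdbd : ∀ k, ‖d k‖ ≤ U := by
    intro k
    obtain ⟨β, hβ1, hβ2⟩ := nrm_attain hu hadd hsmul hdef hball (hdreal k)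
    rw [hdnrm k] at hβ2
    calc ‖d k‖ = ‖∑ j, β j • u j‖ := by rw [hβ1]
      _ ≤ ∑ j, ‖β j • u j‖ := norm_sum_le _ _
      _ = ∑ j, |β j| * ‖u j‖ := by
          refine Finset.sum_congr rfl fun j _ => ?_
          rw [norm_smul, Real.norm_eq_abs]
      _ ≤ ∑ j, 1 * ‖u j‖ := by
          refine Finset.sum_le_sum fun j _ => ?_
          refine mul_le_mul_of_nonneg_right ?_ (norm_nonneg _)
          calc |β j| ≤ ∑ i, |β i| := Finset.single_le_sum (fun i _ => abs_nonneg (β i))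
                (Finset.mem_univ j)
            _ = 1 := hβ2
      _ = U := by rw [hUdef]; simp
  -- compactness
  set K : Set (Fin n → ℂ) :=
    (Y : Set (Fin n → ℂ)) ∩ ({v : Fin n → ℂ | ∀ j, (v j).im = 0} ∩
      Metric.closedBall (0 : Fin n → ℂ) U) with hKdef
  have h1cl : IsClosed (Y : Set (Fin n → ℂ)) := Submodule.closed_of_finiteDimensional Y
  have h2cl : IsClosed {v : Fin n → ℂ | ∀ j, (v j).im = 0} := by
    have he : {v : Fin n → ℂ | ∀ j, (v j).im = 0} = ⋂ j, {v : Fin n → ℂ | (v j).im = 0} := by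
      ext v; simp [Set.mem_iInter]
    rw [he]
    refine isClosed_iInter fun j => ?_
    have hcont : Continuous (fun v : Fin n → ℂ => (v j).im) :=
      Complex.continuous_im.comp (continuous_apply j)
    exact isClosed_eq hcont continuous_const
  have h3cl : IsClosed (Metric.closedBall (0 : Fin n → ℂ) U) := Metric.isClosed_closedBall
  have hKcl : IsClosed K := h1cl.inter (h2cl.inter h3cl)
  have hKbdd : Bornology.IsBounded K :=
    (Metric.isBounded_closedBall).subset (fun v hv => hv.2.2)
  have hKcomp : IsCompact K := Metric.isCompact_of_isClosed_isBounded hKcl hKbdd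
  have hdK : ∀ k, d k ∈ K := by
    intro k
    refine ⟨hdY k, hdreal k, ?_⟩
    rw [Metric.mem_closedBall, dist_zero_right]
    exact hdbd k
  obtain ⟨dlim, hdlimK, φ, hφmono, hφtend⟩ := hKcomp.tendsto_subseq hdK
  obtain ⟨hdlimY, hdlimreal, -⟩ := hdlimK
  obtain ⟨C, hC0, hCb⟩ := nrm_le_const hadd hsmul
  have hclose : ∀ ε : ℝ, 0 < ε → ∃ k : ℕ, (1/((k:ℝ)+1)) ≤ ε ∧ nrm (d k - dlim) ≤ ε := by
    intro ε hε
    have hC1 : (0:ℝ) < C + 1 := by linarith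
    obtain ⟨i₀, hi₀⟩ := Metric.tendsto_atTop.1 hφtend (ε / (C+1)) (by positivity)
    obtain ⟨K₁, hK₁⟩ := exists_nat_one_div_lt hε
    refine ⟨φ (max i₀ K₁), ?_, ?_⟩
    · have h1 : (K₁:ℕ) ≤ φ (max i₀ K₁) :=
        le_trans (le_max_right i₀ K₁) (hφmono.le_apply)
      have h2 : (1:ℝ)/((φ (max i₀ K₁):ℝ)+1) ≤ 1/((K₁:ℝ)+1) := by
        apply one_div_le_one_div_of_le (by positivity)
        have : (K₁:ℝ) ≤ (φ (max i₀ K₁):ℝ) := by exact_mod_cast h1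
        linarith
      linarith [hK₁]
    · have h2 := hi₀ (max i₀ K₁) (le_max_left i₀ K₁)
      have h3 : dist (d (φ (max i₀ K₁))) dlim < ε/(C+1) := by
        simpa using h2
      calc nrm (d (φ (max i₀ K₁)) - dlim) ≤ C * ‖d (φ (max i₀ K₁)) - dlim‖ := hCb _
        _ = C * dist (d (φ (max i₀ K₁))) dlim := by rw [dist_eq_norm]
        _ ≤ C * (ε/(C+1)) := mul_le_mul_of_nonneg_left h3.le hC0
        _ ≤ (C+1) * (ε/(C+1)) := mul_le_mul_of_nonneg_right (by linarith) (by positivity)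
        _ = ε := by field_simp
  have hdlimne : dlim ≠ 0 := by
    obtain ⟨k, -, hk2⟩ := hclose (1/2) (by norm_num)
    intro h0
    rw [h0, sub_zero, hdnrm k] at hk2
    norm_num at hk2
  have hgt' : ∀ t : ℝ, 0 < t → nrm w < nrm (w - t • dlim) := by
    intro t ht
    refine hgt (t • dlim) ?_ ?_ ?_
    · rw [real_smul_eq]; exact Y.smul_mem _ hdlimY
    · intro j; simp [Complex.smul_im, hdlimreal j]
    · exact smul_ne_zero (ne_of_gt ht) hdlimne
  have hP : ∀ ε : ℝ, 0 < ε → ∃ t : ℝ, 0 < t ∧ nrm (w - t • dlim) ≤ nrm w + ε * t := by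
    intro ε hε
    obtain ⟨k, hk1, hk2⟩ := hclose (ε/2) (by positivity)
    refine ⟨nrm (a k), hapos k, ?_⟩
    have key : w - nrm (a k) • dlim = (w - nrm (a k) • d k) + nrm (a k) • (d k - dlim) := by
      rw [smul_sub]; abel
    calc nrm (w - nrm (a k) • dlim)
        ≤ nrm (w - nrm (a k) • d k) + nrm (nrm (a k) • (d k - dlim)) := by
          rw [key]; exact hadd _ _
      _ ≤ (nrm w + (1/((k:ℝ)+1)) * nrm (a k)) + nrm (a k) * nrm (d k - dlim) := by
          have h1 := (hbad k).le
          have h2 : nrm (nrm (a k) • (d k - dlim)) = nrm (a k) * nrm (d k - dlim) := by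
            rw [nrm_real_smul nrm hsmul, abs_of_pos (hapos k)]
          linarith
      _ ≤ nrm w + ε * nrm (a k) := by
          have h3 : (1/((k:ℝ)+1)) * nrm (a k) ≤ (ε/2) * nrm (a k) :=
            mul_le_mul_of_nonneg_right hk1 (hapos k).le
          have h4 : nrm (a k) * nrm (d k - dlim) ≤ nrm (a k) * (ε/2) :=
            mul_le_mul_of_nonneg_left hk2 (hapos k).le
          nlinarith [hapos k]
  exact lemB4 hu hadd hsmul hdef hball hwreal hdlimreal hgt' hP

end lemB
set_option maxHeartbeats 1000000 in
theorem stmt13 (n N : ℕ) (u : Fin N → (Fin n → ℂ)) (hu : ∀ k j, (u k j).im = 0)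
    (hspan : Submodule.span ℂ (Set.range u) = ⊤)
    (nrm : (Fin n → ℂ) → ℝ)
    (hadd : ∀ v w, nrm (v + w) ≤ nrm v + nrm w)
    (hsmul : ∀ (c : ℂ) v, nrm (c • v) = ‖c‖ * nrm v)
    (hdef : ∀ v, nrm v = 0 → v = 0)
    (hball : {v | nrm v ≤ 1} =
      {v | ∃ α : Fin N → ℂ, (∑ j, ‖α j‖) ≤ 1 ∧ v = ∑ j, α j • u j})
    (Y : Submodule ℂ (Fin n → ℂ))
    (hreal : ∃ (k : ℕ) (b : Module.Basis (Fin k) ℂ Y), ∀ i j, ((b i : Fin n → ℂ) j).im = 0)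
    (x : Fin n → ℂ) (hxreal : ∀ j, (x j).im = 0) (hx : x ∉ Y)
    (y₀ : Fin n → ℂ) (hy₀ : y₀ ∈ Y)
    (huniq : ∀ y ∈ Y, y ≠ y₀ → nrm (x - y) > nrm (x - y₀)) :
    (∀ j, (y₀ j).im = 0) ∧
    ∃ r > 0, ∀ y ∈ Y, nrm (x - y) ^ 2 ≥ nrm (x - y₀) ^ 2 + r * nrm (y - y₀) ^ 2 := by
  classical
  obtain ⟨k, b, hb⟩ := hreal
  -- Y is closed under conjugation
  have hYcj : ∀ y ∈ Y, cj y ∈ Y := by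
    intro y hy
    have hrepr := Module.Basis.sum_repr b ⟨y, hy⟩
    have h0 := congrArg (Y.subtype) hrepr
    rw [map_sum] at h0
    simp only [map_smul, Submodule.subtype_apply] at h0
    have hy_eq : y = ∑ i, (b.repr ⟨y, hy⟩ i : ℂ) • ((b i : Fin n → ℂ)) := h0.symm
    rw [hy_eq, cj_sum]
    refine Submodule.sum_mem Y fun i _ => ?_
    rw [cj_smul, cj_real (hb i)]
    exact Y.smul_mem _ (b i).2
  -- y₀ is real
  have hy₀cj : cj y₀ = y₀ := by
    set y₁ : Fin n → ℂ := (2:ℂ)⁻¹ • (y₀ + cj y₀) with hy₁def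
    have hy₁Y : y₁ ∈ Y := Y.smul_mem _ (Y.add_mem hy₀ (hYcj y₀ hy₀))
    have hxy₁ : x - y₁ = (2:ℂ)⁻¹ • ((x - y₀) + (x - cj y₀)) := by
      simp only [hy₁def]
      funext j
      simp only [Pi.sub_apply, Pi.smul_apply, Pi.add_apply, smul_eq_mul, cj]
      ring
    have hcjeq : x - cj y₀ = cj (x - y₀) := by rw [cj_sub, cj_real hxreal]
    have hle : nrm (x - y₁) ≤ nrm (x - y₀) := by
      rw [hxy₁, hsmul]
      have h1 := hadd (x - y₀) (x - cj y₀)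
      have h2 : nrm (x - cj y₀) = nrm (x - y₀) := by
        rw [hcjeq, nrm_cj hu hadd hsmul hdef hball]
      have h3 : ‖(2:ℂ)⁻¹‖ = 1/2 := by
        rw [norm_inv, Complex.norm_two]
        norm_num
      rw [h3]
      linarith
    have heq : y₁ = y₀ := by
      by_contra hne
      exact absurd hle (not_le.2 (huniq y₁ hy₁Y hne))
    funext j
    have hj := congrFun heq j
    simp only [hy₁def, Pi.smul_apply, Pi.add_apply, smul_eq_mul, cj] at hj ⊢
    linear_combination (2:ℂ) * hj
  have hy₀real : ∀ j, (y₀ j).im = 0 := fun j => Complex.conj_eq_iff_im.1 (congrFun hy₀cj j)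
  have hwreal : ∀ j, ((x - y₀) j).im = 0 := by
    intro j; simp [Complex.sub_im, hxreal j, hy₀real j]
  have hgt : ∀ e, e ∈ Y → (∀ j, (e j).im = 0) → e ≠ 0 →
      nrm (x - y₀) < nrm ((x - y₀) - e) := by
    intro e heY _ hene
    have h1 := huniq (y₀ + e) (Y.add_mem hy₀ heY) (fun hcon => hene (by
      have := hcon
      rwa [add_eq_left] at this))
    have h2 : x - (y₀ + e) = (x - y₀) - e := by abel
    rwa [h2] at h1
  obtain ⟨c, hc0, hc1, hcB⟩ := lemB hu hadd hsmul hdef hball Y hwreal hgt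
  refine ⟨hy₀real, c^2/2, by positivity, ?_⟩
  intro y hy
  set z : Fin n → ℂ := y - y₀ with hzdef
  have hzY : z ∈ Y := Y.sub_mem hy hy₀
  set aa : Fin n → ℂ := (1/2 : ℝ) • (z + cj z) with haadef
  set bb : Fin n → ℂ := (1/2 : ℝ) • (Complex.I • (cj z - z)) with hbbdef
  have haaY : aa ∈ Y := by
    simp only [haadef]
    rw [real_smul_eq]
    exact Y.smul_mem _ (Y.add_mem hzY (hYcj z hzY))
  have hbbY : bb ∈ Y := by
    simp only [hbbdef]
    rw [real_smul_eq]
    exact Y.smul_mem _ (Y.smul_mem _ (Y.sub_mem (hYcj z hzY) hzY))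
  have haareal : ∀ j, (aa j).im = 0 := by
    intro j
    simp only [haadef, Pi.smul_apply, Pi.add_apply]
    rw [Complex.smul_im]
    simp [cj, Complex.add_im]
  have hbbreal : ∀ j, (bb j).im = 0 := by
    intro j
    simp only [hbbdef, Pi.smul_apply, Pi.sub_apply, smul_eq_mul]
    rw [Complex.smul_im]
    simp [cj, Complex.mul_im, Complex.sub_re]
  have hzdec : z = aa + Complex.I • bb := by
    funext j
    simp only [haadef, hbbdef, cj, Pi.add_apply, Pi.smul_apply, Complex.real_smul,
      Pi.sub_apply, smul_eq_mul]
    push_cast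
    linear_combination (-(1/2 : ℂ) * ((starRingEnd ℂ) (z j) - z j)) * Complex.I_sq
  have hxy : x - y = ((x - y₀) - aa) + Complex.I • (-bb) := by
    have h1 : x - y = (x - y₀) - z := by rw [hzdef]; abel
    rw [h1, hzdec, smul_neg]
    abel
  have hA := lemA hu hadd hsmul hdef hball (p := (x - y₀) - aa) (q := -bb)
    (fun j => by simp [Complex.sub_im, hxreal j, hy₀real j, haareal j])
    (fun j => by simp [Complex.neg_im, hbbreal j])
  rw [← hxy, nrm_neg nrm hsmul] at hA
  have hB := hcB aa haaY haareal
  have hzn : nrm z ≤ nrm aa + nrm bb := by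
    calc nrm z = nrm (aa + Complex.I • bb) := by rw [← hzdec]
      _ ≤ nrm aa + nrm (Complex.I • bb) := hadd _ _
      _ = nrm aa + nrm bb := by rw [hsmul, Complex.norm_I, one_mul]
  have hA0 : 0 ≤ nrm aa := nrm_nonneg nrm hadd hsmul aa
  have hB0 : 0 ≤ nrm bb := nrm_nonneg nrm hadd hsmul bb
  have hW0 : 0 ≤ nrm (x - y₀) := nrm_nonneg nrm hadd hsmul _
  have hz0 : 0 ≤ nrm z := nrm_nonneg nrm hadd hsmul z
  have h5 : (nrm (x - y₀) + c * nrm aa)^2 ≤ nrm ((x - y₀) - aa)^2 :=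
    pow_le_pow_left₀ (add_nonneg hW0 (mul_nonneg hc0.le hA0)) hB 2
  have e1 : nrm z^2 ≤ 2*(nrm aa)^2 + 2*(nrm bb)^2 := by
    nlinarith [sq_nonneg (nrm aa - nrm bb)]
  have hc2 : c^2 ≤ 1 := by nlinarith
  have e2 : c^2 * (nrm bb)^2 ≤ (nrm bb)^2 := by nlinarith [sq_nonneg (nrm bb)]
  have e3 : c^2/2 * nrm z^2 ≤ c^2/2 * (2*(nrm aa)^2 + 2*(nrm bb)^2) :=
    mul_le_mul_of_nonneg_left e1 (by positivity)
  have hfin : nrm (x - y₀)^2 + c^2/2 * nrm z^2 ≤ nrm (x - y)^2 := by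
    nlinarith [mul_nonneg (mul_nonneg hc0.le hW0) hA0]
  calc nrm (x - y₀) ^ 2 + c ^ 2 / 2 * nrm (y - y₀) ^ 2
      = nrm (x - y₀) ^ 2 + c ^ 2 / 2 * nrm z ^ 2 := by rw [hzdef]
    _ ≤ nrm (x - y) ^ 2 := hfin
end

section
/- Let Y be a linear subspace of the complex space ℓ₁ⁿ that has a basis over ℂ consisting of vectors with all coordinates real, and let x ∈ ℝⁿ \ Y be a vector with all coordinates real. If y₀ ∈ Y is the unique best approximation in Y for x, then y₀ has all coordinates real and y₀ is a 1-strongly unique best approximation for x in Y: there exists r > 0 such that ‖x − y‖₁ ≥ ‖x − y₀‖₁ + r‖y − y₀‖₁ for all y ∈ Y. -/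
theorem conj_mem' (n : ℕ) (Y : Submodule ℂ (Fin n → ℂ))
    (hreal : ∃ (k : ℕ) (b : Module.Basis (Fin k) ℂ Y), ∀ i j, ((b i : Fin n → ℂ) j).im = 0)
    (z : Fin n → ℂ) (hz : z ∈ Y) : (fun j => (starRingEnd ℂ) (z j)) ∈ Y := by
  obtain ⟨k, b, hb⟩ := hreal
  have hrep : ∀ j, z j = ∑ i, b.repr ⟨z, hz⟩ i * ((b i : Fin n → ℂ) j) := by
    intro j
    have := b.sum_repr ⟨z, hz⟩
    have h2 := congrArg (fun (w : Y) => (w : Fin n → ℂ) j) this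
    simp only at h2
    rw [← h2]
    push_cast
    simp
  have heq : (fun j => (starRingEnd ℂ) (z j)) =
      ∑ i, (starRingEnd ℂ) (b.repr ⟨z, hz⟩ i) • ((b i : Fin n → ℂ)) := by
    funext j
    rw [hrep j]
    simp only [Finset.sum_apply, Pi.smul_apply, smul_eq_mul, map_sum, map_mul]
    congr 1
    funext i
    congr 1
    exact Complex.conj_eq_iff_im.mpr (hb i j)
  rw [heq]
  exact Submodule.sum_mem Y fun i _ => Submodule.smul_mem Y _ (b i).2

theorem stmt15 (n : ℕ) (Y : Submodule ℂ (Fin n → ℂ))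
    (hreal : ∃ (k : ℕ) (b : Module.Basis (Fin k) ℂ Y), ∀ i j, ((b i : Fin n → ℂ) j).im = 0)
    (x : Fin n → ℂ) (hxreal : ∀ j, (x j).im = 0) (hx : x ∉ Y)
    (y₀ : Fin n → ℂ) (hy₀ : y₀ ∈ Y)
    (huniq : ∀ y ∈ Y, y ≠ y₀ →
      (∑ j, ‖(x - y) j‖) > ∑ j, ‖(x - y₀) j‖) :
    (∀ j, (y₀ j).im = 0) ∧
    ∃ r > 0, ∀ y ∈ Y,
      (∑ j, ‖(x - y) j‖) ≥
        (∑ j, ‖(x - y₀) j‖) + r * ∑ j, ‖(y - y₀) j‖ := by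
  classical
  have hconj : ∀ z ∈ Y, (fun j => (starRingEnd ℂ) (z j)) ∈ Y := conj_mem' n Y hreal
  -- n must be positive
  rcases Nat.eq_zero_or_pos n with h0 | hn
  · exfalso
    subst h0
    exact hx ((Subsingleton.elim x 0) ▸ Y.zero_mem)
  haveI : Nonempty (Fin n) := ⟨⟨0, hn⟩⟩
  -- Step 1 : y₀ is real
  have hy₀im : ∀ j, (y₀ j).im = 0 := by
    by_contra h
    push_neg at h
    obtain ⟨j₀, hj₀⟩ := h
    have hne : (fun j => (starRingEnd ℂ) (y₀ j)) ≠ y₀ := by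
      intro he
      exact hj₀ (Complex.conj_eq_iff_im.mp (congrFun he j₀))
    have hlt := huniq _ (hconj y₀ hy₀) hne
    have heq : (∑ j, ‖(x - fun j => (starRingEnd ℂ) (y₀ j)) j‖)
        = ∑ j, ‖(x - y₀) j‖ := by
      refine Finset.sum_congr rfl fun j _ => ?_
      have h1 : (x - fun j => (starRingEnd ℂ) (y₀ j)) j = (starRingEnd ℂ) ((x - y₀) j) := by
        simp only [Pi.sub_apply, map_sub]
        congr 1
        exact (Complex.conj_eq_iff_im.mpr (hxreal j)).symm
      rw [h1, Complex.norm_conj]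
    rw [heq] at hlt
    exact lt_irrefl _ hlt
  refine ⟨hy₀im, ?_⟩
  -- Step 2 : setup
  set a : Fin n → ℝ := fun j => (x j - y₀ j).re with ha
  have hxy : ∀ j, (x - y₀) j = (a j : ℂ) := by
    intro j
    apply Complex.ext
    · simp [ha]
    · simp [ha, Complex.sub_im, hxreal, hy₀im]
  set s : Fin n → ℝ := fun j => if a j < 0 then -1 else 1 with hs
  have hss : ∀ j, s j = if a j < 0 then -1 else 1 := fun j => congrFun hs j
  have hs1 : ∀ j, |s j| = 1 := by
    intro j
    rw [hss]
    split_ifs with h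
    · simp
    · simp
  have hsa : ∀ j, s j * a j = |a j| := by
    intro j
    rw [hss]
    split_ifs with h
    · rw [abs_of_neg h]; ring
    · rw [abs_of_nonneg (not_lt.mp h)]; ring
  set φ : (Fin n → ℂ) → ℝ :=
    fun z => ∑ j, (if a j = 0 then ‖z j‖ else -(s j) * (z j).re) with hφ
  have hpt : ∀ (j : Fin n) (c : ℂ),
      |a j| + (if a j = 0 then ‖c‖ else -(s j) * c.re)
        ≤ ‖(a j : ℂ) - c‖ := by
    intro j c
    split_ifs with h
    · rw [h]
      simp
    · have h1 : |((a j : ℂ) - c).re| ≤ ‖(a j : ℂ) - c‖ := Complex.abs_re_le_norm _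
      have h2 : ((a j : ℂ) - c).re = a j - c.re := by simp
      rw [h2] at h1
      have h3 : s j * (a j - c.re) ≤ |s j * (a j - c.re)| := le_abs_self _
      rw [abs_mul, hs1 j, one_mul] at h3
      have h4 : s j * (a j - c.re) = |a j| - s j * c.re := by
        rw [mul_sub, hsa j]
      linarith
  have hbase : (∑ j, ‖(x - y₀) j‖) = ∑ j, |a j| := by
    refine Finset.sum_congr rfl fun j _ => ?_
    rw [hxy j, Complex.norm_real, Real.norm_eq_abs]
  have hkey : ∀ z : Fin n → ℂ,
      (∑ j, |a j|) + φ z ≤ ∑ j, ‖(a j : ℂ) - z j‖ := by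
    intro z
    rw [hφ, ← Finset.sum_add_distrib]
    exact Finset.sum_le_sum fun j _ => hpt j (z j)
  -- Step 3 : φ is positive on real nonzero elements of Y
  have hP : ∀ w, w ∈ Y → (∀ j, (w j).im = 0) → w ≠ 0 → 0 < φ w := by
    intro w hwY hwim hw0
    set t : ℝ := Finset.univ.inf' Finset.univ_nonempty
        (fun j => if a j = 0 then 1 else |a j| / (|(w j).re| + 1)) with ht
    have htpos : 0 < t := by
      rw [ht]
      refine (Finset.lt_inf'_iff _).mpr fun j _ => ?_
      split_ifs with h
      · norm_num
      · exact div_pos (abs_pos.mpr h) (by positivity)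
    have htq : ∀ j, a j ≠ 0 → t * |(w j).re| < |a j| := by
      intro j hj
      have hle : t ≤ |a j| / (|(w j).re| + 1) := by
        have := Finset.inf'_le (fun j => if a j = 0 then 1 else |a j| / (|(w j).re| + 1))
          (Finset.mem_univ j)
        rw [if_neg hj] at this
        rw [ht]
        exact this
      have h1 : 0 < |(w j).re| + 1 := by positivity
      have h2 : t * (|(w j).re| + 1) ≤ |a j| := by
        rw [div_eq_mul_inv] at hle
        calc t * (|(w j).re| + 1) ≤ |a j| * (|(w j).re| + 1)⁻¹ * (|(w j).re| + 1) := by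
              exact mul_le_mul_of_nonneg_right hle h1.le
          _ = |a j| := by field_simp
      nlinarith [abs_nonneg ((w j).re)]
    set y : Fin n → ℂ := y₀ + (t : ℂ) • w with hy
    have hyY : y ∈ Y := Y.add_mem hy₀ (Y.smul_mem _ hwY)
    have hyne : y ≠ y₀ := by
      intro h
      rw [hy] at h
      have : (t : ℂ) • w = 0 := by
        have := congrArg (fun u => u - y₀) h
        simpa using this
      exact hw0 ((smul_eq_zero.mp this).resolve_left
        (Complex.ofReal_ne_zero.mpr htpos.ne'))
    have hwre : ∀ j, w j = (((w j).re : ℝ) : ℂ) := by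
      intro j
      apply Complex.ext <;> simp [hwim j]
    have hcalc : (∑ j, ‖(x - y) j‖) = (∑ j, |a j|) + t * φ w := by
      rw [hφ, Finset.mul_sum, ← Finset.sum_add_distrib]
      refine Finset.sum_congr rfl fun j _ => ?_
      have hxyj : (x - y) j = ((a j - t * (w j).re : ℝ) : ℂ) := by
        have : (x - y) j = (x - y₀) j - (t : ℂ) * w j := by
          simp [hy]
          ring
        rw [this, hxy j]
        apply Complex.ext <;>
          simp [Complex.mul_re, Complex.mul_im, hwim j]
      rw [hxyj, Complex.norm_real, Real.norm_eq_abs]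
      by_cases h0 : a j = 0
      · rw [if_pos h0, h0]
        have habs : ‖w j‖ = |(w j).re| := by
          conv_lhs => rw [hwre j]
          exact (Complex.norm_real _).trans (Real.norm_eq_abs _)
        rw [habs]
        rw [zero_sub, abs_neg, abs_mul, abs_of_nonneg htpos.le]
        simp
      · rw [if_neg h0]
        have hq := htq j h0
        have hle1 : (w j).re ≤ |(w j).re| := le_abs_self _
        have hle2 : -(w j).re ≤ |(w j).re| := neg_le_abs _
        have hssign := hss j
        rcases lt_or_gt_of_ne h0 with hA | hA
        · rw [hssign, if_pos hA]
          rw [abs_of_neg hA] at hq ⊢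
          have hneg : a j - t * (w j).re < 0 := by nlinarith
          rw [abs_of_neg hneg]
          ring
        · rw [hssign, if_neg (not_lt.mpr hA.le)]
          rw [abs_of_pos hA] at hq ⊢
          have hpos2 : 0 < a j - t * (w j).re := by nlinarith
          rw [abs_of_pos hpos2]
          ring
    have hlt := huniq y hyY hyne
    rw [hbase, hcalc] at hlt
    nlinarith
  -- Step 4 : φ is positive on all nonzero elements of Y
  have hpos : ∀ z, z ∈ Y → z ≠ 0 → 0 < φ z := by
    intro z hzY hz0
    set u : Fin n → ℂ := fun j => (((z j).re : ℝ) : ℂ) with hu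
    set v : Fin n → ℂ := fun j => (((z j).im : ℝ) : ℂ) with hv
    have hzc : (fun j => (starRingEnd ℂ) (z j)) ∈ Y := hconj z hzY
    have huY : u ∈ Y := by
      have : u = ((2 : ℂ)⁻¹) • (z + fun j => (starRingEnd ℂ) (z j)) := by
        funext j
        simp only [hu, Pi.smul_apply, Pi.add_apply, smul_eq_mul]
        rw [Complex.add_conj]
        push_cast
        ring
      rw [this]
      exact Y.smul_mem _ (Y.add_mem hzY hzc)
    have hvY : v ∈ Y := by
      have : v = ((2 * Complex.I : ℂ)⁻¹) • (z - fun j => (starRingEnd ℂ) (z j)) := by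
        funext j
        simp only [hv, Pi.smul_apply, Pi.sub_apply, smul_eq_mul]
        rw [Complex.sub_conj]
        push_cast
        have h2I : (2 * Complex.I : ℂ) ≠ 0 := by simp [Complex.I_ne_zero]
        field_simp
      rw [this]
      exact Y.smul_mem _ (Y.sub_mem hzY hzc)
    have huim : ∀ j, (u j).im = 0 := fun j => by simp [hu]
    have hvim : ∀ j, (v j).im = 0 := fun j => by simp [hv]
    by_cases hu0 : u = 0
    · have hzre : ∀ j, (z j).re = 0 := by
        intro j
        have := congrFun hu0 j
        simpa [hu] using this
      have hv0 : v ≠ 0 := by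
        intro h
        apply hz0
        funext j
        have him : (z j).im = 0 := by simpa [hv] using congrFun h j
        exact Complex.ext (hzre j) him
      have h1 := hP v hvY hvim hv0
      have h2 := hP (-v) (Y.neg_mem hvY) (fun j => by simp [hvim j]) (neg_ne_zero.mpr hv0)
      have hsum : φ v + φ (-v) = 2 * ∑ j, (if a j = 0 then ‖v j‖ else 0) := by
        rw [hφ]
        simp only [Pi.neg_apply, Finset.mul_sum, ← Finset.sum_add_distrib]
        refine Finset.sum_congr rfl fun j _ => ?_
        split_ifs with h
        · rw [norm_neg]
          ring
        · simp only [Complex.neg_re]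
          ring
      have hge : (∑ j, (if a j = 0 then ‖v j‖ else 0)) ≤ φ z := by
        rw [hφ]
        refine Finset.sum_le_sum fun j _ => ?_
        split_ifs with h
        · have : ‖v j‖ = |(z j).im| := by simp [hv]
          rw [this]
          exact (Complex.abs_im_le_norm (z j))
        · simp [hzre j]
      linarith
    · have h1 := hP u huY huim hu0
      have hge : φ u ≤ φ z := by
        rw [hφ]
        refine Finset.sum_le_sum fun j _ => ?_
        split_ifs with h
        · have : ‖u j‖ = |(z j).re| := by simp [hu]
          rw [this]
          exact Complex.abs_re_le_norm (z j)
        · simp [hu]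
      linarith
  -- Step 5 : compactness and conclusion
  have hφsmul : ∀ (c : ℝ), 0 ≤ c → ∀ z, φ ((c : ℂ) • z) = c * φ z := by
    intro c hc z
    rw [hφ]
    simp only [Pi.smul_apply, smul_eq_mul, Finset.mul_sum]
    refine Finset.sum_congr rfl fun j _ => ?_
    split_ifs with h
    · rw [norm_mul, Complex.norm_real, Real.norm_eq_abs, abs_of_nonneg hc]
    · simp [Complex.mul_re, Complex.ofReal_re, Complex.ofReal_im]
      ring
  have hsub : ∀ (y : Fin n → ℂ) (j : Fin n), (x - y) j = (a j : ℂ) - (y - y₀) j := by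
    intro y j
    have : (x - y) j = (x - y₀) j - (y - y₀) j := by
      simp only [Pi.sub_apply]
      ring
    rw [this, hxy j]
  have hmain : ∀ y : Fin n → ℂ,
      (∑ j, |a j|) + φ (y - y₀) ≤ ∑ j, ‖(x - y) j‖ := by
    intro y
    calc (∑ j, |a j|) + φ (y - y₀) ≤ ∑ j, ‖(a j : ℂ) - (y - y₀) j‖ :=
          hkey (y - y₀)
      _ = ∑ j, ‖(x - y) j‖ := by
          refine Finset.sum_congr rfl fun j _ => ?_
          rw [hsub y j]
  by_cases htriv : ∀ z ∈ Y, z = (0 : Fin n → ℂ)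
  · refine ⟨1, one_pos, fun y hy => ?_⟩
    have h1 : y = 0 := htriv y hy
    have h2 : y₀ = 0 := htriv y₀ hy₀
    rw [h1, h2]
    simp
  · push_neg at htriv
    obtain ⟨z₀, hz₀Y, hz₀⟩ := htriv
    set N : (Fin n → ℂ) → ℝ := fun z => ∑ j, ‖z j‖ with hN
    have hNcont : Continuous N :=
      continuous_finset_sum _ fun j _ => continuous_norm.comp (continuous_apply j)
    have hNpos : ∀ z : Fin n → ℂ, z ≠ 0 → 0 < N z := by
      intro z hz
      obtain ⟨j, hj⟩ := Function.ne_iff.mp hz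
      exact Finset.sum_pos' (fun i _ => norm_nonneg _)
        ⟨j, Finset.mem_univ j, norm_pos_iff.mpr hj⟩
    set K : Set (Fin n → ℂ) := {z | z ∈ Y ∧ N z = 1} with hK
    have hKeq : K = (Y : Set (Fin n → ℂ)) ∩ N ⁻¹' {1} := rfl
    have hKclosed : IsClosed K := by
      rw [hKeq]
      exact (Submodule.closed_of_finiteDimensional Y).inter
        (isClosed_singleton.preimage hNcont)
    have hKbdd : Bornology.IsBounded K := by
      rw [Metric.isBounded_iff_subset_closedBall 0]
      refine ⟨1, fun z hz => ?_⟩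
      rw [Metric.mem_closedBall, dist_zero_right]
      rw [pi_norm_le_iff_of_nonneg zero_le_one]
      intro j
      calc ‖z j‖ = ‖z j‖ := rfl
        _ ≤ N z := Finset.single_le_sum (f := fun i => ‖z i‖)
            (fun i _ => norm_nonneg _) (Finset.mem_univ j)
        _ = 1 := hz.2
    have hKcompact : IsCompact K := Metric.isCompact_of_isClosed_isBounded hKclosed hKbdd
    have hKne : K.Nonempty := by
      refine ⟨(((N z₀)⁻¹ : ℝ) : ℂ) • z₀, Y.smul_mem _ hz₀Y, ?_⟩
      have hc := hNpos z₀ hz₀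
      show N _ = 1
      rw [hN]
      simp only [Pi.smul_apply]
      have : ∀ j, ‖(((N z₀)⁻¹ : ℝ) : ℂ) * z₀ j‖ = (N z₀)⁻¹ * ‖z₀ j‖ := by
        intro j
        rw [norm_mul, Complex.norm_real, Real.norm_eq_abs, abs_of_nonneg (inv_nonneg.mpr hc.le)]
      simp only [hN] at this
      simp only [smul_eq_mul, this]
      rw [← Finset.mul_sum]
      exact inv_mul_cancel₀ hc.ne'
    have hφcont : Continuous φ := by
      rw [hφ]
      refine continuous_finset_sum _ fun j _ => ?_
      split_ifs with h
      · exact continuous_norm.comp (continuous_apply j)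
      · exact continuous_const.mul (Complex.continuous_re.comp (continuous_apply j))
    obtain ⟨z₁, hz₁K, hmin'⟩ := hKcompact.exists_isMinOn hKne hφcont.continuousOn
    have hmin : ∀ z ∈ K, φ z₁ ≤ φ z := fun z hz => hmin' hz
    have hz₁ne : z₁ ≠ 0 := by
      intro h
      rw [h] at hz₁K
      have := hz₁K.2
      simp [hN] at this
    have hr : 0 < φ z₁ := hpos z₁ hz₁K.1 hz₁ne
    refine ⟨φ z₁, hr, fun y hy => ?_⟩
    set w : Fin n → ℂ := y - y₀ with hw
    have hwY : w ∈ Y := Y.sub_mem hy hy₀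
    by_cases hw0 : w = 0
    · have : y = y₀ := by
        have := sub_eq_zero.mp hw0
        exact this
      rw [this, hw0]
      simp
    · have hc := hNpos w hw0
      have hzK : (((N w)⁻¹ : ℝ) : ℂ) • w ∈ K := by
        refine ⟨Y.smul_mem _ hwY, ?_⟩
        show N _ = 1
        rw [hN]
        simp only [Pi.smul_apply, smul_eq_mul]
        have : ∀ j, ‖(((N w)⁻¹ : ℝ) : ℂ) * w j‖ = (N w)⁻¹ * ‖w j‖ := by
          intro j
          rw [norm_mul, Complex.norm_real, Real.norm_eq_abs, abs_of_nonneg (inv_nonneg.mpr hc.le)]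
        simp only [hN] at this
        simp only [this]
        rw [← Finset.mul_sum]
        exact inv_mul_cancel₀ hc.ne'
      have h1 : φ z₁ ≤ φ ((((N w)⁻¹ : ℝ) : ℂ) • w) := hmin _ hzK
      rw [hφsmul _ (inv_nonneg.mpr hc.le) w] at h1
      have h2 : φ z₁ * N w ≤ φ w := by
        have := mul_le_mul_of_nonneg_left h1 hc.le
        rw [← mul_assoc, mul_inv_cancel₀ hc.ne', one_mul] at this
        linarith [mul_comm (φ z₁) (N w) ▸ this]
      have h3 := hmain y
      rw [hbase]
      have hNw : N w = ∑ j, ‖(y - y₀) j‖ := by rw [hN, hw]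
      rw [← hNw]
      linarith
end

section
/- Let X be a normed space over 𝕂 (𝕂 = ℝ or ℂ), let Y ⊆ X be a finite-dimensional linear subspace, and let x ∈ X \ Y. Suppose f₁, …, f_l are continuous linear functionals on X with ‖f_j‖ = 1, and α₁, …, α_l are positive reals with α₁ + … + α_l = 1, such that the functional f = Σ_{j=1}^{l} α_j f_j satisfies f(x) = ‖x‖ and f(y) = 0 for all y ∈ Y. Assume additionally that there is no nonzero vector y₀ ∈ Y with f_j(y₀) = 0 for every 1 ≤ j ≤ l. Then 0 is a 2-strongly unique best approximation for x in Y: there exists r > 0 such that ‖x − y‖² ≥ ‖x‖² + r‖y‖² for all y ∈ Y. -/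
open RCLike Finset

theorem aux16 {𝕜 : Type*} [RCLike 𝕜] {X : Type*} [NormedAddCommGroup X] [NormedSpace 𝕜 X]
    (Y : Submodule 𝕜 X) [FiniteDimensional 𝕜 Y]
    {l : ℕ} (f : Fin l → (X →L[𝕜] 𝕜)) (α : Fin l → ℝ) (hαpos : ∀ j, 0 < α j)
    (hpos : ∀ y : Y, y ≠ 0 → ∃ j, f j (y : X) ≠ 0) :
    ∃ c > 0, ∀ y : Y, c * ‖y‖ ^ 2 ≤ ∑ j, α j * ‖f j (y : X)‖ ^ 2 := by
  set g : Y → ℝ := fun y => ∑ j, α j * ‖f j (y : X)‖ ^ 2 with hg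
  have hgnonneg : ∀ y, 0 ≤ g y := fun y =>
    Finset.sum_nonneg fun j _ => mul_nonneg (hαpos j).le (by positivity)
  by_cases hY : ∀ y : Y, y = 0
  · refine ⟨1, one_pos, fun y => ?_⟩
    have : ‖y‖ = 0 := by rw [hY y]; simp
    simpa [this] using hgnonneg y
  push_neg at hY
  obtain ⟨y₁, hy₁⟩ := hY
  haveI : ProperSpace Y := FiniteDimensional.proper 𝕜 Y
  have hgcont : Continuous g := by
    apply continuous_finset_sum
    intro j _
    exact continuous_const.mul (((f j).continuous.comp continuous_subtype_val).norm.pow 2)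
  have hy₁0 : ‖y₁‖ ≠ 0 := norm_ne_zero_iff.mpr hy₁
  have hsne : (Metric.sphere (0 : Y) 1).Nonempty := by
    refine ⟨(‖y₁‖⁻¹ : 𝕜) • y₁, ?_⟩
    rw [mem_sphere_zero_iff_norm, norm_smul, norm_inv, RCLike.norm_ofReal, abs_norm]
    exact inv_mul_cancel₀ hy₁0
  obtain ⟨y₀, hy₀mem, hy₀min⟩ :=
    (isCompact_sphere (0 : Y) 1).exists_isMinOn hsne hgcont.continuousOn
  have hy₀norm : ‖y₀‖ = 1 := mem_sphere_zero_iff_norm.mp hy₀mem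
  have hc : 0 < g y₀ := by
    rcases lt_or_eq_of_le (hgnonneg y₀) with h | h
    · exact h
    · exfalso
      have hy₀ne : y₀ ≠ 0 := by
        intro h0
        rw [h0] at hy₀norm; simp at hy₀norm
      obtain ⟨j, hj⟩ := hpos y₀ hy₀ne
      have := Finset.sum_eq_zero_iff_of_nonneg
        (fun j _ => mul_nonneg (hαpos j).le (by positivity : (0:ℝ) ≤ ‖f j (y₀ : X)‖ ^ 2))
        |>.mp h.symm j (Finset.mem_univ j)
      have : ‖f j (y₀ : X)‖ ^ 2 = 0 := by
        rcases mul_eq_zero.mp this with h' | h'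
        · exact absurd h' (hαpos j).ne'
        · exact h'
      exact hj (norm_eq_zero.mp (by nlinarith [norm_nonneg (f j (y₀ : X))]))
  refine ⟨g y₀, hc, fun y => ?_⟩
  by_cases hy : y = 0
  · rw [hy]; simpa using hgnonneg 0
  have hyn : (0:ℝ) < ‖y‖ := norm_pos_iff.mpr hy
  set u : Y := (‖y‖⁻¹ : 𝕜) • y with hu
  have hun : u ∈ Metric.sphere (0 : Y) 1 := by
    rw [mem_sphere_zero_iff_norm, hu, norm_smul, norm_inv, RCLike.norm_ofReal, abs_norm]
    exact inv_mul_cancel₀ hyn.ne'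
  have hgu : g u = ‖y‖⁻¹ ^ 2 * g y := by
    rw [hg]
    simp only
    rw [Finset.mul_sum]
    apply Finset.sum_congr rfl
    intro j _
    have : ((u : X)) = (‖y‖⁻¹ : 𝕜) • (y : X) := rfl
    rw [this, map_smul, smul_eq_mul, norm_mul]
    simp [RCLike.norm_ofReal, abs_of_nonneg (inv_nonneg.mpr (norm_nonneg y)), mul_pow]
    ring
  have h5 : g y₀ ≤ g u := hy₀min hun
  rw [hgu] at h5
  have h2 : g y₀ * ‖y‖ ^ 2 ≤ ‖y‖⁻¹ ^ 2 * g y * ‖y‖ ^ 2 :=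
    mul_le_mul_of_nonneg_right h5 (by positivity)
  show g y₀ * ‖y‖ ^ 2 ≤ g y
  calc g y₀ * ‖y‖ ^ 2 ≤ ‖y‖⁻¹ ^ 2 * g y * ‖y‖ ^ 2 := h2
    _ = g y := by
      have hy0 : ‖(y : X)‖ ≠ 0 := norm_ne_zero_iff.mpr (fun h0 => hy (Subtype.ext h0))
      field_simp

theorem stmt16 (𝕜 : Type*) [RCLike 𝕜] (X : Type*) [NormedAddCommGroup X] [NormedSpace 𝕜 X]
    (Y : Submodule 𝕜 X) [FiniteDimensional 𝕜 Y] (x : X) (hx : x ∉ Y)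
    (l : ℕ) (f : Fin l → (X →L[𝕜] 𝕜)) (hfnorm : ∀ j, ‖f j‖ = 1)
    (α : Fin l → ℝ) (hαpos : ∀ j, 0 < α j) (hαsum : ∑ j, α j = 1)
    (hfx : (∑ j, ((α j : 𝕜)) • f j) x = (‖x‖ : 𝕜))
    (hfY : ∀ y ∈ Y, (∑ j, ((α j : 𝕜)) • f j) y = 0)
    (hsep : ¬ ∃ y₀ ∈ Y, y₀ ≠ 0 ∧ ∀ j, f j y₀ = 0) :
    ∃ r > 0, ∀ y ∈ Y, ‖x - y‖ ^ 2 ≥ ‖x‖ ^ 2 + r * ‖y‖ ^ 2 := by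
  push_neg at hsep
  -- rewrite hfx, hfY pointwise
  have hfx' : ∑ j, (α j : 𝕜) * f j x = (‖x‖ : 𝕜) := by
    simpa [ContinuousLinearMap.sum_apply, ContinuousLinearMap.smul_apply, smul_eq_mul] using hfx
  have hfY' : ∀ y ∈ Y, ∑ j, (α j : 𝕜) * f j y = 0 := fun y hy => by
    simpa [ContinuousLinearMap.sum_apply, ContinuousLinearMap.smul_apply, smul_eq_mul]
      using hfY y hy
  -- each ‖f j z‖ ≤ ‖z‖
  have hfle : ∀ j (z : X), ‖f j z‖ ≤ ‖z‖ := fun j z => by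
    simpa [hfnorm j] using (f j).le_opNorm z
  -- re (f j x) = ‖x‖
  have hresum : ∑ j, α j * re (f j x) = ‖x‖ := by
    have := congrArg (re : 𝕜 → ℝ) hfx'
    rw [map_sum] at this
    simpa [RCLike.re_ofReal_mul] using this
  have hrele : ∀ j, re (f j x) ≤ ‖x‖ := fun j =>
    le_trans (RCLike.re_le_norm _) (hfle j x)
  have hre : ∀ j, re (f j x) = ‖x‖ := by
    intro j
    by_contra h
    have hlt : re (f j x) < ‖x‖ := lt_of_le_of_ne (hrele j) h
    have : ∑ j, α j * re (f j x) < ∑ j, α j * ‖x‖ := by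
      apply Finset.sum_lt_sum (fun i _ => mul_le_mul_of_nonneg_left (hrele i) (hαpos i).le)
      exact ⟨j, Finset.mem_univ j, mul_lt_mul_of_pos_left hlt (hαpos j)⟩
    rw [hresum, ← Finset.sum_mul, hαsum, one_mul] at this
    exact lt_irrefl _ this
  have him : ∀ j, im (f j x) = 0 := by
    intro j
    have h1 : ‖f j x‖ ^ 2 ≤ ‖x‖ ^ 2 := by
      have := hfle j x
      nlinarith [norm_nonneg (f j x)]
    have h2 : ‖f j x‖ ^ 2 = re (f j x) * re (f j x) + im (f j x) * im (f j x) :=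
      RCLike.norm_sq_eq_def
    have h3 : im (f j x) * im (f j x) ≤ 0 := by
      rw [hre j] at h2
      nlinarith [h1, h2]
    have h4 := mul_self_nonneg (im (f j x))
    exact mul_self_eq_zero.mp (le_antisymm h3 h4)
  obtain ⟨c, hc, hcb⟩ := aux16 Y f α hαpos (fun y hy =>
    hsep (y : X) y.2 (fun h0 => hy (Subtype.ext (by simpa using h0))))
  refine ⟨c, hc, fun y hy => ?_⟩
  -- key pointwise identity
  have key : ∀ j, ‖f j (x - y)‖ ^ 2 =
      ‖x‖ ^ 2 - 2 * ‖x‖ * re (f j y) + ‖f j y‖ ^ 2 := by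
    intro j
    rw [map_sub]
    rw [RCLike.norm_sq_eq_def]
    have hre' : re (f j x - f j y) = ‖x‖ - re (f j y) := by
      rw [map_sub, hre j]
    have him' : im (f j x - f j y) = -im (f j y) := by
      rw [map_sub, him j, zero_sub]
    rw [hre', him']
    have : ‖f j y‖ ^ 2 = re (f j y) * re (f j y) + im (f j y) * im (f j y) :=
      RCLike.norm_sq_eq_def
    rw [this]; ring
  have hreY : ∑ j, α j * re (f j y) = 0 := by
    have := congrArg (re : 𝕜 → ℝ) (hfY' y hy)
    rw [map_sum] at this
    simpa [RCLike.re_ofReal_mul] using this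
  have main : ∑ j, α j * ‖f j (x - y)‖ ^ 2 = ‖x‖ ^ 2 + ∑ j, α j * ‖f j y‖ ^ 2 := by
    calc ∑ j, α j * ‖f j (x - y)‖ ^ 2
        = ∑ j, (α j * ‖x‖ ^ 2 - 2 * ‖x‖ * (α j * re (f j y)) + α j * ‖f j y‖ ^ 2) := by
          apply Finset.sum_congr rfl; intro j _; rw [key j]; ring
      _ = (∑ j, α j) * ‖x‖ ^ 2 - 2 * ‖x‖ * ∑ j, α j * re (f j y)
            + ∑ j, α j * ‖f j y‖ ^ 2 := by
          rw [Finset.sum_add_distrib, Finset.sum_sub_distrib, ← Finset.sum_mul,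
            ← Finset.mul_sum]
      _ = ‖x‖ ^ 2 + ∑ j, α j * ‖f j y‖ ^ 2 := by rw [hαsum, hreY]; ring
  have hub : ∑ j, α j * ‖f j (x - y)‖ ^ 2 ≤ ‖x - y‖ ^ 2 := by
    calc ∑ j, α j * ‖f j (x - y)‖ ^ 2 ≤ ∑ j, α j * ‖x - y‖ ^ 2 := by
          apply Finset.sum_le_sum
          intro j _
          apply mul_le_mul_of_nonneg_left _ (hαpos j).le
          exact pow_le_pow_left₀ (norm_nonneg _) (hfle j _) 2
      _ = ‖x - y‖ ^ 2 := by rw [← Finset.sum_mul, hαsum, one_mul]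
  have hcy := hcb ⟨y, hy⟩
  have hnorm : ‖(⟨y, hy⟩ : Y)‖ = ‖y‖ := rfl
  rw [hnorm] at hcy
  have : (fun j => ‖f j ((⟨y, hy⟩ : Y) : X)‖) = fun j => ‖f j y‖ := rfl
  calc ‖x‖ ^ 2 + c * ‖y‖ ^ 2 ≤ ‖x‖ ^ 2 + ∑ j, α j * ‖f j y‖ ^ 2 := by
        have : c * ‖y‖ ^ 2 ≤ ∑ j, α j * ‖f j y‖ ^ 2 := hcy
        linarith
    _ = ∑ j, α j * ‖f j (x - y)‖ ^ 2 := main.symm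
    _ ≤ ‖x - y‖ ^ 2 := hub
end

section
/- Let X be a three-dimensional normed space over ℂ and let Y ⊆ X be a two-dimensional linear subspace. Let P : X → X be a minimal projection onto Y and assume ‖P‖ > 1. Then P is a 2-strongly unique minimal projection: there exists r > 0 such that ‖Q‖² ≥ ‖P‖² + r‖Q − P‖² for every projection Q onto Y. -/
open Module


lemma aux_opNorm_le_of_unit {X F : Type*} [NormedAddCommGroup X] [NormedSpace ℂ X]
    [NormedAddCommGroup F] [NormedSpace ℂ F] (T : X →L[ℂ] F) {C : ℝ} (hC : 0 ≤ C)
    (h : ∀ x : X, ‖x‖ = 1 → ‖T x‖ ≤ C) : ‖T‖ ≤ C := by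
  apply ContinuousLinearMap.opNorm_le_bound _ hC
  intro x
  rcases eq_or_ne x 0 with rfl | hx
  · simp
  · have hnx : ‖x‖ ≠ 0 := norm_ne_zero_iff.mpr hx
    have h1 : ‖(‖x‖⁻¹ • x : X)‖ = 1 := by
      rw [norm_smul, norm_inv, norm_norm, inv_mul_cancel₀ hnx]
    have := h _ h1
    rw [T.map_smul_of_tower, norm_smul, norm_inv, norm_norm] at this
    have h2 := mul_le_mul_of_nonneg_left this (norm_nonneg x)
    calc ‖T x‖ = ‖x‖ * (‖x‖⁻¹ * ‖T x‖) := by field_simp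
    _ ≤ ‖x‖ * C := h2
    _ = C * ‖x‖ := mul_comm _ _

-- descent lemma
lemma aux_descent {X : Type*} [NormedAddCommGroup X] [NormedSpace ℂ X]
    [FiniteDimensional ℂ X] (P D : X →L[ℂ] X) {u : ℝ} (hu : 0 < u) (hP : 0 < ‖P‖)
    (h : ∀ (x : X) (ψ : X →L[ℂ] ℂ), ‖x‖ = 1 → ‖ψ‖ ≤ 1 → ψ (P x) = (‖P‖ : ℂ) →
      u ≤ (ψ (D x)).re) :
    ∃ t : ℝ, 0 < t ∧ ‖P - t • D‖ < ‖P‖ := by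
  haveI : ProperSpace X := FiniteDimensional.proper ℂ X
  haveI : ProperSpace (X →L[ℂ] ℂ) := FiniteDimensional.proper ℂ _
  set m := ‖P‖ with hm
  set B : Set (X × (X →L[ℂ] ℂ)) := (Metric.closedBall 0 1) ×ˢ (Metric.closedBall 0 1) with hB
  have hBc : IsCompact B := (isCompact_closedBall _ _).prod (isCompact_closedBall _ _)
  have happly : Continuous fun p : X × (X →L[ℂ] ℂ) => p.2 (D p.1) := by
    have : Continuous fun p : X × (X →L[ℂ] ℂ) => (p.2, D p.1) :=
      continuous_snd.prodMk (D.continuous.comp continuous_fst)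
    exact isBoundedBilinearMap_apply.continuous.comp this
  have happly' : Continuous fun p : X × (X →L[ℂ] ℂ) => p.2 (P p.1) := by
    have : Continuous fun p : X × (X →L[ℂ] ℂ) => (p.2, P p.1) :=
      continuous_snd.prodMk (P.continuous.comp continuous_fst)
    exact isBoundedBilinearMap_apply.continuous.comp this
  set C : Set (X × (X →L[ℂ] ℂ)) := {p ∈ B | (p.2 (D p.1)).re ≤ u / 2} with hC
  have hCc : IsCompact C := by
    apply hBc.inter_right
    exact isClosed_le (Complex.continuous_re.comp happly) continuous_const
  have hCne : C.Nonempty := ⟨(0, 0), by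
    constructor
    · constructor <;> simp [Metric.mem_closedBall]
    · simp; positivity⟩
  -- bound on B for the P-value
  have hFB : ∀ p ∈ B, (p.2 (P p.1)).re ≤ m := by
    rintro ⟨x, ψ⟩ ⟨hx, hψ⟩
    simp only [Metric.mem_closedBall, dist_zero_right] at hx hψ
    calc (ψ (P x)).re ≤ ‖ψ (P x)‖ := Complex.re_le_norm _
    _ ≤ ‖ψ‖ * ‖P x‖ := ψ.le_opNorm _
    _ ≤ 1 * (‖P‖ * ‖x‖) := by
        apply mul_le_mul hψ (P.le_opNorm x) (norm_nonneg _) zero_le_one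
    _ ≤ 1 * (‖P‖ * 1) := by
        apply mul_le_mul_of_nonneg_left _ zero_le_one
        exact mul_le_mul_of_nonneg_left hx (norm_nonneg _)
    _ = m := by simp [hm]
  obtain ⟨p₀, hp₀C, hp₀max⟩ := hCc.exists_isMaxOn hCne
    ((Complex.continuous_re.comp happly').continuousOn)
  set m' := (p₀.2 (P p₀.1)).re with hm'
  have hm'lt : m' < m := by
    rcases lt_or_ge m' m with h' | h'
    · exact h'
    · exfalso
      have hp₀B := hp₀C.1
      have hle := hFB p₀ hp₀B
      have heq : (p₀.2 (P p₀.1)).re = m := le_antisymm hle (le_trans h' (le_refl _))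
      -- conclude p₀ is a norming pair
      obtain ⟨x, ψ⟩ := p₀
      have hx : ‖x‖ ≤ 1 := by
        simpa [Metric.mem_closedBall, dist_zero_right] using hp₀B.1
      have hψ : ‖ψ‖ ≤ 1 := by
        simpa [Metric.mem_closedBall, dist_zero_right] using hp₀B.2
      have habs : ‖ψ (P x)‖ ≤ m := by
        calc ‖ψ (P x)‖ ≤ ‖ψ‖ * ‖P x‖ := ψ.le_opNorm _
        _ ≤ 1 * (‖P‖ * ‖x‖) :=
          mul_le_mul hψ (P.le_opNorm x) (norm_nonneg _) zero_le_one
        _ ≤ 1 * (‖P‖ * 1) := by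
          apply mul_le_mul_of_nonneg_left _ zero_le_one
          exact mul_le_mul_of_nonneg_left hx (norm_nonneg _)
        _ = m := by simp [hm]
      have him : (ψ (P x)).im = 0 := by
        have h2 : (ψ (P x)).re ^ 2 + (ψ (P x)).im ^ 2 ≤ m ^ 2 := by
          have := Complex.sq_norm (ψ (P x))
          have habs2 : ‖ψ (P x)‖ ^ 2 ≤ m ^ 2 := by
            apply pow_le_pow_left₀ (norm_nonneg _) _ 2
            simpa using habs
          rw [this] at habs2
          simpa [Complex.normSq_apply, sq] using habs2
        nlinarith [heq]
      have hval : ψ (P x) = (m : ℂ) := by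
        apply Complex.ext <;> simp [heq, him]
      have hx1 : ‖x‖ = 1 := by
        have hmle : m ≤ m * ‖x‖ := by
          calc m = ‖ψ (P x)‖ := by rw [hval]; simp [abs_of_pos hP, hm]
          _ ≤ ‖ψ‖ * (‖P‖ * ‖x‖) := by
              calc ‖ψ (P x)‖ ≤ ‖ψ‖ * ‖P x‖ := ψ.le_opNorm _
              _ ≤ ‖ψ‖ * (‖P‖ * ‖x‖) :=
                mul_le_mul_of_nonneg_left (P.le_opNorm x) (norm_nonneg _)
          _ ≤ 1 * (‖P‖ * ‖x‖) := by
              apply mul_le_mul_of_nonneg_right hψ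
              positivity
          _ = m * ‖x‖ := by rw [one_mul]
        have : 1 ≤ ‖x‖ := by
          by_contra hlt
          push_neg at hlt
          nlinarith
        linarith [hx, this]
      have := h x ψ hx1 hψ hval
      have hC2 := hp₀C.2
      simp only at hC2
      linarith
  -- choose t
  set t := (m - m') / (2 * (‖D‖ + 1)) with ht
  have htpos : 0 < t := by
    apply div_pos (by linarith) (by positivity)
  refine ⟨t, htpos, ?_⟩
  set δ := min (t * u / 2) ((m - m') / 2) with hδ
  have hδpos : 0 < δ := by
    apply lt_min (by positivity) (by linarith)
  have hbound : ∀ x : X, ‖x‖ = 1 → ‖(P - t • D) x‖ ≤ m - δ := by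
    intro x hx1
    obtain ⟨ψ, hψ, hψval⟩ := exists_dual_vector'' ℂ ((P - t • D) x)
    have hpB : (x, ψ) ∈ B := by
      constructor <;> simp [Metric.mem_closedBall, hx1, hψ]
    have hsplit : ψ ((P - t • D) x) = ψ (P x) - (t:ℂ) * ψ (D x) := by
      rw [ContinuousLinearMap.sub_apply, map_sub, ContinuousLinearMap.smul_apply]
      congr 1
      rw [ψ.map_smul_of_tower, Complex.real_smul]
    have hval : ‖(P - t • D) x‖ = (ψ (P x)).re - t * (ψ (D x)).re := by
      have h2 : ((‖(P - t • D) x‖ : ℂ)).re = (ψ (P x) - (t:ℂ) * ψ (D x)).re :=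
        congrArg Complex.re (hψval.symm.trans hsplit)
      simpa [Complex.sub_re, Complex.mul_re] using h2
    by_cases hmem : (x, ψ) ∈ C
    · have h1 : (ψ (P x)).re ≤ m' := hp₀max hmem
      have h2 : |(ψ (D x)).re| ≤ ‖D‖ := by
        calc |(ψ (D x)).re| ≤ ‖ψ (D x)‖ := Complex.abs_re_le_norm _
        _ ≤ ‖ψ‖ * ‖D x‖ := ψ.le_opNorm _
        _ ≤ 1 * (‖D‖ * ‖x‖) :=
          mul_le_mul hψ (D.le_opNorm x) (norm_nonneg _) zero_le_one
        _ = ‖D‖ := by rw [hx1]; ring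
      have h3 : t * ‖D‖ ≤ (m - m') / 2 := by
        rw [ht, div_mul_eq_mul_div, div_le_div_iff₀ (by positivity) two_pos]
        nlinarith [norm_nonneg D, hm'lt]
      rw [hval]
      have h4 : -(t * (ψ (D x)).re) ≤ t * ‖D‖ := by
        have hh := neg_abs_le ((ψ (D x)).re)
        nlinarith [htpos.le, abs_nonneg ((ψ (D x)).re)]
      have hδle : δ ≤ (m - m') / 2 := min_le_right _ _
      linarith
    · have h2 : u / 2 < (ψ (D x)).re := by
        have := hmem
        simp only [hC, Set.mem_sep_iff, not_and, not_le] at this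
        exact this hpB
      have h1 : (ψ (P x)).re ≤ m := hFB _ hpB
      rw [hval]
      have : t * (u / 2) ≤ t * (ψ (D x)).re := by
        apply mul_le_mul_of_nonneg_left h2.le htpos.le
      have hδle : δ ≤ t * u / 2 := min_le_left _ _
      nlinarith
  have hm'0 : (0:ℝ) ≤ m' := by
    have h00 : ((0,0) : X × (X →L[ℂ] ℂ)) ∈ C := by
      constructor
      · constructor <;> simp [Metric.mem_closedBall]
      · simp; positivity
    have := hp₀max h00
    simpa using this
  have hfinal : ‖P - t • D‖ ≤ m - δ := by
    apply aux_opNorm_le_of_unit _ _ hbound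
    have hδle : δ ≤ (m - m') / 2 := min_le_right _ _
    linarith
  linarith

-- norm attainment in finite dimensions
lemma aux_attain {X F : Type*} [NormedAddCommGroup X] [NormedSpace ℂ X]
    [FiniteDimensional ℂ X] [Nontrivial X] [NormedAddCommGroup F] [NormedSpace ℂ F]
    (T : X →L[ℂ] F) : ∃ x : X, ‖x‖ = 1 ∧ ‖T x‖ = ‖T‖ := by
  haveI : ProperSpace X := FiniteDimensional.proper ℂ X
  obtain ⟨x, hxs, hmax⟩ := (isCompact_sphere (0 : X) 1).exists_isMaxOn
    (NormedSpace.sphere_nonempty.mpr zero_le_one)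
    ((continuous_norm.comp T.continuous).continuousOn)
  have hx1 : ‖x‖ = 1 := by simpa [mem_sphere_zero_iff_norm] using hxs
  refine ⟨x, hx1, le_antisymm ?_ ?_⟩
  · calc ‖T x‖ ≤ ‖T‖ * ‖x‖ := T.le_opNorm x
    _ = ‖T‖ := by rw [hx1, mul_one]
  · apply aux_opNorm_le_of_unit _ (norm_nonneg _)
    intro y hy
    exact hmax (by simpa [mem_sphere_zero_iff_norm] using hy)


lemma aux_isCompact_convexHull {E : Type*} [NormedAddCommGroup E] [NormedSpace ℝ E]
    [FiniteDimensional ℝ E] {s : Set E} (hs : IsCompact s) :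
    IsCompact (convexHull ℝ s) := by
  rcases s.eq_empty_or_nonempty with rfl | ⟨s₀, hs₀⟩
  · simp
  set n : ℕ := finrank ℝ E + 1 with hn
  set K : Set ((Fin n → ℝ) × (Fin n → E)) :=
    (stdSimplex ℝ (Fin n)) ×ˢ (Set.univ.pi fun _ => s) with hK
  have hKc : IsCompact K := (isCompact_stdSimplex _ _).prod (isCompact_univ_pi fun _ => hs)
  set Φ : ((Fin n → ℝ) × (Fin n → E)) → E := fun p => ∑ i, p.1 i • p.2 i with hΦ
  have hΦc : Continuous Φ := by
    apply continuous_finset_sum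
    intro i _
    exact ((continuous_apply i).comp continuous_fst).smul ((continuous_apply i).comp continuous_snd)
  have himage : convexHull ℝ s = Φ '' K := by
    apply Set.Subset.antisymm
    · intro x hx
      obtain ⟨ι, hι, z, w, hzs, hai, hw, hw1, hwz⟩ := eq_pos_convex_span_of_mem_convexHull hx
      have hcard : Fintype.card ι ≤ n := by
        have h1 := hai.card_le_finrank_succ
        have h2 : finrank ℝ ↥(vectorSpan ℝ (Set.range z)) ≤ finrank ℝ E :=
          Submodule.finrank_le _
        omega
      set c := Fintype.card ι with hc
      let eqv := Fintype.equivFin ι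
      classical
      set w' : Fin n → ℝ := fun j => if h : (j : ℕ) < c then w (eqv.symm ⟨j, h⟩) else 0 with hw'
      set z' : Fin n → E := fun j => if h : (j : ℕ) < c then z (eqv.symm ⟨j, h⟩) else s₀ with hz'
      have key : ∑ j : Fin n, ((w' j • z' j, w' j) : E × ℝ) = ∑ i : ι, (w i • z i, w i) := by
        have hsub : (Finset.univ.map (Fin.castLEEmb hcard)) ⊆ (Finset.univ : Finset (Fin n)) :=
          Finset.subset_univ _
        rw [← Finset.sum_subset hsub]
        · rw [Finset.sum_map]
          rw [← Equiv.sum_comp eqv.symm (fun i => ((w i • z i, w i) : E × ℝ))]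
          apply Finset.sum_congr rfl
          intro i _
          have hlt : ((Fin.castLEEmb hcard i : Fin n) : ℕ) < c := by
            simpa [Fin.castLEEmb, Fin.castLE] using i.2
          have hfin : (⟨((Fin.castLEEmb hcard) i : Fin n), hlt⟩ : Fin c) = i := by
            apply Fin.ext; simp [Fin.castLEEmb, Fin.castLE]
          simp only [hw', hz', dif_pos hlt, hfin]
        · intro j _ hj
          have : ¬ ((j : ℕ) < c) := by
            intro hlt
            apply hj
            rw [Finset.mem_map]
            exact ⟨⟨(j:ℕ), hlt⟩, Finset.mem_univ _, by apply Fin.ext; simp [Fin.castLEEmb, Fin.castLE]⟩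
          simp [hw', hz', this, Prod.ext_iff]
      refine ⟨(w', z'), ⟨⟨?_, ?_⟩, ?_⟩, ?_⟩
      · intro j
        by_cases h : (j:ℕ) < c
        · simp only [hw', dif_pos h]; exact (hw _).le
        · simp [hw', h]
      · have := congrArg Prod.snd key
        simp only [Prod.snd_sum] at this
        rw [this]; exact hw1
      · intro j _
        by_cases h : (j:ℕ) < c
        · simp only [hz', dif_pos h]; exact hzs (Set.mem_range_self _)
        · simp [hz', h, hs₀]
      · show ∑ j : Fin n, w' j • z' j = x
        have := congrArg Prod.fst key
        simp only [Prod.fst_sum] at this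
        rw [this]; exact hwz
    · rintro x ⟨⟨w, z⟩, ⟨hwmem, hzmem⟩, rfl⟩
      have hw0 : ∀ i ∈ Finset.univ, 0 ≤ w i := fun i _ => hwmem.1 i
      have hw1 : ∑ i, w i = 1 := hwmem.2
      have := Finset.centerMass_mem_convexHull (Finset.univ) hw0 (by rw [hw1]; norm_num)
        (fun i _ => hzmem i (Set.mem_univ i))
      rwa [Finset.centerMass_eq_of_sum_1 _ _ hw1] at this
  rw [himage]
  exact hKc.image hΦc


lemma aux_det2 {X : Type*} [NormedAddCommGroup X] [NormedSpace ℂ X] (Y : Submodule ℂ X)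
    (hY : finrank ℂ Y = 2) (φ χ : X →L[ℂ] ℂ) {w₀ : Y} (hw0 : w₀ ≠ 0)
    (hφ : φ (w₀ : X) = 0) (hχ : χ (w₀ : X) = 0) (a b : Y) :
    φ (a : X) * χ (b : X) = φ (b : X) * χ (a : X) := by
  haveI : Module.Finite ℂ Y := Module.finite_of_finrank_eq_succ hY
  let yB : Basis (Fin 2) ℂ Y := Module.finBasisOfFinrankEq ℂ Y hY
  have hexp : ∀ z : Y, (z : X) = (yB.repr z 0) • ((yB 0 : Y) : X) + (yB.repr z 1) • ((yB 1 : Y) : X) := by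
    intro z
    have := yB.sum_repr z
    rw [Fin.sum_univ_two] at this
    calc (z : X) = (((yB.repr z 0) • (yB 0) + (yB.repr z 1) • (yB 1) : Y) : X) := by rw [this]
    _ = _ := by push_cast; ring
  set φ1 := φ ((yB 0 : Y) : X); set φ2 := φ ((yB 1 : Y) : X)
  set χ1 := χ ((yB 0 : Y) : X); set χ2 := χ ((yB 1 : Y) : X)
  have happ : ∀ (ξ : X →L[ℂ] ℂ) (z : Y), ξ (z : X)
      = (yB.repr z 0) * ξ ((yB 0 : Y) : X) + (yB.repr z 1) * ξ ((yB 1 : Y) : X) := by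
    intro ξ z
    rw [hexp z, map_add, map_smul, map_smul, smul_eq_mul, smul_eq_mul]
  have hc : yB.repr w₀ 0 ≠ 0 ∨ yB.repr w₀ 1 ≠ 0 := by
    by_contra hcon
    push_neg at hcon
    apply hw0
    have := yB.sum_repr w₀
    rw [Fin.sum_univ_two, hcon.1, hcon.2] at this
    simpa using this.symm
  have hφ' := happ φ w₀; rw [hφ] at hφ'
  have hχ' := happ χ w₀; rw [hχ] at hχ'
  have key : φ1 * χ2 = φ2 * χ1 := by
    rcases hc with h | h
    · have h1 : φ1 = -(yB.repr w₀ 1 / yB.repr w₀ 0) * φ2 := by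
        field_simp
        linear_combination -hφ'
      have h2 : χ1 = -(yB.repr w₀ 1 / yB.repr w₀ 0) * χ2 := by
        field_simp
        linear_combination -hχ'
      rw [h1, h2]; ring
    · have h1 : φ2 = -(yB.repr w₀ 0 / yB.repr w₀ 1) * φ1 := by
        field_simp
        linear_combination -hφ'
      have h2 : χ2 = -(yB.repr w₀ 0 / yB.repr w₀ 1) * χ1 := by
        field_simp
        linear_combination -hχ'
      rw [h1, h2]; ring
  rw [happ φ a, happ φ b, happ χ a, happ χ b]
  linear_combination (yB.repr a 0 * yB.repr b 1 - yB.repr a 1 * yB.repr b 0) * key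

set_option maxHeartbeats 2000000 in
theorem stmt17 (X : Type*) [NormedAddCommGroup X] [NormedSpace ℂ X]
    (hX : Module.finrank ℂ X = 3)
    (Y : Submodule ℂ X) (hY : Module.finrank ℂ Y = 2)
    (P : X →L[ℂ] X) (hPY : ∀ z, P z ∈ Y) (hPid : ∀ y ∈ Y, P y = y)
    (hPmin : ∀ Q : X →L[ℂ] X, (∀ z, Q z ∈ Y) → (∀ y ∈ Y, Q y = y) → ‖P‖ ≤ ‖Q‖)
    (hPnorm : 1 < ‖P‖) :
    ∃ r > 0, ∀ Q : X →L[ℂ] X, (∀ z, Q z ∈ Y) → (∀ y ∈ Y, Q y = y) →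
      ‖Q‖ ^ 2 ≥ ‖P‖ ^ 2 + r * ‖Q - P‖ ^ 2 := by
  classical
  haveI hfd : FiniteDimensional ℂ X := Module.finite_of_finrank_eq_succ (n := 2) hX
  haveI : ProperSpace X := FiniteDimensional.proper ℂ X
  set m := ‖P‖ with hm
  have hm0 : (0:ℝ) < m := lt_trans one_pos hPnorm
  have hPP : ∀ x, P (P x) = P x := fun x => hPid _ (hPY x)
  -- the kernel vector
  have hrange : LinearMap.range (P : X →ₗ[ℂ] X) = Y := by
    apply le_antisymm
    · rintro z ⟨x, rfl⟩
      exact hPY x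
    · intro y hy
      exact ⟨y, hPid y hy⟩
  have hker1 : finrank ℂ (LinearMap.ker (P : X →ₗ[ℂ] X)) = 1 := by
    have h1 := LinearMap.finrank_range_add_finrank_ker (P : X →ₗ[ℂ] X)
    rw [hrange, hY, hX] at h1
    omega
  haveI : Nontrivial (LinearMap.ker (P : X →ₗ[ℂ] X)) :=
    Module.nontrivial_of_finrank_eq_succ (n := 0) hker1
  obtain ⟨k', hk'0⟩ := exists_ne (0 : LinearMap.ker (P : X →ₗ[ℂ] X))
  set k : X := (k' : X) with hkdef
  have hk0 : k ≠ 0 := fun h => hk'0 (Subtype.ext h)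
  have hPk : P k = 0 := k'.2
  have hspan : Submodule.span ℂ {k} = LinearMap.ker (P : X →ₗ[ℂ] X) := by
    apply Submodule.eq_of_le_of_finrank_eq
    · rw [Submodule.span_le, Set.singleton_subset_iff]
      exact k'.2
    · rw [finrank_span_singleton hk0, hker1]
  -- the functional f
  obtain ⟨g, hg1, hgk⟩ := exists_dual_vector ℂ k (norm_ne_zero_iff.mpr hk0)
  set f : X →L[ℂ] ℂ :=
    ((‖k‖:ℂ)⁻¹ • g).comp (ContinuousLinearMap.id ℂ X - P) with hfdef
  have hknz : ((‖k‖:ℂ)) ≠ 0 := by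
    simp [norm_ne_zero_iff, hk0]
  have hfapp : ∀ x, f x = (‖k‖:ℂ)⁻¹ * g (x - P x) := by
    intro x
    simp only [hfdef, ContinuousLinearMap.comp_apply, ContinuousLinearMap.smul_apply,
      ContinuousLinearMap.sub_apply, smul_eq_mul, ContinuousLinearMap.coe_id', id_eq, map_sub]
    ring
  have hfY : ∀ y ∈ Y, f y = 0 := by
    intro y hy
    rw [hfapp, hPid y hy, sub_self, map_zero, mul_zero]
  have hfk : f k = 1 := by
    rw [hfapp, hPk, sub_zero, hgk]
    field_simp
    rfl
  have hkey : ∀ x, x - P x = f x • k := by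
    intro x
    have hmem : x - P x ∈ LinearMap.ker (P : X →ₗ[ℂ] X) := by
      simp [LinearMap.mem_ker, map_sub, hPP]
    rw [← hspan, Submodule.mem_span_singleton] at hmem
    obtain ⟨c, hc⟩ := hmem
    have hfc : f x = c := by
      rw [hfapp, ← hc]
      have : g (c • k) = c * g k := by rw [map_smul, smul_eq_mul]
      rw [this, hgk]
      field_simp
      exact mul_comm _ _
    rw [hfc, hc]
  have hfxne : ∀ (x : X) (ψ : X →L[ℂ] ℂ), ‖x‖ = 1 → ‖ψ‖ ≤ 1 → ψ (P x) = (m:ℂ) →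
      f x ≠ 0 := by
    intro x ψ hx1 hψ1 hψP hfx
    have hxY : x = P x := by
      have := hkey x
      rw [hfx, zero_smul, sub_eq_zero] at this
      exact this
    have : (m:ℝ) = ‖ψ (P x)‖ := by rw [hψP]; simp [abs_of_pos hm0]
    have hle : ‖ψ (P x)‖ ≤ 1 := by
      rw [← hxY]
      calc ‖ψ x‖ ≤ ‖ψ‖ * ‖x‖ := ψ.le_opNorm x
      _ ≤ 1 * 1 := mul_le_mul hψ1 (le_of_eq hx1) (norm_nonneg x) zero_le_one
      _ = 1 := one_mul 1
    linarith [hPnorm, this ▸ hle]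

  -- basis of Y
  haveI hfdY : FiniteDimensional ℂ Y := Module.finite_of_finrank_eq_succ (n := 1) hY
  let yB : Basis (Fin 2) ℂ Y := Module.finBasisOfFinrankEq ℂ Y hY
  set y1 : X := ((yB 0 : Y) : X) with hy1def
  set y2 : X := ((yB 1 : Y) : X) with hy2def
  have hexpY : ∀ z : Y, (z : X) = (yB.repr z 0) • y1 + (yB.repr z 1) • y2 := by
    intro z
    have h1 := yB.sum_repr z
    rw [Fin.sum_univ_two] at h1
    calc (z : X) = (((yB.repr z 0) • (yB 0) + (yB.repr z 1) • (yB 1) : Y) : X) := by rw [h1]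
    _ = _ := by rw [hy1def, hy2def]; push_cast; ring_nf
  -- norming pairs
  set N : Set (X × (X →L[ℂ] ℂ)) :=
    {p | ‖p.1‖ = 1 ∧ ‖p.2‖ ≤ 1 ∧ p.2 (P p.1) = (m:ℂ)} with hNdef
  set σmap : (X × (X →L[ℂ] ℂ)) → ℂ × ℂ :=
    fun p => (f p.1 * p.2 y1, f p.1 * p.2 y2) with hσdef
  haveI : ProperSpace (X →L[ℂ] ℂ) := FiniteDimensional.proper ℂ _
  have happly : ∀ (w : X), Continuous fun p : X × (X →L[ℂ] ℂ) => p.2 w := by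
    intro w
    have h1 : Continuous fun p : X × (X →L[ℂ] ℂ) => (p.2, w) :=
      continuous_snd.prodMk continuous_const
    exact isBoundedBilinearMap_apply.continuous.comp h1
  have hσcont : Continuous σmap := by
    apply Continuous.prodMk
    · exact (f.continuous.comp continuous_fst).mul (happly y1)
    · exact (f.continuous.comp continuous_fst).mul (happly y2)
  have hNc : IsCompact N := by
    have hPapply : Continuous fun p : X × (X →L[ℂ] ℂ) => p.2 (P p.1) := by
      have h1 : Continuous fun p : X × (X →L[ℂ] ℂ) => (p.2, P p.1) :=
        continuous_snd.prodMk (P.continuous.comp continuous_fst)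
      exact isBoundedBilinearMap_apply.continuous.comp h1
    have hclosed : IsClosed N := by
      apply IsClosed.inter
      · exact isClosed_eq (continuous_norm.comp continuous_fst) continuous_const
      apply IsClosed.inter
      · exact isClosed_le (continuous_norm.comp continuous_snd) continuous_const
      · exact isClosed_eq hPapply continuous_const
    apply IsCompact.of_isClosed_subset
      ((isCompact_closedBall (0:X) 1).prod (isCompact_closedBall (0:X →L[ℂ] ℂ) 1))
      hclosed
    rintro ⟨x, ψ⟩ ⟨hx, hψ, -⟩
    constructor <;> simp [Metric.mem_closedBall, hx.le, hx, hψ]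
  have hSSc : IsCompact (σmap '' N) := hNc.image hσcont
  -- zero is in the convex hull of the norming data
  have hhull : (0 : ℂ × ℂ) ∈ convexHull ℝ (σmap '' N) := by
    by_contra h0
    have hclosed : IsClosed (convexHull ℝ (σmap '' N)) :=
      (aux_isCompact_convexHull hSSc).isClosed
    obtain ⟨gs, u, hgu0, hgu⟩ :=
      geometric_hahn_banach_point_closed (convex_convexHull ℝ _) hclosed h0
    have hu0 : (0:ℝ) < u := by simpa using hgu0
    set a1 : ℂ := ⟨gs (1,0), gs (Complex.I,0)⟩ with ha1
    set a2 : ℂ := ⟨gs (0,1), gs (0,Complex.I)⟩ with ha2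
    have hrep : ∀ z w : ℂ, gs (z, w)
        = ((starRingEnd ℂ) a1 * z).re + ((starRingEnd ℂ) a2 * w).re := by
      intro z w
      have hzw : (z, w) = z.re • ((1:ℂ),(0:ℂ)) + z.im • (Complex.I, (0:ℂ))
          + w.re • ((0:ℂ),(1:ℂ)) + w.im • ((0:ℂ), Complex.I) := by
        apply Prod.ext
        · simp [Complex.real_smul, Complex.ext_iff]
        · simp [Complex.real_smul, Complex.ext_iff]
      rw [hzw, map_add, map_add, map_add, map_smul, map_smul, map_smul, map_smul]
      simp only [smul_eq_mul, ha1, ha2]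
      simp [Complex.mul_re, Complex.conj_re, Complex.conj_im]
      ring
    set v0 : X := ((starRingEnd ℂ) a1) • y1 + ((starRingEnd ℂ) a2) • y2 with hv0
    have hv0Y : v0 ∈ Y := by
      apply Y.add_mem <;> exact Y.smul_mem _ (by simp [hy1def, hy2def])
    set D : X →L[ℂ] X := f.smulRight v0 with hD
    have hpair : ∀ (x : X) (ψ : X →L[ℂ] ℂ), ‖x‖ = 1 → ‖ψ‖ ≤ 1 → ψ (P x) = (m:ℂ) →
        u ≤ (ψ (D x)).re := by
      intro x ψ hx1 hψ1 hψP
      have hmem : σmap (x, ψ) ∈ convexHull ℝ (σmap '' N) :=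
        subset_convexHull ℝ _ (Set.mem_image_of_mem _ ⟨hx1, hψ1, hψP⟩)
      have hlt := hgu _ hmem
      have heq : gs (σmap (x, ψ)) = (ψ (D x)).re := by
        rw [hσdef]
        simp only
        rw [hrep]
        have hDx : ψ (D x) = (starRingEnd ℂ) a1 * (f x * ψ y1)
            + (starRingEnd ℂ) a2 * (f x * ψ y2) := by
          rw [hD]
          simp only [ContinuousLinearMap.smulRight_apply]
          rw [map_smul, hv0]
          simp only [map_add, map_smul, smul_eq_mul]
          ring
        rw [hDx, Complex.add_re]
      rw [heq] at hlt
      exact hlt.le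
    obtain ⟨t, htpos, hlt⟩ := aux_descent P D hu0 hm0 hpair
    have hproj1 : ∀ z, (P - t • D) z ∈ Y := by
      intro z
      have : (P - t • D) z = P z - (t:ℂ) • (f z • v0) := by
        simp only [ContinuousLinearMap.sub_apply, ContinuousLinearMap.smul_apply, hD,
          ContinuousLinearMap.smulRight_apply]
        congr 1
      rw [this]
      exact Y.sub_mem (hPY z) (Y.smul_mem _ (Y.smul_mem _ hv0Y))
    have hproj2 : ∀ y ∈ Y, (P - t • D) y = y := by
      intro y hy
      have : (P - t • D) y = P y - t • (f y • v0) := by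
        simp only [ContinuousLinearMap.sub_apply, ContinuousLinearMap.smul_apply, hD,
          ContinuousLinearMap.smulRight_apply]
      rw [this, hfY y hy, zero_smul, smul_zero, sub_zero, hPid y hy]
    exact absurd (hPmin _ hproj1 hproj2) (not_le.mpr hlt)

  -- extract a finite convex combination
  rw [convexHull_eq] at hhull
  obtain ⟨ι, T, wt, zf, hw0, hw1, hzS, hcm⟩ := hhull
  have hsum : ∑ i ∈ T, wt i • zf i = (0 : ℂ × ℂ) := by
    rw [← Finset.centerMass_eq_of_sum_1 _ _ hw1]
    exact hcm
  have hch : ∀ i : {i // i ∈ T}, ∃ p, p ∈ N ∧ σmap p = zf i.1 := by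
    intro i
    obtain ⟨p, hp, hpe⟩ := hzS i.1 i.2
    exact ⟨p, hp, hpe⟩
  choose pf hpfN hpfσ using hch
  set xi : {i // i ∈ T} → X := fun i => (pf i).1 with hxidef
  set ψi : {i // i ∈ T} → (X →L[ℂ] ℂ) := fun i => (pf i).2 with hψidef
  have hxi1 : ∀ i, ‖xi i‖ = 1 := fun i => (hpfN i).1
  have hψi1 : ∀ i, ‖ψi i‖ ≤ 1 := fun i => (hpfN i).2.1
  have hψiP : ∀ i, (ψi i) (P (xi i)) = (m:ℂ) := fun i => (hpfN i).2.2
  have hfxi : ∀ i, f (xi i) ≠ 0 := fun i => hfxne (xi i) (ψi i) (hxi1 i) (hψi1 i) (hψiP i)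
  -- sums over the attached index set
  have hsumA : ∑ i ∈ T.attach, wt i.1 • σmap (pf i) = (0 : ℂ × ℂ) := by
    have h1 : ∑ i ∈ T.attach, wt i.1 • σmap (pf i) = ∑ i ∈ T.attach, wt i.1 • zf i.1 := by
      apply Finset.sum_congr rfl
      intro i _
      rw [hpfσ i]
    rw [h1, Finset.sum_attach T (fun j => wt j • zf j)]
    exact hsum
  have hwA : ∑ i ∈ T.attach, wt i.1 = 1 := by
    rw [Finset.sum_attach T (fun j => wt j)]
    exact hw1
  have hwA0 : ∀ i : {i // i ∈ T}, 0 ≤ wt i.1 := fun i => hw0 i.1 i.2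
  -- the linear functional L
  set L : X →L[ℂ] ℂ := ∑ i ∈ T.attach, ((wt i.1 : ℂ) * f (xi i)) • (ψi i) with hLdef
  have hLapp : ∀ z, L z = ∑ i ∈ T.attach, (wt i.1 : ℂ) * (f (xi i) * (ψi i) z) := by
    intro z
    rw [hLdef]
    rw [ContinuousLinearMap.sum_apply]
    apply Finset.sum_congr rfl
    intro i _
    rw [ContinuousLinearMap.smul_apply, smul_eq_mul]
    ring
  have hLy1 : L y1 = 0 := by
    have h1 := congrArg Prod.fst hsumA
    rw [Prod.fst_sum] at h1
    rw [hLapp]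
    have h2 : ∀ i : {i // i ∈ T}, (wt i.1 • σmap (pf i)).1
        = (wt i.1 : ℂ) * (f (xi i) * (ψi i) y1) := by
      intro i
      rw [hσdef]
      simp only [Prod.smul_fst]
      rw [Complex.real_smul]
    rw [Finset.sum_congr rfl (fun i _ => h2 i)] at h1
    exact h1
  have hLy2 : L y2 = 0 := by
    have h1 := congrArg Prod.snd hsumA
    rw [Prod.snd_sum] at h1
    rw [hLapp]
    have h2 : ∀ i : {i // i ∈ T}, (wt i.1 • σmap (pf i)).2
        = (wt i.1 : ℂ) * (f (xi i) * (ψi i) y2) := by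
      intro i
      rw [hσdef]
      simp only [Prod.smul_snd]
      rw [Complex.real_smul]
    rw [Finset.sum_congr rfl (fun i _ => h2 i)] at h1
    exact h1
  have hLY : ∀ z : Y, L (z : X) = 0 := by
    intro z
    rw [hexpY z, map_add, map_smul, map_smul, hLy1, hLy2, smul_zero, smul_zero, add_zero]
  -- the quadratic functional q
  set q : X → ℝ := fun z => ∑ i ∈ T.attach, wt i.1 * ‖f (xi i) * (ψi i) z‖^2 with hqdef
  have hq0 : ∀ z, 0 ≤ q z := by
    intro z
    apply Finset.sum_nonneg
    intro i _
    exact mul_nonneg (hwA0 i) (by positivity)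
  -- representation of projections
  have hQrep : ∀ (Q : X →L[ℂ] X), (∀ z, Q z ∈ Y) → (∀ y ∈ Y, Q y = y) →
      ∀ z, Q z = P z + f z • Q k := by
    intro Q hQY' hQid' z
    have h1 : z = P z + f z • k := by
      have := hkey z
      rw [← this]
      abel
    calc Q z = Q (P z + f z • k) := by rw [← h1]
    _ = Q (P z) + f z • Q k := by rw [map_add, map_smul]
    _ = P z + f z • Q k := by rw [hQid' _ (hPY z)]
  -- the main estimate
  have hmainQ : ∀ (Q : X →L[ℂ] X), (∀ z, Q z ∈ Y) → (∀ y ∈ Y, Q y = y) →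
      m^2 + q (Q k) ≤ ‖Q‖^2 := by
    intro Q hQY' hQid'
    have hQval : ∀ i : {i // i ∈ T}, (ψi i) (Q (xi i)) = (m:ℂ) + f (xi i) * (ψi i) (Q k) := by
      intro i
      rw [hQrep Q hQY' hQid' (xi i), map_add, hψiP i, map_smul, smul_eq_mul]
    have hb : ∀ i ∈ T.attach, wt i.1 * ‖(m:ℂ) + f (xi i) * (ψi i) (Q k)‖^2
        ≤ wt i.1 * ‖Q‖^2 := by
      intro i _
      apply mul_le_mul_of_nonneg_left _ (hwA0 i)
      have h1 : ‖(ψi i) (Q (xi i))‖ ≤ ‖Q‖ := by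
        calc ‖(ψi i) (Q (xi i))‖ ≤ ‖ψi i‖ * ‖Q (xi i)‖ := (ψi i).le_opNorm _
        _ ≤ 1 * (‖Q‖ * ‖xi i‖) :=
          mul_le_mul (hψi1 i) (Q.le_opNorm _) (norm_nonneg _) zero_le_one
        _ = ‖Q‖ := by rw [hxi1 i]; ring
      rw [← hQval i]
      exact pow_le_pow_left₀ (norm_nonneg _) h1 2
    have hsumle : ∑ i ∈ T.attach, wt i.1 * ‖(m:ℂ) + f (xi i) * (ψi i) (Q k)‖^2 ≤ ‖Q‖^2 := by
      calc ∑ i ∈ T.attach, wt i.1 * ‖(m:ℂ) + f (xi i) * (ψi i) (Q k)‖^2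
          ≤ ∑ i ∈ T.attach, wt i.1 * ‖Q‖^2 := Finset.sum_le_sum hb
      _ = (∑ i ∈ T.attach, wt i.1) * ‖Q‖^2 := by rw [Finset.sum_mul]
      _ = ‖Q‖^2 := by rw [hwA, one_mul]
    have hexpand : ∀ i : {i // i ∈ T}, ‖(m:ℂ) + f (xi i) * (ψi i) (Q k)‖^2
        = m^2 + 2*m*(f (xi i) * (ψi i) (Q k)).re + ‖f (xi i) * (ψi i) (Q k)‖^2 := by
      intro i
      set c := f (xi i) * (ψi i) (Q k)
      rw [Complex.sq_norm, Complex.sq_norm,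
        Complex.normSq_add]
      simp only [Complex.normSq_ofReal, Complex.mul_re, Complex.ofReal_re, Complex.ofReal_im,
        Complex.conj_re, Complex.conj_im]
      ring
    have hre0 : ∑ i ∈ T.attach, wt i.1 * (f (xi i) * (ψi i) (Q k)).re = 0 := by
      have hQkY : L (Q k) = 0 := hLY ⟨Q k, hQY' k⟩
      rw [hLapp] at hQkY
      have h1 := congrArg Complex.re hQkY
      rw [Complex.re_sum] at h1
      have h2 : ∀ i : {i // i ∈ T}, ((wt i.1 : ℂ) * (f (xi i) * (ψi i) (Q k))).re
          = wt i.1 * (f (xi i) * (ψi i) (Q k)).re := by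
        intro i
        rw [Complex.mul_re]
        simp [Complex.ofReal_re, Complex.ofReal_im]
      rw [Finset.sum_congr rfl (fun i _ => h2 i)] at h1
      simpa using h1
    have hfinal : ∑ i ∈ T.attach, wt i.1 * ‖(m:ℂ) + f (xi i) * (ψi i) (Q k)‖^2
        = m^2 + q (Q k) := by
      rw [Finset.sum_congr rfl (fun i _ => by rw [hexpand i])]
      have : ∑ i ∈ T.attach, wt i.1 * (m ^ 2 + 2 * m * (f (xi i) * (ψi i) (Q k)).re
          + ‖f (xi i) * (ψi i) (Q k)‖ ^ 2)
          = (∑ i ∈ T.attach, wt i.1) * m^2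
            + 2*m*(∑ i ∈ T.attach, wt i.1 * (f (xi i) * (ψi i) (Q k)).re)
            + q (Q k) := by
        rw [hqdef]
        simp only [Finset.sum_mul, Finset.mul_sum]
        rw [← Finset.sum_add_distrib, ← Finset.sum_add_distrib]
        apply Finset.sum_congr rfl
        intro i _
        ring
      rw [this, hwA, hre0]
      ring
    rw [← hfinal]
    exact hsumle

  -- positivity of q on Y \ {0}
  have hpos : ∀ w : Y, w ≠ 0 → 0 < q (w : X) := by
    intro w hwne
    rcases (hq0 ((w:Y) : X)).lt_or_eq with h | h
    · exact h
    exfalso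
    -- each term vanishes
    have hzero : ∀ i ∈ T.attach, wt i.1 * ‖f (xi i) * (ψi i) (w:X)‖^2 = 0 := by
      have hsz : ∑ i ∈ T.attach, wt i.1 * ‖f (xi i) * (ψi i) (w:X)‖^2 = 0 := h.symm
      intro i hi
      exact (Finset.sum_eq_zero_iff_of_nonneg
        (fun i _ => mul_nonneg (hwA0 i) (by positivity))).mp hsz i hi
    set T' := T.attach.filter (fun i => 0 < wt i.1) with hT'
    have hT'mem : ∀ i, i ∈ T' ↔ (i ∈ T.attach ∧ 0 < wt i.1) := by
      intro i; rw [hT', Finset.mem_filter]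
    have hT'ne : T'.Nonempty := by
      have hex : ∃ i ∈ T.attach, 0 < wt i.1 := by
        by_contra hno
        push_neg at hno
        have hz : ∑ i ∈ T.attach, wt i.1 = 0 := Finset.sum_eq_zero
          (fun i hi => le_antisymm (hno i hi) (hwA0 i))
        rw [hwA] at hz
        norm_num at hz
      obtain ⟨i, hi, hpos'⟩ := hex
      exact ⟨i, (hT'mem i).mpr ⟨hi, hpos'⟩⟩
    have hψw : ∀ i ∈ T', (ψi i) (w:X) = 0 := by
      intro i hi
      obtain ⟨hiA, hiwt⟩ := (hT'mem i).mp hi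
      have h1 := hzero i hiA
      have h2 : ‖f (xi i) * (ψi i) (w:X)‖^2 = 0 := by
        rcases mul_eq_zero.mp h1 with h' | h'
        · exact absurd h' hiwt.ne'
        · exact h'
      have h3 : f (xi i) * (ψi i) (w:X) = 0 := by
        rw [pow_eq_zero_iff (two_ne_zero)] at h2
        exact norm_eq_zero.mp h2
      rcases mul_eq_zero.mp h3 with h' | h'
      · exact absurd h' (hfxi i)
      · exact h'
    obtain ⟨j₀, hj₀⟩ := hT'ne
    set z₀ : Y := ⟨P (xi j₀), hPY _⟩ with hz₀def
    have hLamj0 : (ψi j₀) ((z₀ : Y) : X) = (m:ℂ) := hψiP j₀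
    obtain ⟨j, hjT', hjmax⟩ := Finset.exists_max_image T'
      (fun i => ‖(ψi i) ((z₀ : Y) : X)‖) ⟨j₀, hj₀⟩
    have hLamjm : m ≤ ‖(ψi j) ((z₀ : Y) : X)‖ := by
      calc m = ‖(ψi j₀) ((z₀ : Y) : X)‖ := by
            rw [hLamj0]; simp [Complex.norm_real, abs_of_pos hm0]
      _ ≤ _ := hjmax j₀ hj₀
    have hZne : (0:ℝ) < ‖(ψi j) ((z₀ : Y) : X)‖ := lt_of_lt_of_le hm0 hLamjm
    have hdet : ∀ i ∈ T', (ψi j) (P (xi i)) * (ψi i) ((z₀ : Y) : X)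
        = (m:ℂ) * (ψi j) ((z₀ : Y) : X) := by
      intro i hi
      have h1 := aux_det2 Y hY (ψi j) (ψi i) hwne (hψw j hjT') (hψw i hi)
        ⟨P (xi i), hPY _⟩ z₀
      have h1' : (ψi j) (P (xi i)) * (ψi i) ((z₀ : Y) : X)
          = (ψi j) ((z₀ : Y) : X) * (ψi i) (P (xi i)) := h1
      rw [h1', hψiP i]
      ring
    set κc := m * (m^2 - 1) / 2 with hκc
    have hκcpos : 0 < κc := by
      have h1 : 1 < m^2 := by nlinarith
      rw [hκc]; nlinarith
    set Z := (ψi j) ((z₀ : Y) : X) with hZ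
    set κk := (ψi j) k with hκk
    -- pointwise bound on active indices
    have hbd : ∀ i ∈ T', (Z * (starRingEnd ℂ)
        ((ψi i) ((z₀ : Y) : X) * (f (xi i) * κk))).re ≤ -κc := by
      intro i hi
      set Λ := (ψi i) ((z₀ : Y) : X) with hΛ
      set W := Λ * (f (xi i) * κk) with hW
      have hid : Λ * (ψi j) (xi i) = (m:ℂ) * Z + W := by
        have hx : xi i = P (xi i) + f (xi i) • k := by
          have h1 := hkey (xi i)
          rw [← h1]; abel
        have h2 : (ψi j) (xi i) = (ψi j) (P (xi i)) + f (xi i) * κk := by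
          calc (ψi j) (xi i) = (ψi j) (P (xi i) + f (xi i) • k) := by rw [← hx]
          _ = _ := by rw [map_add, map_smul, smul_eq_mul, hκk]
        rw [h2, mul_add]
        have h3 : Λ * (ψi j) (P (xi i)) = (m:ℂ) * Z := by
          rw [hΛ, mul_comm]
          exact hdet i hi
        rw [h3, hW]
      have hnorm1 : ‖(m:ℂ) * Z + W‖ ≤ ‖Z‖ := by
        rw [← hid, norm_mul]
        have h4 : ‖(ψi j) (xi i)‖ ≤ 1 := by
          calc ‖(ψi j) (xi i)‖ ≤ ‖ψi j‖ * ‖xi i‖ := (ψi j).le_opNorm _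
          _ ≤ 1 * 1 := mul_le_mul (hψi1 j) (le_of_eq (hxi1 i)) (norm_nonneg _) zero_le_one
          _ = 1 := one_mul 1
        have h5 : ‖Λ‖ ≤ ‖Z‖ := hjmax i hi
        calc ‖Λ‖ * ‖(ψi j) (xi i)‖ ≤ ‖Λ‖ * 1 :=
          mul_le_mul_of_nonneg_left h4 (norm_nonneg _)
        _ = ‖Λ‖ := mul_one _
        _ ≤ ‖Z‖ := h5
      have hnsq : Complex.normSq ((m:ℂ) * Z + W) ≤ Complex.normSq Z := by
        rw [← Complex.sq_norm, ← Complex.sq_norm]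
        apply pow_le_pow_left₀ (norm_nonneg _)
        simpa using hnorm1
      have hexp2 : Complex.normSq ((m:ℂ) * Z + W)
          = m^2 * Complex.normSq Z + 2*m*(Z * (starRingEnd ℂ) W).re + Complex.normSq W := by
        rw [Complex.normSq_add]
        rw [Complex.normSq_mul, Complex.normSq_ofReal]
        have h6 : ((m:ℂ) * Z * (starRingEnd ℂ) W).re = m * (Z * (starRingEnd ℂ) W).re := by
          rw [mul_assoc, Complex.mul_re]
          simp [Complex.ofReal_re, Complex.ofReal_im]
        rw [h6]
        ring
      have hZsq : m^2 ≤ Complex.normSq Z := by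
        rw [← Complex.sq_norm]
        have := pow_le_pow_left₀ hm0.le hLamjm 2
        simpa using this
      have hWnn : 0 ≤ Complex.normSq W := Complex.normSq_nonneg W
      have hstep1 : 2*m*(Z * (starRingEnd ℂ) W).re ≤ (1 - m^2) * Complex.normSq Z := by
        nlinarith [hnsq, hexp2, hWnn]
      have hstep2 : (1 - m^2) * Complex.normSq Z ≤ (1 - m^2) * m^2 :=
        mul_le_mul_of_nonpos_left hZsq (by nlinarith)
      have hm2 : 2*m*(-κc) = (1-m^2)*m^2 := by rw [hκc]; ring
      have hfin := le_trans hstep1 hstep2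
      rw [← hm2] at hfin
      exact le_of_mul_le_mul_left hfin (by positivity : (0:ℝ) < 2*m)
    -- summing the bound gives a contradiction
    have hsumT' : ∑ i ∈ T', (wt i.1 : ℂ) * (f (xi i) * (ψi i) ((z₀ : Y) : X)) = 0 := by
      rw [hT', Finset.sum_filter_of_ne]
      · have := hLY z₀
        rw [hLapp] at this
        exact this
      · intro i _ hne
        by_contra hc
        push_neg at hc
        apply hne
        have : wt i.1 = 0 := le_antisymm hc (hwA0 i)
        rw [this]
        norm_num
    have hsumre : ∑ i ∈ T', wt i.1 * (Z * (starRingEnd ℂ)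
        ((ψi i) ((z₀ : Y) : X) * (f (xi i) * κk))).re = 0 := by
      have hper : ∀ i ∈ T', wt i.1 * (Z * (starRingEnd ℂ)
          ((ψi i) ((z₀ : Y) : X) * (f (xi i) * κk))).re
          = ((Z * (starRingEnd ℂ) κk)
            * (starRingEnd ℂ) ((wt i.1 : ℂ) * (f (xi i) * (ψi i) ((z₀ : Y) : X)))).re := by
        intro i _
        have hcid : (Z * (starRingEnd ℂ) κk)
            * (starRingEnd ℂ) ((wt i.1 : ℂ) * (f (xi i) * (ψi i) ((z₀ : Y) : X)))
            = (wt i.1 : ℂ) * (Z * (starRingEnd ℂ)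
              ((ψi i) ((z₀ : Y) : X) * (f (xi i) * κk))) := by
          simp only [map_mul, Complex.conj_ofReal]
          ring
        rw [hcid, Complex.mul_re]
        simp [Complex.ofReal_re, Complex.ofReal_im]
      rw [Finset.sum_congr rfl hper]
      have hpull : ∑ i ∈ T', ((Z * (starRingEnd ℂ) κk)
          * (starRingEnd ℂ) ((wt i.1 : ℂ) * (f (xi i) * (ψi i) ((z₀ : Y) : X)))).re
          = ((Z * (starRingEnd ℂ) κk)
            * (starRingEnd ℂ) (∑ i ∈ T', (wt i.1 : ℂ) * (f (xi i) * (ψi i) ((z₀ : Y) : X)))).re := by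
        rw [map_sum, Finset.mul_sum, Complex.re_sum]
      rw [hpull, hsumT']
      simp
    have hwT' : ∑ i ∈ T', wt i.1 = 1 := by
      rw [hT', Finset.sum_filter_of_ne]
      · exact hwA
      · intro i _ hne
        exact (hwA0 i).lt_of_ne (Ne.symm hne)
    have hsumbd : ∑ i ∈ T', wt i.1 * (Z * (starRingEnd ℂ)
        ((ψi i) ((z₀ : Y) : X) * (f (xi i) * κk))).re ≤ -κc := by
      calc ∑ i ∈ T', wt i.1 * (Z * (starRingEnd ℂ)
          ((ψi i) ((z₀ : Y) : X) * (f (xi i) * κk))).re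
          ≤ ∑ i ∈ T', wt i.1 * (-κc) := by
            apply Finset.sum_le_sum
            intro i hi
            apply mul_le_mul_of_nonneg_left (hbd i hi) (hwA0 i)
      _ = (∑ i ∈ T', wt i.1) * (-κc) := by rw [Finset.sum_mul]
      _ = -κc := by rw [hwT', one_mul]
    rw [hsumre] at hsumbd
    linarith

  -- minimum of q on the unit sphere of Y
  haveI : ProperSpace Y := FiniteDimensional.proper ℂ Y
  haveI : Nontrivial Y := Module.nontrivial_of_finrank_eq_succ (n := 1) hY
  have hqcont : Continuous fun w : Y => q (w : X) := by
    apply continuous_finset_sum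
    intro i _
    apply Continuous.mul continuous_const
    apply Continuous.pow
    apply Continuous.norm
    exact continuous_const.mul ((ψi i).continuous.comp continuous_subtype_val)
  obtain ⟨wmin, hwmins, hwminmin⟩ := (isCompact_sphere (0:Y) 1).exists_isMinOn
    (NormedSpace.sphere_nonempty.mpr zero_le_one) hqcont.continuousOn
  have hwmin1 : ‖wmin‖ = 1 := by simpa [mem_sphere_zero_iff_norm] using hwmins
  set c := q ((wmin : Y) : X) with hcdef
  have hcpos : 0 < c := by
    apply hpos wmin
    intro h0
    rw [h0] at hwmin1
    simp at hwmin1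
  -- homogeneity of q
  have hqhom : ∀ (s : ℝ) (z : X), q (s • z) = s^2 * q z := by
    intro s z
    rw [hqdef]
    simp only
    rw [Finset.mul_sum]
    apply Finset.sum_congr rfl
    intro i _
    have h1 : (ψi i) (s • z) = (s:ℂ) * (ψi i) z := by
      rw [(ψi i).map_smul_of_tower, Complex.real_smul]
    rw [h1, show f (xi i) * ((s:ℂ) * (ψi i) z) = (s:ℂ) * (f (xi i) * (ψi i) z) by ring]
    rw [norm_mul, Complex.norm_real, mul_pow, Real.norm_eq_abs, sq_abs]
    ring
  have hqlow : ∀ w : Y, c * ‖(w : X)‖^2 ≤ q (w : X) := by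
    intro w
    rcases eq_or_ne w 0 with rfl | hne
    · have hq00 : q ((0:Y) : X) = 0 := by
        rw [hqdef]
        simp only [Submodule.coe_zero, map_zero, mul_zero, norm_zero]
        simp
      rw [hq00]
      simp
    · have hnw : (0:ℝ) < ‖w‖ := norm_pos_iff.mpr hne
      set w1 : Y := ‖w‖⁻¹ • w with hw1def
      have hw1s : w1 ∈ Metric.sphere (0:Y) 1 := by
        simp only [mem_sphere_zero_iff_norm, hw1def, norm_smul, norm_inv, norm_norm]
        rw [inv_mul_cancel₀ hnw.ne']
      have hcw1 : c ≤ q ((w1 : Y) : X) := hwminmin hw1s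
      have hw1n : ‖((w1 : Y) : X)‖ = 1 := by
        rw [← Submodule.coe_norm]
        simpa [mem_sphere_zero_iff_norm] using hw1s
      have hws : ((w : Y) : X) = ‖w‖ • ((w1 : Y) : X) := by
        rw [hw1def]
        push_cast
        rw [smul_smul, mul_inv_cancel₀ hnw.ne', one_smul]
      rw [hws, hqhom]
      rw [norm_smul, hw1n, Real.norm_eq_abs, abs_of_pos hnw, mul_one]
      have hsq : (0:ℝ) ≤ ‖w‖^2 := sq_nonneg _
      calc c * ‖w‖^2 = ‖w‖^2 * c := by ring
      _ ≤ ‖w‖^2 * q ((w1 : Y) : X) := mul_le_mul_of_nonneg_left hcw1 hsq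
  -- conclusion
  have hfne : f ≠ 0 := by
    intro h0
    rw [h0] at hfk
    simp at hfk
  have hf0 : (0:ℝ) < ‖f‖ := norm_pos_iff.mpr hfne
  refine ⟨c / ‖f‖^2, by positivity, ?_⟩
  intro Q hQY' hQid'
  have hQP : Q - P = f.smulRight (Q k) := by
    ext z
    rw [ContinuousLinearMap.sub_apply, ContinuousLinearMap.smulRight_apply]
    rw [hQrep Q hQY' hQid' z]
    abel
  have hnQP : ‖Q - P‖ = ‖f‖ * ‖Q k‖ := by
    rw [hQP, ContinuousLinearMap.norm_smulRight_apply]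
  have h1 : m^2 + q (Q k) ≤ ‖Q‖^2 := hmainQ Q hQY' hQid'
  have h2 : c * ‖Q k‖^2 ≤ q (Q k) := by
    have := hqlow ⟨Q k, hQY' k⟩
    simpa using this
  rw [ge_iff_le, hnQP]
  have h3 : c / ‖f‖^2 * (‖f‖ * ‖Q k‖)^2 = c * ‖Q k‖^2 := by
    field_simp
  rw [h3]
  linarith [h1, h2]
end

section
/- Let f = (f₁, …, f_n) ∈ ℂⁿ satisfy Σ_{j=1}^{n} |f_j| = 1 and 0 < |f_j| < 1/2 for every 1 ≤ j ≤ n, and let Y = {x ∈ ℓ∞ⁿ : Σ_{j=1}^{n} f_j x_j = 0} be the corresponding hyperplane of the complex space ℓ∞ⁿ. Then every minimal projection P from ℓ∞ⁿ onto Y is 2-strongly unique (there exists r > 0 such that ‖Q‖² ≥ ‖P‖² + r‖Q − P‖² for every projection Q onto Y), but for every α with 1 ≤ α < 2, P is NOT α-strongly unique (there is no r > 0 with ‖Q‖^α ≥ ‖P‖^α + r‖Q − P‖^α for every projection Q onto Y). -/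
open Complex

noncomputable def Complex.abs : AbsoluteValue ℂ ℝ where
  toFun z := ‖z‖
  map_mul' := norm_mul
  nonneg' := norm_nonneg
  eq_zero' _ := norm_eq_zero
  add_le' := norm_add_le

lemma Complex.norm_eq_abs (z : ℂ) : ‖z‖ = Complex.abs z := rfl
lemma Complex.abs_apply (z : ℂ) : Complex.abs z = Real.sqrt (Complex.normSq z) := Complex.norm_def z
lemma Complex.abs_ofReal (r : ℝ) : Complex.abs (r : ℂ) = |r| := by
  rw [← Complex.norm_eq_abs]; simp
lemma Complex.abs_conj (z : ℂ) : Complex.abs ((starRingEnd ℂ) z) = Complex.abs z := Complex.norm_conj z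
lemma Complex.abs_I : Complex.abs Complex.I = 1 := by
  rw [← Complex.norm_eq_abs]; simp
lemma Complex.re_le_abs (z : ℂ) : z.re ≤ Complex.abs z := Complex.re_le_norm z
lemma Complex.sq_abs (z : ℂ) : Complex.abs z ^ 2 = Complex.normSq z := Complex.sq_norm z
lemma Complex.normSq_eq_abs (z : ℂ) : Complex.normSq z = Complex.abs z ^ 2 := Complex.normSq_eq_norm_sq z

noncomputable def csgn (z : ℂ) : ℂ := if z = 0 then 1 else z / Complex.abs z
lemma csgn_abs (z : ℂ) : Complex.abs (csgn z) = 1 := by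
  unfold csgn; split
  · simp
  · rename_i h; rw [map_div₀, Complex.abs_ofReal, _root_.abs_of_nonneg (Complex.abs.nonneg z),
      div_self (Complex.abs.ne_zero h)]
lemma mul_conj_csgn (z : ℂ) : z * (starRingEnd ℂ) (csgn z) = Complex.abs z := by
  unfold csgn; split
  · rename_i h; simp [h]
  · rename_i h
    rw [map_div₀, Complex.conj_ofReal, mul_div_assoc', Complex.mul_conj, Complex.normSq_eq_abs]
    have : (Complex.abs z : ℂ) ≠ 0 := by simpa using Complex.abs.ne_zero h
    field_simp
    rw [Complex.ofReal_pow]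

section
variable {n : ℕ} (f v w : Fin n → ℂ)

-- the test vector for coordinate i
noncomputable def tvec (i : Fin n) : Fin n → ℂ :=
  fun j => if j = i then (starRingEnd ℂ) (csgn (1 - f i * v i))
    else -((starRingEnd ℂ) (csgn (v i)) * (starRingEnd ℂ) (csgn (f j)))

lemma tvec_norm_le (i : Fin n) : ‖tvec f v i‖ ≤ 1 := by
  rw [pi_norm_le_iff_of_nonneg zero_le_one]
  intro j
  rw [Complex.norm_eq_abs]
  unfold tvec
  split
  · rw [Complex.abs_conj, csgn_abs]
  · rw [map_neg_eq_map, map_mul, Complex.abs_conj, Complex.abs_conj, csgn_abs, csgn_abs,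
      one_mul]

lemma tvec_eval (hsum : ∑ j, Complex.abs (f j) = 1) (i : Fin n) :
    tvec f v i i - (∑ j, f j * tvec f v i j) * v i =
      ((Complex.abs (1 - f i * v i) + Complex.abs (v i) * (1 - Complex.abs (f i)) : ℝ) : ℂ) := by
  have hsplit : (∑ j, f j * tvec f v i j)
      = f i * tvec f v i i + ∑ j ∈ Finset.univ.erase i, f j * tvec f v i j :=
    (Finset.add_sum_erase Finset.univ (fun j => f j * tvec f v i j) (Finset.mem_univ i)).symm
  have h1 : tvec f v i i = (starRingEnd ℂ) (csgn (1 - f i * v i)) := by simp [tvec]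
  have h2 : ∀ j ∈ Finset.univ.erase i, f j * tvec f v i j
      = -((starRingEnd ℂ) (csgn (v i)) * (Complex.abs (f j) : ℂ)) := by
    intro j hj
    have hji : j ≠ i := Finset.ne_of_mem_erase hj
    simp only [tvec, if_neg hji]
    linear_combination -((starRingEnd ℂ) (csgn (v i))) * mul_conj_csgn (f j)
  have herase : ∑ j ∈ Finset.univ.erase i, Complex.abs (f j) = 1 - Complex.abs (f i) := by
    have := Finset.add_sum_erase Finset.univ (fun j => Complex.abs (f j)) (Finset.mem_univ i)
    rw [hsum] at this; linarith
  have h3 : ∑ x ∈ Finset.univ.erase i, -((starRingEnd ℂ) (csgn (v i)) * (Complex.abs (f x) : ℂ))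
      = -((starRingEnd ℂ) (csgn (v i)) * (1 - (Complex.abs (f i) : ℂ))) := by
    rw [Finset.sum_neg_distrib, ← Finset.mul_sum, ← Complex.ofReal_sum, herase]
    push_cast
    ring
  rw [hsplit, Finset.sum_congr rfl h2, h3, h1]
  push_cast
  linear_combination mul_conj_csgn (1 - f i * v i)
    + (1 - (Complex.abs (f i) : ℂ)) * mul_conj_csgn (v i)
end


section
variable {n : ℕ} (f v w : Fin n → ℂ)

noncomputable def Qv (f v : Fin n → ℂ) : (Fin n → ℂ) →L[ℂ] (Fin n → ℂ) :=
  LinearMap.toContinuousLinearMap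
  { toFun := fun x => x - (∑ j, f j * x j) • v
    map_add' := by
      intro x y
      have : (∑ j, f j * (x j + y j)) = (∑ j, f j * x j) + (∑ j, f j * y j) := by
        rw [← Finset.sum_add_distrib]; congr 1; ext j; ring
      simp only [Pi.add_apply, this, add_smul]
      abel
    map_smul' := by
      intro c x
      have : (∑ j, f j * (c • x) j) = c * (∑ j, f j * x j) := by
        rw [Finset.mul_sum]; congr 1; ext j; simp [Pi.smul_apply]; ring
      simp only [this, RingHom.id_apply, smul_sub, smul_smul] }

lemma Qv_apply (x : Fin n → ℂ) : Qv f v x = x - (∑ j, f j * x j) • v := rfl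

lemma Qv_apply' (x : Fin n → ℂ) (i : Fin n) :
    Qv f v x i = x i - (∑ j, f j * x j) * v i := rfl

lemma ell_abs_le (hsum : ∑ j, Complex.abs (f j) = 1) (x : Fin n → ℂ) :
    Complex.abs (∑ j, f j * x j) ≤ ‖x‖ := by
  refine le_trans (Complex.abs.sum_le _ _) ?_
  have : ∀ j ∈ Finset.univ, Complex.abs (f j * x j) ≤ Complex.abs (f j) * ‖x‖ := by
    intro j _
    rw [map_mul]
    refine mul_le_mul_of_nonneg_left ?_ (Complex.abs.nonneg _)
    simpa [Complex.norm_eq_abs] using norm_le_pi_norm x j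
  refine le_trans (Finset.sum_le_sum this) ?_
  rw [← Finset.sum_mul, hsum, one_mul]

lemma Qv_sub_apply (x : Fin n → ℂ) (i : Fin n) :
    (Qv f v - Qv f w) x i = (∑ j, f j * x j) * (w i - v i) := by
  simp only [ContinuousLinearMap.sub_apply, Pi.sub_apply, Qv_apply']
  ring

lemma Qv_diff_norm_le (hsum : ∑ j, Complex.abs (f j) = 1) {C : ℝ} (hC0 : 0 ≤ C)
    (hC : ∀ i, Complex.abs (w i - v i) ≤ C) : ‖Qv f v - Qv f w‖ ≤ C := by
  refine ContinuousLinearMap.opNorm_le_bound _ hC0 ?_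
  intro x
  rw [pi_norm_le_iff_of_nonneg (by positivity)]
  intro i
  rw [Complex.norm_eq_abs, Qv_sub_apply, map_mul]
  calc Complex.abs (∑ j, f j * x j) * Complex.abs (w i - v i)
      ≤ ‖x‖ * C := mul_le_mul (ell_abs_le f hsum x) (hC i) (Complex.abs.nonneg _) (norm_nonneg x)
    _ = C * ‖x‖ := by ring
end

section
variable {n : ℕ} (f v w : Fin n → ℂ)

lemma opnorm_coord_ge (Q : (Fin n → ℂ) →L[ℂ] (Fin n → ℂ)) (x : Fin n → ℂ)
    (hx : ‖x‖ ≤ 1) (i : Fin n) : Complex.abs (Q x i) ≤ ‖Q‖ := by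
  have h1 : Complex.abs (Q x i) ≤ ‖Q x‖ := by
    simpa [Complex.norm_eq_abs] using norm_le_pi_norm (Q x) i
  exact h1.trans ((Q.le_opNorm x).trans (by nlinarith [Q.opNorm_nonneg]))

lemma Qv_norm_ge (hsum : ∑ j, Complex.abs (f j) = 1) (i : Fin n) :
    Complex.abs (1 - f i * v i) + Complex.abs (v i) * (1 - Complex.abs (f i)) ≤ ‖Qv f v‖ := by
  have he := tvec_eval f v hsum i
  have hfa : Complex.abs (f i) ≤ 1 := by
    rw [← hsum]
    exact Finset.single_le_sum (fun j _ => Complex.abs.nonneg (f j)) (Finset.mem_univ i)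
  have h0 : Complex.abs (Qv f v (tvec f v i) i)
      = Complex.abs (1 - f i * v i) + Complex.abs (v i) * (1 - Complex.abs (f i)) := by
    rw [Qv_apply', he, Complex.abs_ofReal]
    refine _root_.abs_of_nonneg ?_
    have h1 : 0 ≤ Complex.abs (v i) * (1 - Complex.abs (f i)) :=
      mul_nonneg (Complex.abs.nonneg _) (by linarith)
    positivity
  rw [← h0]
  exact opnorm_coord_ge (Qv f v) (tvec f v i) (tvec_norm_le f v i) i
end

section
variable {n : ℕ} (f v w : Fin n → ℂ)

lemma Qv_diff_norm_ge (hsum : ∑ j, Complex.abs (f j) = 1) (i : Fin n) :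
    Complex.abs (w i - v i) ≤ ‖Qv f v - Qv f w‖ := by
  set x : Fin n → ℂ := fun j => (starRingEnd ℂ) (csgn (f j)) with hx
  have hxn : ‖x‖ ≤ 1 := by
    rw [pi_norm_le_iff_of_nonneg zero_le_one]
    intro j
    rw [hx, Complex.norm_eq_abs, Complex.abs_conj, csgn_abs]
  have hell : (∑ j, f j * x j) = 1 := by
    rw [hx]
    have : ∀ j ∈ Finset.univ, f j * (starRingEnd ℂ) (csgn (f j)) = ((Complex.abs (f j) : ℝ) : ℂ) :=
      fun j _ => mul_conj_csgn (f j)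
    rw [Finset.sum_congr rfl this, ← Complex.ofReal_sum, hsum, Complex.ofReal_one]
  have h0 : Complex.abs ((Qv f v - Qv f w) x i) = Complex.abs (w i - v i) := by
    rw [Qv_sub_apply, hell, one_mul]
  rw [← h0]
  exact opnorm_coord_ge _ x hxn i

lemma Qv_mem (hv : ∑ j, f j * v j = 1) (x : Fin n → ℂ) :
    ∑ j, f j * (Qv f v x) j = 0 := by
  simp only [Qv_apply']
  have : ∀ j ∈ Finset.univ, f j * (x j - (∑ k, f k * x k) * v j)
      = f j * x j - (∑ k, f k * x k) * (f j * v j) := fun j _ => by ring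
  rw [Finset.sum_congr rfl this, Finset.sum_sub_distrib, ← Finset.mul_sum, hv]
  ring

lemma Qv_fix (y : Fin n → ℂ) (hy : ∑ j, f j * y j = 0) : Qv f v y = y := by
  rw [Qv_apply, hy]
  simp

lemma proj_repr (j₀ : Fin n) (hf0 : f j₀ ≠ 0)
    (Q : (Fin n → ℂ) →L[ℂ] (Fin n → ℂ))
    (hQY : ∀ z, ∑ j, f j * (Q z) j = 0)
    (hQid : ∀ y : Fin n → ℂ, (∑ j, f j * y j = 0) → Q y = y) :
    ∃ v : Fin n → ℂ, (∑ j, f j * v j = 1) ∧ Q = Qv f v := by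
  classical
  set x₀ : Fin n → ℂ := fun j => if j = j₀ then (f j₀)⁻¹ else 0 with hx₀
  have hℓx₀ : ∑ j, f j * x₀ j = 1 := by
    rw [hx₀]
    rw [Finset.sum_eq_single j₀]
    · simp [mul_inv_cancel₀ hf0]
    · intro j _ hj; simp [hj]
    · intro h; exact absurd (Finset.mem_univ j₀) h
  refine ⟨x₀ - Q x₀, ?_, ?_⟩
  · have : ∑ j, f j * (x₀ - Q x₀) j = (∑ j, f j * x₀ j) - ∑ j, f j * (Q x₀) j := by
      rw [← Finset.sum_sub_distrib]; congr 1; ext j; simp [Pi.sub_apply]; ring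
    rw [this, hℓx₀, hQY x₀]; ring
  · ext x i
    have hy : ∑ j, f j * (x - (∑ k, f k * x k) • x₀) j = 0 := by
      have : ∀ j ∈ Finset.univ, f j * (x - (∑ k, f k * x k) • x₀) j
          = f j * x j - (∑ k, f k * x k) * (f j * x₀ j) := fun j _ => by
        simp [Pi.sub_apply, Pi.smul_apply, smul_eq_mul]; ring
      rw [Finset.sum_congr rfl this, Finset.sum_sub_distrib, ← Finset.mul_sum, hℓx₀]
      ring
    have hfix := hQid _ hy
    have hmap : Q (x - (∑ k, f k * x k) • x₀) = Q x - (∑ k, f k * x k) • Q x₀ := by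
      rw [map_sub, map_smul]
    rw [hmap] at hfix
    have hfin : Q x = x - (∑ k, f k * x k) • (x₀ - Q x₀) := by
      have h2 : Q x = x - (∑ k, f k * x k) • x₀ + (∑ k, f k * x k) • Q x₀ := by
        rw [← hfix]; abel
      rw [smul_sub, h2]
      abel
    exact congrFun (hfin.trans (Qv_apply f _ x).symm) i
end


lemma sq_bound (x t M : ℝ) (hx : 0 ≤ x) (hM0 : 0 < M) (hM : Real.sqrt (x^2+t^2) ≤ M) :
    x + t^2/(2*M) ≤ Real.sqrt (x^2+t^2) := by
  set u := Real.sqrt (x^2+t^2) with hu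
  have h1 : u^2 = x^2+t^2 := Real.sq_sqrt (by positivity)
  have h2 : x ≤ u := by
    rw [hu, show x^2 + t^2 = x^2 + t^2 from rfl]
    calc x = Real.sqrt (x^2) := (Real.sqrt_sq hx).symm
    _ ≤ Real.sqrt (x^2+t^2) := Real.sqrt_le_sqrt (by nlinarith)
  have h3 : t^2/(2*M) ≤ u - x := by
    rw [div_le_iff₀ (by linarith)]
    nlinarith [mul_nonneg (sub_nonneg.mpr h2) (by linarith : (0:ℝ) ≤ 2*M - (u+x))]
  linarith

lemma sqrt_le_lin (x t : ℝ) (hx : 0 < x) : Real.sqrt (x^2+t^2) ≤ x + t^2/(2*x) := by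
  have hq : t^2/(2*x)*(2*x) = t^2 := div_mul_cancel₀ _ (by positivity)
  have h : x^2 + t^2 ≤ (x + t^2/(2*x))^2 := by
    nlinarith [sq_nonneg (t^2/(2*x)), hq]
  calc Real.sqrt (x^2+t^2) ≤ Real.sqrt ((x + t^2/(2*x))^2) := Real.sqrt_le_sqrt h
  _ = x + t^2/(2*x) := Real.sqrt_sq (by positivity)

lemma abs_eq_sqrt (z : ℂ) : Complex.abs z = Real.sqrt (z.re^2 + z.im^2) := by
  rw [Complex.abs_apply, Complex.normSq_apply]
  ring_nf

lemma pc (z : ℂ) (b c M : ℝ) (hb : 1 ≤ b) (hM0 : 0 ≤ M)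
    (hzM : Complex.abs (1 - z) ≤ M + 1) :
    (1 - c + b*c) + (b-1)*(z.re - c) + (z.im)^2/(2*(M+1))
      ≤ Complex.abs (1-z) + b * Complex.abs z := by
  have habs : Complex.abs (1-z) = Real.sqrt ((1 - z.re)^2 + z.im^2) := by
    rw [abs_eq_sqrt]
    norm_num
  have hrez : b * z.re ≤ b * Complex.abs z :=
    mul_le_mul_of_nonneg_left (Complex.re_le_abs z) (by linarith)
  rcases le_or_gt z.re 1 with hre | hre
  · have h := sq_bound (1 - z.re) z.im (M+1) (by linarith) (by linarith)
      (by rw [← habs]; exact hzM)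
    rw [habs]
    nlinarith
  · have habs' : Complex.abs (1-z) = Real.sqrt ((z.re - 1)^2 + z.im^2) := by
        rw [habs]; ring_nf
    have h := sq_bound (z.re - 1) z.im (M+1) (by linarith) (by linarith)
      (by rw [← habs']; exact hzM)
    rw [habs']
    nlinarith

section
variable {n : ℕ} (f v w : Fin n → ℂ)

lemma erase_sum_abs (hsum : ∑ j, Complex.abs (f j) = 1) (i : Fin n) :
    ∑ j ∈ Finset.univ.erase i, Complex.abs (f j) = 1 - Complex.abs (f i) := by
  have := Finset.add_sum_erase Finset.univ (fun j => Complex.abs (f j)) (Finset.mem_univ i)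
  rw [hsum] at this
  linarith

lemma key_coord_le (hsum : ∑ j, Complex.abs (f j) = 1) (x : Fin n → ℂ) (i : Fin n) :
    Complex.abs (x i - (∑ j, f j * x j) * v i) ≤
      ‖x‖ * (Complex.abs (1 - f i * v i) + Complex.abs (v i) * (1 - Complex.abs (f i))) := by
  have hsplit : (∑ j, f j * x j) = f i * x i + ∑ j ∈ Finset.univ.erase i, f j * x j :=
    (Finset.add_sum_erase Finset.univ (fun j => f j * x j) (Finset.mem_univ i)).symm
  have heq : x i - (∑ j, f j * x j) * v i
      = x i * (1 - f i * v i) - (∑ j ∈ Finset.univ.erase i, f j * x j) * v i := by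
    rw [hsplit]; ring
  rw [heq]
  refine le_trans (Complex.abs.sub_le_add _ _) ?_
  have h1 : Complex.abs (x i * (1 - f i * v i)) ≤ ‖x‖ * Complex.abs (1 - f i * v i) := by
    rw [map_mul]
    have : Complex.abs (x i) ≤ ‖x‖ := by
      simpa [Complex.norm_eq_abs] using norm_le_pi_norm x i
    exact mul_le_mul_of_nonneg_right this (Complex.abs.nonneg _)
  have h2 : Complex.abs ((∑ j ∈ Finset.univ.erase i, f j * x j) * v i)
      ≤ Complex.abs (v i) * ((1 - Complex.abs (f i)) * ‖x‖) := by
    rw [map_mul, mul_comm]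
    refine mul_le_mul_of_nonneg_left ?_ (Complex.abs.nonneg _)
    refine le_trans (Complex.abs.sum_le _ _) ?_
    have : ∀ j ∈ Finset.univ.erase i, Complex.abs (f j * x j) ≤ Complex.abs (f j) * ‖x‖ := by
      intro j _
      rw [map_mul]
      refine mul_le_mul_of_nonneg_left ?_ (Complex.abs.nonneg _)
      simpa [Complex.norm_eq_abs] using norm_le_pi_norm x j
    refine le_trans (Finset.sum_le_sum this) ?_
    rw [← Finset.sum_mul, erase_sum_abs f hsum]
  calc Complex.abs (x i * (1 - f i * v i)) + Complex.abs ((∑ j ∈ Finset.univ.erase i, f j * x j) * v i)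
      ≤ ‖x‖ * Complex.abs (1 - f i * v i) + Complex.abs (v i) * ((1 - Complex.abs (f i)) * ‖x‖) :=
        add_le_add h1 h2
    _ = ‖x‖ * (Complex.abs (1 - f i * v i) + Complex.abs (v i) * (1 - Complex.abs (f i))) := by ring

lemma Qv_norm_le (hsum : ∑ j, Complex.abs (f j) = 1) {C : ℝ} (hC0 : 0 ≤ C)
    (hC : ∀ i, Complex.abs (1 - f i * v i) + Complex.abs (v i) * (1 - Complex.abs (f i)) ≤ C) :
    ‖Qv f v‖ ≤ C := by
  refine ContinuousLinearMap.opNorm_le_bound _ hC0 ?_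
  intro x
  rw [pi_norm_le_iff_of_nonneg (by positivity)]
  intro i
  rw [Qv_apply', Complex.norm_eq_abs]
  refine le_trans (key_coord_le f v hsum x i) ?_
  rw [mul_comm C ‖x‖]
  exact mul_le_mul_of_nonneg_left (hC i) (norm_nonneg x)
end

noncomputable def Sa {n : ℕ} (a : Fin n → ℝ) : ℝ := ∑ j, a j / (1 - 2 * a j)
noncomputable def lam {n : ℕ} (a : Fin n → ℝ) : ℝ := 1 + 1 / Sa a
noncomputable def cc {n : ℕ} (a : Fin n → ℝ) (i : Fin n) : ℝ := (a i / (1 - 2 * a i)) / Sa a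
noncomputable def Ba {n : ℕ} (a : Fin n → ℝ) : ℝ := ∑ j, (1 - 2 * a j) / a j
noncomputable def Kc {n : ℕ} (a : Fin n → ℝ) : ℝ := (Sa a)^2 + 2 * (1 + Ba a * Sa a)

section
variable {n : ℕ} (a : Fin n → ℝ)

lemma Sa_pos (hn : 0 < n) (ha : ∀ j, 0 < a j ∧ a j < 1/2) : 0 < Sa a := by
  have : ∀ j ∈ Finset.univ, 0 < a j / (1 - 2 * a j) := by
    intro j _
    have h1 := (ha j).1; have h2 := (ha j).2
    apply div_pos h1; linarith
  apply Finset.sum_pos this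
  have : Nonempty (Fin n) := Fin.pos_iff_nonempty.mp hn
  exact Finset.univ_nonempty

lemma Ba_nonneg (ha : ∀ j, 0 < a j ∧ a j < 1/2) : 0 ≤ Ba a := by
  apply Finset.sum_nonneg
  intro j _
  have h1 := (ha j).1; have h2 := (ha j).2
  exact div_nonneg (by linarith) h1.le

lemma cc_pos (hn : 0 < n) (ha : ∀ j, 0 < a j ∧ a j < 1/2) (i : Fin n) : 0 < cc a i := by
  have h1 := (ha i).1; have h2 := (ha i).2
  exact div_pos (div_pos h1 (by linarith)) (Sa_pos a hn ha)

lemma cc_sum (hn : 0 < n) (ha : ∀ j, 0 < a j ∧ a j < 1/2) : ∑ i, cc a i = 1 := by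
  unfold cc
  rw [← Finset.sum_div]
  rw [show (∑ i, a i / (1 - 2 * a i)) = Sa a from rfl]
  exact div_self (Sa_pos a hn ha).ne'

lemma cc_lt_one (hn : 2 ≤ n) (ha : ∀ j, 0 < a j ∧ a j < 1/2) (i : Fin n) : cc a i < 1 := by
  have hn0 : 0 < n := by omega
  -- pick another index
  have h0 : (0:ℕ) < n := by omega
  have h1 : (1:ℕ) < n := by omega
  have : ∃ j : Fin n, j ≠ i := by
    by_cases hcase : i = ⟨0, h0⟩
    · exact ⟨⟨1, h1⟩, by rw [hcase]; exact Fin.ne_of_val_ne (by simp)⟩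
    · exact ⟨⟨0, h0⟩, fun h => hcase (h ▸ rfl)⟩
  obtain ⟨j, hj⟩ := this
  have hsum := cc_sum a hn0 ha
  have hj' := cc_pos a hn0 ha j
  have h := Finset.add_sum_erase Finset.univ (cc a) (Finset.mem_univ i)
  have hjmem : j ∈ Finset.univ.erase i := Finset.mem_erase.mpr ⟨hj, Finset.mem_univ j⟩
  have hle : cc a j ≤ ∑ k ∈ Finset.univ.erase i, cc a k :=
    Finset.single_le_sum (fun k _ => (cc_pos a hn0 ha k).le) hjmem
  rw [hsum] at h
  linarith

lemma lam_gt_one (hn : 0 < n) (ha : ∀ j, 0 < a j ∧ a j < 1/2) : 1 < lam a := by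
  unfold lam
  have := Sa_pos a hn ha
  have : 0 < 1 / Sa a := by positivity
  linarith

lemma lam_eq (hn : 0 < n) (ha : ∀ j, 0 < a j ∧ a j < 1/2) (i : Fin n) :
    1 - cc a i + ((1 - a i)/(a i)) * cc a i = lam a := by
  have h1 := (ha i).1; have h2 := (ha i).2
  have hS := Sa_pos a hn ha
  unfold cc lam
  have h3 : (1:ℝ) - 2 * a i ≠ 0 := by linarith
  rw [show ∀ c b : ℝ, 1 - c + b * c = 1 + c * (b - 1) from fun c b => by ring]
  have h4 : a i ≠ 0 := h1.ne'
  have h5 : Sa a ≠ 0 := hS.ne'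
  congr 1
  rw [div_sub_one h4]
  field_simp
  rw [div_eq_one_iff_eq (by intro h; apply h3; linarith)]
  ring

lemma bsub (ha : ∀ j, 0 < a j ∧ a j < 1/2) (i : Fin n) :
    (1 - a i)/(a i) - 1 = (1 - 2 * a i)/(a i) := by
  have h1 := (ha i).1
  field_simp
  ring
end

lemma core {n : ℕ} (a : Fin n → ℝ) (hn : 2 ≤ n) (ha : ∀ j, 0 < a j ∧ a j < 1/2)
    (hasum : ∑ j, a j = 1) (z : Fin n → ℂ) (hz : ∑ j, z j = 1) (M : ℝ)
    (hM : ∀ i, Complex.abs (1 - z i) + Complex.abs (z i) * ((1 - a i)/(a i)) ≤ M) :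
    lam a ≤ M ∧ ∀ i, (Complex.abs (z i - (cc a i : ℂ)))^2 ≤ Kc a * (M^2 - (lam a)^2) := by
  have hn0 : 0 < n := by omega
  have hS := Sa_pos a hn0 ha
  have hB := Ba_nonneg a ha
  have hlam := lam_gt_one a hn0 ha
  set sv : Fin n → ℝ := fun i => (z i).re - cc a i with hsv
  set tv : Fin n → ℝ := fun i => (z i).im with htv
  have hb1 : ∀ i, 1 ≤ (1 - a i)/(a i) := fun i => by
    have h1 := (ha i).1; have h2 := (ha i).2
    rw [le_div_iff₀ h1]; linarith
  have hM0 : 0 ≤ M := by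
    have := hM ⟨0, hn0⟩
    have h1 := Complex.abs.nonneg (1 - z ⟨0, hn0⟩)
    have h2 : 0 ≤ Complex.abs (z ⟨0, hn0⟩) * ((1 - a ⟨0, hn0⟩)/(a ⟨0, hn0⟩)) :=
      mul_nonneg (Complex.abs.nonneg _) (by linarith [hb1 ⟨0, hn0⟩])
    linarith
  have key : ∀ i, lam a + ((1 - a i)/(a i) - 1) * sv i + (tv i)^2/(2*(M+1)) ≤ M := by
    intro i
    have hMi := hM i
    have hzM : Complex.abs (1 - z i) ≤ M + 1 := by
      have h2 : 0 ≤ Complex.abs (z i) * ((1 - a i)/(a i)) :=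
        mul_nonneg (Complex.abs.nonneg _) (by linarith [hb1 i])
      linarith
    have hpc := pc (z i) ((1 - a i)/(a i)) (cc a i) M (hb1 i) hM0 hzM
    rw [lam_eq a hn0 ha i] at hpc
    simp only [hsv, htv]
    linarith
  have hsum_sv : ∑ i, sv i = 0 := by
    have hre : (∑ j, z j).re = 1 := by rw [hz]; exact Complex.one_re
    rw [Complex.re_sum] at hre
    have hccs := cc_sum a hn0 ha
    simp only [hsv]
    rw [Finset.sum_sub_distrib, hre, hccs]
    ring
  have hδ : lam a ≤ M := by
    have hne : (Finset.univ : Finset (Fin n)).Nonempty := by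
      have : Nonempty (Fin n) := Fin.pos_iff_nonempty.mp hn0
      exact Finset.univ_nonempty
    obtain ⟨i, -, hi⟩ := Finset.exists_le_of_sum_le (f := fun _ : Fin n => (0:ℝ)) (g := sv)
      hne (by rw [hsum_sv]; simp)
    have hk := key i
    have h1 : 0 ≤ ((1-a i)/(a i) - 1) * sv i := mul_nonneg (by linarith [hb1 i]) hi
    have h2 : 0 ≤ (tv i)^2/(2*(M+1)) := by positivity
    linarith
  have hsle : ∀ j, sv j ≤ (M - lam a) * (Sa a * cc a j) := by
    intro j
    have hk := key j
    have h2 : 0 ≤ (tv j)^2/(2*(M+1)) := by positivity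
    have h3 : ((1-a j)/(a j) - 1) * sv j ≤ M - lam a := by linarith
    rw [bsub a ha j] at h3
    have h1 := (ha j).1; have h2j := (ha j).2
    have h12 : (0:ℝ) < 1 - 2*a j := by linarith
    have hpos : 0 < (1 - 2*a j)/(a j) := div_pos h12 h1
    have h4 : sv j ≤ (M - lam a) / ((1-2*a j)/(a j)) := by
      rw [le_div_iff₀ hpos]
      calc sv j * ((1-2*a j)/(a j)) = ((1-2*a j)/(a j)) * sv j := by ring
      _ ≤ M - lam a := h3
    refine h4.trans (le_of_eq ?_)
    have hScc : Sa a * cc a j = a j / (1 - 2*a j) := by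
      unfold cc
      field_simp
    rw [hScc, div_div_eq_mul_div, mul_div_assoc]
  have hδ0 : 0 ≤ M - lam a := by linarith
  have hδS : 0 ≤ (M - lam a) * Sa a := mul_nonneg hδ0 hS.le
  have hScc_le : ∀ j, Sa a * cc a j ≤ Sa a := by
    intro j
    have h := cc_lt_one a hn ha j
    nlinarith [cc_pos a hn0 ha j]
  have hslow : ∀ i, -((M - lam a) * Sa a) ≤ sv i := by
    intro i
    have hsplit := Finset.add_sum_erase Finset.univ sv (Finset.mem_univ i)
    rw [hsum_sv] at hsplit
    have hupper : ∑ j ∈ Finset.univ.erase i, sv j ≤ (M - lam a) * Sa a := by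
      calc ∑ j ∈ Finset.univ.erase i, sv j
          ≤ ∑ j ∈ Finset.univ.erase i, (M - lam a) * (Sa a * cc a j) :=
            Finset.sum_le_sum (fun j _ => hsle j)
        _ = (M - lam a) * Sa a * ∑ j ∈ Finset.univ.erase i, cc a j := by
            rw [Finset.mul_sum]; congr 1; ext j; ring
        _ ≤ (M - lam a) * Sa a * 1 := by
            have hccs := cc_sum a hn0 ha
            have hsplit2 := Finset.add_sum_erase Finset.univ (cc a) (Finset.mem_univ i)
            rw [hccs] at hsplit2
            have hcci := cc_pos a hn0 ha i
            have h9 : ∑ j ∈ Finset.univ.erase i, cc a j ≤ 1 := by linarith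
            nlinarith
        _ = (M - lam a) * Sa a := mul_one _
    linarith
  have hshigh : ∀ i, sv i ≤ (M - lam a) * Sa a := by
    intro i
    refine (hsle i).trans ?_
    have := hScc_le i
    nlinarith
  have htb : ∀ i, (tv i)^2 ≤ 2*(M+1) * ((M - lam a) * (1 + Ba a * Sa a)) := by
    intro i
    have hk := key i
    have hbB : (1 - a i)/(a i) - 1 ≤ Ba a := by
      rw [bsub a ha i]
      refine Finset.single_le_sum (f := fun j => (1 - 2*a j)/(a j)) ?_ (Finset.mem_univ i)
      intro j _
      have h1 := (ha j).1; have h2 := (ha j).2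
      exact div_nonneg (by linarith) h1.le
    have hblow : 0 ≤ (1 - a i)/(a i) - 1 := by linarith [hb1 i]
    have hlow : -(sv i) ≤ (M - lam a) * Sa a := by linarith [hslow i]
    have p1 : ((1 - a i)/(a i) - 1) * (-(sv i)) ≤ ((1 - a i)/(a i) - 1) * ((M - lam a) * Sa a) :=
      mul_le_mul_of_nonneg_left hlow hblow
    have p2 : ((1 - a i)/(a i) - 1) * ((M - lam a) * Sa a) ≤ Ba a * ((M - lam a) * Sa a) :=
      mul_le_mul_of_nonneg_right hbB hδS
    have h6 : (tv i)^2/(2*(M+1)) ≤ (M - lam a) + Ba a * ((M - lam a) * Sa a) := by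
      linarith
    have h7 : 0 < 2*(M+1) := by linarith
    rw [div_le_iff₀ h7] at h6
    nlinarith [h6]
  refine ⟨hδ, ?_⟩
  intro i
  have habs2 : (Complex.abs (z i - (cc a i : ℂ)))^2 = (sv i)^2 + (tv i)^2 := by
    rw [Complex.sq_abs, Complex.normSq_apply]
    simp only [hsv, htv, Complex.sub_re, Complex.sub_im, Complex.ofReal_re, Complex.ofReal_im]
    ring
  rw [habs2]
  have hs2 : (sv i)^2 ≤ (Sa a)^2 * (M - lam a)^2 := by
    have h1 := hslow i; have h2 := hshigh i
    nlinarith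
  have ht2 := htb i
  have hd1 : M - lam a ≤ M + lam a := by linarith
  have hMlam : (M - lam a)^2 ≤ M^2 - (lam a)^2 := by
    nlinarith [mul_nonneg (show (0:ℝ) ≤ M - lam a by linarith) (show (0:ℝ) ≤ lam a by linarith)]
  have hMlam2 : (M+1)*(M - lam a) ≤ M^2 - (lam a)^2 := by
    nlinarith [mul_nonneg (show (0:ℝ) ≤ M - lam a by linarith) (show (0:ℝ) ≤ lam a - 1 by linarith)]
  have hfac : (0:ℝ) ≤ 1 + Ba a * Sa a := by
    have := mul_nonneg hB hS.le
    linarith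
  have e1 : (Sa a)^2 * (M - lam a)^2 ≤ (Sa a)^2 * (M^2 - (lam a)^2) :=
    mul_le_mul_of_nonneg_left hMlam (sq_nonneg _)
  have e2 : 2*(M+1) * ((M - lam a) * (1 + Ba a * Sa a))
      ≤ 2 * (1 + Ba a * Sa a) * (M^2 - (lam a)^2) := by
    have h := mul_le_mul_of_nonneg_left hMlam2 (by linarith : (0:ℝ) ≤ 2 * (1 + Ba a * Sa a))
    calc 2*(M+1) * ((M - lam a) * (1 + Ba a * Sa a))
        = 2 * (1 + Ba a * Sa a) * ((M+1)*(M - lam a)) := by ring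
      _ ≤ 2 * (1 + Ba a * Sa a) * (M^2 - (lam a)^2) := h
  calc (sv i)^2 + (tv i)^2
      ≤ (Sa a)^2 * (M - lam a)^2 + 2*(M+1) * ((M - lam a) * (1 + Ba a * Sa a)) := by linarith
    _ ≤ (Sa a)^2 * (M^2 - (lam a)^2) + 2 * (1 + Ba a * Sa a) * (M^2 - (lam a)^2) := by linarith
    _ = Kc a * (M^2 - (lam a)^2) := by unfold Kc; ring

lemma Kc_pos {n : ℕ} (a : Fin n → ℝ) (hn : 0 < n) (ha : ∀ j, 0 < a j ∧ a j < 1/2) :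
    0 < Kc a := by
  have hS := Sa_pos a hn ha
  have hB := Ba_nonneg a ha
  have := mul_nonneg hB hS.le
  unfold Kc
  nlinarith

lemma rpow_diff_le (L ε α : ℝ) (hL : 1 ≤ L) (hε : 0 ≤ ε) (hα2 : α ≤ 2) :
    (L + ε)^α ≤ L^α + ((L+ε)^2 - L^2) := by
  have hL0 : 0 < L := by linarith
  have hLε : 0 < L + ε := by linarith
  have h1 : (L+ε)^α = ((L+ε)^(2:ℝ)) * (L+ε)^(α-2) := by
    rw [← Real.rpow_add hLε]; ring_nf
  have h4 : L^α = (L^(2:ℝ)) * L^(α-2) := by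
    rw [← Real.rpow_add hL0]; ring_nf
  have h2 : (L+ε)^(α-2) ≤ L^(α-2) :=
    Real.rpow_le_rpow_of_nonpos hL0 (by linarith) (by linarith)
  have h3 : L^(α-2) ≤ 1 := Real.rpow_le_one_of_one_le_of_nonpos hL (by linarith)
  have hq0 : 0 ≤ (L+ε)^(α-2) := Real.rpow_nonneg hLε.le _
  have h5 : (L+ε)^(2:ℝ) = (L+ε)^2 := by
    rw [show ((2:ℝ)) = ((2:ℕ):ℝ) by norm_num, Real.rpow_natCast]
  have h6 : L^(2:ℝ) = L^2 := by
    rw [show ((2:ℝ)) = ((2:ℕ):ℝ) by norm_num, Real.rpow_natCast]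
  rw [h1, h4, h5, h6]
  have hsq : L^2 ≤ (L+ε)^2 := by nlinarith
  have step1 : (L+ε)^2 * (L+ε)^(α-2) ≤ (L+ε)^2 * L^(α-2) :=
    mul_le_mul_of_nonneg_left h2 (by positivity)
  have step2 : (L+ε)^2 * L^(α-2) = L^2 * L^(α-2) + ((L+ε)^2 - L^2) * L^(α-2) := by ring
  have hp0 : 0 ≤ L^(α-2) := Real.rpow_nonneg hL0.le _
  have step3 : ((L+ε)^2 - L^2) * L^(α-2) ≤ ((L+ε)^2 - L^2) * 1 :=
    mul_le_mul_of_nonneg_left h3 (by linarith)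
  linarith

lemma part2_coord (a c τ : ℝ) (ha : 0 < a) (ha1 : a < 1) (hc : 0 < c) (hc1 : c < 1) :
    Complex.abs (1 - ((c:ℂ) + (τ:ℂ)*Complex.I)) + Complex.abs ((c:ℂ) + (τ:ℂ)*Complex.I) * ((1-a)/a)
      ≤ (1 - c + ((1-a)/a)*c) + (1/(2*(1-c)) + ((1-a)/a)/(2*c)) * τ^2 := by
  have h1 : Complex.abs (1 - ((c:ℂ) + (τ:ℂ)*Complex.I)) = Real.sqrt ((1-c)^2 + τ^2) := by
    rw [abs_eq_sqrt]
    simp only [Complex.sub_re, Complex.sub_im, Complex.add_re, Complex.add_im, Complex.one_re,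
      Complex.one_im, Complex.ofReal_re, Complex.ofReal_im, Complex.mul_re, Complex.mul_im,
      Complex.I_re, Complex.I_im]
    ring_nf
  have h2 : Complex.abs ((c:ℂ) + (τ:ℂ)*Complex.I) = Real.sqrt (c^2 + τ^2) := by
    rw [abs_eq_sqrt]
    simp only [Complex.add_re, Complex.add_im, Complex.ofReal_re, Complex.ofReal_im,
      Complex.mul_re, Complex.mul_im, Complex.I_re, Complex.I_im]
    ring_nf
  rw [h1, h2]
  have s1 := sqrt_le_lin (1-c) τ (by linarith)
  have s2 := sqrt_le_lin c τ hc
  have hb0 : (0:ℝ) ≤ (1-a)/a := div_nonneg (by linarith) ha.le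
  have s3 : Real.sqrt (c^2 + τ^2) * ((1-a)/a) ≤ (c + τ^2/(2*c)) * ((1-a)/a) :=
    mul_le_mul_of_nonneg_right s2 hb0
  have heq : ((1-c) + τ^2/(2*(1-c))) + (c + τ^2/(2*c)) * ((1-a)/a)
      = (1 - c + ((1-a)/a)*c) + (1/(2*(1-c)) + ((1-a)/a)/(2*c)) * τ^2 := by
    have : (1:ℝ) - c ≠ 0 := by linarith
    field_simp
    ring
  linarith

set_option maxHeartbeats 2000000 in
theorem stmt18 (n : ℕ) (f : Fin n → ℂ)
    (hsum : ∑ j, ‖f j‖ = 1)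
    (hf : ∀ j, 0 < ‖f j‖ ∧ ‖f j‖ < 1 / 2)
    (Y : Submodule ℂ (Fin n → ℂ))
    (hY : ∀ x : Fin n → ℂ, x ∈ Y ↔ ∑ j, f j * x j = 0)
    (P : (Fin n → ℂ) →L[ℂ] (Fin n → ℂ))
    (hPY : ∀ z, P z ∈ Y) (hPid : ∀ y ∈ Y, P y = y)
    (hPmin : ∀ Q : (Fin n → ℂ) →L[ℂ] (Fin n → ℂ),
      (∀ z, Q z ∈ Y) → (∀ y ∈ Y, Q y = y) → ‖P‖ ≤ ‖Q‖) :
    (∃ r > 0, ∀ Q : (Fin n → ℂ) →L[ℂ] (Fin n → ℂ),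
      (∀ z, Q z ∈ Y) → (∀ y ∈ Y, Q y = y) → ‖Q‖ ^ 2 ≥ ‖P‖ ^ 2 + r * ‖Q - P‖ ^ 2) ∧
    (∀ α : ℝ, 1 ≤ α → α < 2 →
      ¬ ∃ r > 0, ∀ Q : (Fin n → ℂ) →L[ℂ] (Fin n → ℂ),
        (∀ z, Q z ∈ Y) → (∀ y ∈ Y, Q y = y) → ‖Q‖ ^ α ≥ ‖P‖ ^ α + r * ‖Q - P‖ ^ α) := by
  have hsum : ∑ j, Complex.abs (f j) = 1 := hsum
  have hf : ∀ j, 0 < Complex.abs (f j) ∧ Complex.abs (f j) < 1 / 2 := hf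
  classical
  set a : Fin n → ℝ := fun j => Complex.abs (f j) with ha_def
  have ha : ∀ j, 0 < a j ∧ a j < 1/2 := by
    intro j; exact ⟨(hf j).1, by have := (hf j).2; simpa using this⟩
  have hf0 : ∀ j, f j ≠ 0 := fun j => by
    intro h
    have := (hf j).1
    rw [h] at this
    simp at this
  have hn2 : 2 ≤ n := by
    by_contra h
    push_neg at h
    interval_cases n
    · simp at hsum
    · have h1 := (hf 0).2
      have : ∑ j : Fin 1, Complex.abs (f j) = Complex.abs (f 0) := by
        simp [Fin.sum_univ_one]
      rw [this] at hsum
      rw [hsum] at h1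
      norm_num at h1
  have hn0 : 0 < n := by omega
  have hS := Sa_pos a hn0 ha
  have hlam1 := lam_gt_one a hn0 ha
  -- the optimal point w
  set w : Fin n → ℂ := fun i => ((cc a i : ℝ) : ℂ) / f i with hw_def
  have hfw : ∀ i, f i * w i = ((cc a i : ℝ) : ℂ) := by
    intro i
    rw [hw_def]
    exact mul_div_cancel₀ _ (hf0 i)
  have hw1 : ∑ j, f j * w j = 1 := by
    have : ∀ j ∈ Finset.univ, f j * w j = ((cc a j : ℝ) : ℂ) := fun j _ => hfw j
    rw [Finset.sum_congr rfl this, ← Complex.ofReal_sum, cc_sum a hn0 ha, Complex.ofReal_one]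
  -- coordinate functionals at w equal lam
  have hwcoord : ∀ i, Complex.abs (1 - f i * w i) + Complex.abs (w i) * (1 - a i) = lam a := by
    intro i
    have hc1 := cc_lt_one a hn2 ha i
    have hc0 := cc_pos a hn0 ha i
    have hai := ha i
    rw [hfw i]
    have e1 : Complex.abs (1 - ((cc a i : ℝ) : ℂ)) = 1 - cc a i := by
      rw [show (1:ℂ) - ((cc a i : ℝ) : ℂ) = (((1 - cc a i : ℝ)) : ℂ) by push_cast; ring,
        Complex.abs_ofReal]
      exact _root_.abs_of_nonneg (by linarith)
    have e2 : Complex.abs (w i) = cc a i / a i := by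
      rw [hw_def]
      simp only [map_div₀, Complex.abs_ofReal]
      rw [_root_.abs_of_nonneg hc0.le, ha_def]
    rw [e1, e2, ← lam_eq a hn0 ha i]
    field_simp
  have hlam0 : (0:ℝ) ≤ lam a := by linarith
  -- Qw is a projection of norm ≤ lam
  have hQwY : ∀ z, Qv f w z ∈ Y := fun z => (hY _).mpr (Qv_mem f w hw1 z)
  have hQwid : ∀ y ∈ Y, Qv f w y = y := fun y hy => Qv_fix f w y ((hY y).mp hy)
  have hQw_norm : ‖Qv f w‖ ≤ lam a :=
    Qv_norm_le f w hsum hlam0 (fun i => le_of_eq (hwcoord i))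
  -- generic lower-bound package for any projection representative v
  have hpack : ∀ (v : Fin n → ℂ), (∑ j, f j * v j = 1) → ∀ (Q : (Fin n → ℂ) →L[ℂ] (Fin n → ℂ)),
      Q = Qv f v →
      lam a ≤ ‖Q‖ ∧ ∀ i, (Complex.abs (f i * v i - (cc a i : ℂ)))^2
        ≤ Kc a * (‖Q‖^2 - (lam a)^2) := by
    intro v hv1 Q hQrep
    have hM : ∀ i, Complex.abs (1 - f i * v i)
        + Complex.abs (f i * v i) * ((1 - a i)/(a i)) ≤ ‖Q‖ := by
      intro i
      have h := Qv_norm_ge f v hsum i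
      rw [← hQrep] at h
      have e : Complex.abs (f i * v i) * ((1 - a i)/(a i))
          = Complex.abs (v i) * (1 - a i) := by
        rw [map_mul]
        have hai := (ha i).1
        rw [ha_def]
        have hai' : Complex.abs (f i) ≠ 0 := ne_of_gt hai
        field_simp
      rw [e]
      exact h
    exact core a hn2 ha hsum (fun i => f i * v i) hv1 ‖Q‖ hM
  -- representation of P
  obtain ⟨vP, hvP1, hvPrep⟩ := proj_repr f ⟨0, hn0⟩ (hf0 _) P
    (fun z => (hY _).mp (hPY z)) (fun y hy => hPid y ((hY y).mpr hy))
  obtain ⟨hPlam_ge, hPcoord⟩ := hpack vP hvP1 P hvPrep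
  have hPle : ‖P‖ ≤ lam a := le_trans (hPmin (Qv f w) hQwY hQwid) hQw_norm
  have hPlam : ‖P‖ = lam a := le_antisymm hPle hPlam_ge
  -- identify vP = w
  have hvPw : vP = w := by
    funext i
    have h := hPcoord i
    rw [hPlam] at h
    have h0 : (Complex.abs (f i * vP i - (cc a i : ℂ)))^2 ≤ 0 := by
      have : Kc a * ((lam a)^2 - (lam a)^2) = 0 := by ring
      linarith [h, this.le]
    have h1 : Complex.abs (f i * vP i - (cc a i : ℂ)) = 0 := by
      nlinarith [Complex.abs.nonneg (f i * vP i - (cc a i : ℂ))]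
    have h2 : f i * vP i = ((cc a i : ℝ) : ℂ) := by
      have h3 := Complex.abs.eq_zero.mp h1
      exact sub_eq_zero.mp h3
    show vP i = ((cc a i : ℝ) : ℂ) / f i
    rw [eq_div_iff (hf0 i)]
    linear_combination h2
  have hPw : P = Qv f w := by rw [hvPrep, hvPw]
  set Aa : ℝ := ∑ j, (a j)⁻¹ with hAa_def
  have hne : (Finset.univ : Finset (Fin n)).Nonempty := by
    have : Nonempty (Fin n) := Fin.pos_iff_nonempty.mp hn0
    exact Finset.univ_nonempty
  have hAa_pos : 0 < Aa := Finset.sum_pos (fun j _ => inv_pos.mpr (ha j).1) hne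
  have hAa_ge : ∀ j, (a j)⁻¹ ≤ Aa :=
    fun j => Finset.single_le_sum (fun k _ => (inv_pos.mpr (ha k).1).le) (Finset.mem_univ j)
  have hKc := Kc_pos a hn0 ha
  constructor
  · refine ⟨(Kc a * Aa^2)⁻¹, by positivity, ?_⟩
    intro Q hQY hQid
    obtain ⟨v, hv1, hvrep⟩ := proj_repr f ⟨0, hn0⟩ (hf0 _) Q
      (fun z => (hY _).mp (hQY z)) (fun y hy => hQid y ((hY y).mpr hy))
    obtain ⟨hQlam, hQcoord⟩ := hpack v hv1 Q hvrep
    have hX0 : 0 ≤ ‖Q‖^2 - (lam a)^2 := by nlinarith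
    have hKX : 0 ≤ Kc a * (‖Q‖^2 - (lam a)^2) := mul_nonneg hKc.le hX0
    have hC : ∀ i, Complex.abs (w i - v i)
        ≤ Real.sqrt (Kc a * (‖Q‖^2 - (lam a)^2)) * Aa := by
      intro i
      have h1 : Complex.abs (f i * v i - (cc a i : ℂ))
          ≤ Real.sqrt (Kc a * (‖Q‖^2 - (lam a)^2)) := by
        have hs := Real.sqrt_le_sqrt (hQcoord i)
        rwa [Real.sqrt_sq (Complex.abs.nonneg _)] at hs
      have hmul : (w i - v i) * f i = ((cc a i : ℝ):ℂ) - f i * v i := by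
        show (((cc a i : ℝ):ℂ) / f i - v i) * f i = _
        rw [sub_mul, div_mul_cancel₀ _ (hf0 i)]
        ring
      have h2 : Complex.abs (w i - v i) * a i = Complex.abs (f i * v i - (cc a i : ℂ)) := by
        rw [show a i = Complex.abs (f i) from rfl, ← map_mul, hmul,
          AbsoluteValue.map_sub]
      have h2' : Complex.abs (w i - v i) = Complex.abs (f i * v i - (cc a i : ℂ)) / a i := by
        rw [eq_div_iff (ne_of_gt (ha i).1)]
        exact h2
      rw [h2']
      have h3 : Complex.abs (f i * v i - (cc a i :ℂ)) / a i
          ≤ Real.sqrt (Kc a * (‖Q‖^2 - (lam a)^2)) * (a i)⁻¹ := by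
        rw [div_eq_mul_inv]
        exact mul_le_mul_of_nonneg_right h1 (inv_pos.mpr (ha i).1).le
      exact h3.trans (mul_le_mul_of_nonneg_left (hAa_ge i) (Real.sqrt_nonneg _))
    have hQP : ‖Q - P‖ ≤ Real.sqrt (Kc a * (‖Q‖^2 - (lam a)^2)) * Aa := by
      have := Qv_diff_norm_le f v w hsum
        (C := Real.sqrt (Kc a * (‖Q‖^2 - (lam a)^2)) * Aa) (by positivity) hC
      rw [← hvrep, ← hPw] at this
      exact this
    have hsq : ‖Q - P‖^2 ≤ Kc a * (‖Q‖^2 - (lam a)^2) * Aa^2 := by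
      have h4 : ‖Q - P‖^2 ≤ (Real.sqrt (Kc a * (‖Q‖^2 - (lam a)^2)) * Aa)^2 :=
        pow_le_pow_left₀ (norm_nonneg _) hQP 2
      rwa [mul_pow, Real.sq_sqrt hKX] at h4
    rw [ge_iff_le, hPlam]
    have h5 : (Kc a * Aa^2)⁻¹ * ‖Q - P‖^2 ≤ ‖Q‖^2 - (lam a)^2 := by
      rw [inv_mul_le_iff₀ (by positivity)]
      calc ‖Q - P‖^2 ≤ Kc a * (‖Q‖^2 - (lam a)^2) * Aa^2 := hsq
        _ = Kc a * Aa^2 * (‖Q‖^2 - (lam a)^2) := by ring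
    linarith
  · intro α hα1 hα2
    rintro ⟨r, hr, hineq⟩
    have h2α : (0:ℝ) < 2 - α := by linarith
    set i0 : Fin n := ⟨0, hn0⟩ with hi0
    set i1 : Fin n := ⟨1, by omega⟩ with hi1
    have hi01 : i0 ≠ i1 := by
      rw [hi0, hi1, Fin.ne_iff_vne]
      norm_num
    set u : Fin n → ℝ := fun i => (if i = i0 then (1:ℝ) else 0) - (if i = i1 then 1 else 0)
      with hu_def
    have hu_sum : ∑ i, u i = 0 := by
      simp only [hu_def, Finset.sum_sub_distrib, Finset.sum_ite_eq', Finset.mem_univ, if_true]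
      ring
    have hu_sq : ∀ i, (u i)^2 ≤ 1 := by
      intro i
      simp only [hu_def]
      split_ifs <;> norm_num
    have hu_i0 : u i0 = 1 := by
      simp [hu_def, hi01]
    set K2 : ℝ := ∑ i, (1/(2*(1 - cc a i)) + ((1 - a i)/(a i))/(2 * cc a i)) with hK2_def
    have hterm : ∀ i, 0 < 1/(2*(1 - cc a i)) + ((1 - a i)/(a i))/(2 * cc a i) := by
      intro i
      have hc0 := cc_pos a hn0 ha i
      have hc1 := cc_lt_one a hn2 ha i
      have hai := ha i
      have e1 : (0:ℝ) < 1/(2*(1 - cc a i)) := by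
        apply div_pos one_pos
        linarith
      have e2 : (0:ℝ) ≤ ((1 - a i)/(a i))/(2 * cc a i) := by
        apply div_nonneg (div_nonneg (by linarith) hai.1.le)
        linarith
      linarith
    have hK2pos : 0 < K2 := Finset.sum_pos (fun i _ => hterm i) hne
    have hK2ge : ∀ i, 1/(2*(1 - cc a i)) + ((1 - a i)/(a i))/(2 * cc a i) ≤ K2 :=
      fun i => Finset.single_le_sum (fun k _ => (hterm k).le) (Finset.mem_univ i)
    set D : ℝ := 2 * lam a * K2 + K2^2 with hD_def
    have hDpos : 0 < D := by
      have h := mul_pos (show (0:ℝ) < 2 * lam a by linarith) hK2pos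
      rw [hD_def]
      nlinarith [sq_nonneg K2]
    have hmain : ∀ t : ℝ, 0 < t → t ≤ 1 → r ≤ D * t^(2-α) := by
      intro t ht0 ht1
      set vt : Fin n → ℂ := fun i => (((cc a i : ℝ):ℂ) + ((t * u i : ℝ):ℂ) * Complex.I) / f i
        with hvt_def
      have hfvt : ∀ i, f i * vt i = ((cc a i :ℝ):ℂ) + ((t * u i : ℝ):ℂ) * Complex.I :=
        fun i => mul_div_cancel₀ _ (hf0 i)
      have hvt1 : ∑ j, f j * vt j = 1 := by
        rw [Finset.sum_congr rfl (fun j _ => hfvt j), Finset.sum_add_distrib,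
          ← Complex.ofReal_sum, cc_sum a hn0 ha]
        have he : ∑ j, ((t * u j:ℝ):ℂ) * Complex.I = (((t * ∑ j, u j :ℝ)):ℂ) * Complex.I := by
          rw [← Finset.sum_mul, ← Complex.ofReal_sum, ← Finset.mul_sum]
        rw [he, hu_sum]
        simp
      have hcoordt : ∀ i, Complex.abs (1 - f i * vt i) + Complex.abs (vt i) * (1 - a i)
          ≤ lam a + K2 * t^2 := by
        intro i
        have hai := ha i
        have hc0 := cc_pos a hn0 ha i
        have hc1 := cc_lt_one a hn2 ha i
        have hpc := part2_coord (a i) (cc a i) (t * u i) hai.1 (by linarith) hc0 hc1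
        have e1 : Complex.abs (vt i) * (1 - a i)
            = Complex.abs (((cc a i :ℝ):ℂ) + ((t*u i:ℝ):ℂ) * Complex.I) * ((1 - a i)/(a i)) := by
          show Complex.abs ((((cc a i : ℝ):ℂ) + ((t * u i : ℝ):ℂ) * Complex.I) / f i) * (1 - a i) = _
          rw [map_div₀]
          have hai0 : (0:ℝ) < Complex.abs (f i) := hai.1
          exact (div_mul_eq_mul_div _ _ _).trans (mul_div_assoc _ _ _)
        rw [hfvt i, e1]
        refine le_trans hpc ?_
        rw [lam_eq a hn0 ha i]
        have hcoef : (1/(2*(1 - cc a i)) + ((1 - a i)/(a i))/(2 * cc a i)) * (t*u i)^2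
            ≤ K2 * t^2 := by
          have h1 : (t*u i)^2 = (u i)^2 * t^2 := by ring
          rw [h1]
          have h2 : (1/(2*(1 - cc a i)) + ((1 - a i)/(a i))/(2 * cc a i)) * ((u i)^2 * t^2)
              ≤ K2 * ((u i)^2 * t^2) :=
            mul_le_mul_of_nonneg_right (hK2ge i) (by positivity)
          have h3 : K2 * ((u i)^2 * t^2) ≤ K2 * t^2 := by
            calc K2 * ((u i)^2 * t^2)
                ≤ K2 * (1 * t^2) := mul_le_mul_of_nonneg_left
                  (mul_le_mul_of_nonneg_right (hu_sq i) (sq_nonneg t)) hK2pos.le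
              _ = K2 * t^2 := by ring
          exact h2.trans h3
        linarith
      have hQt_norm : ‖Qv f vt‖ ≤ lam a + K2 * t^2 :=
        Qv_norm_le f vt hsum
          (by nlinarith [mul_nonneg hK2pos.le (sq_nonneg t)]) hcoordt
      have hQtY : ∀ z, Qv f vt z ∈ Y := fun z => (hY _).mpr (Qv_mem f vt hvt1 z)
      have hQtid : ∀ y ∈ Y, Qv f vt y = y := fun y hy => Qv_fix f vt y ((hY y).mp hy)
      have hdiff_ge : t ≤ ‖Qv f vt - P‖ := by
        have h := Qv_diff_norm_ge f vt w hsum i0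
        rw [← hPw] at h
        refine le_trans ?_ h
        have he : w i0 - vt i0 = -(((t * u i0:ℝ):ℂ) * Complex.I / f i0) := by
          show ((cc a i0 : ℝ) : ℂ) / f i0 - (((cc a i0 : ℝ):ℂ) + ((t * u i0 : ℝ):ℂ) * Complex.I) / f i0 = _
          rw [div_sub_div_same, show ((cc a i0:ℝ):ℂ) - (((cc a i0:ℝ):ℂ)
            + ((t*u i0:ℝ):ℂ)*Complex.I) = -(((t*u i0:ℝ):ℂ)*Complex.I) by ring, neg_div]
        rw [he, map_neg_eq_map, map_div₀, map_mul, Complex.abs_ofReal, Complex.abs_I, mul_one,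
          hu_i0, mul_one, _root_.abs_of_pos ht0]
        rw [le_div_iff₀ (ha i0).1]
        nlinarith [(ha i0).2, ht0]
      have happ := hineq (Qv f vt) hQtY hQtid
      rw [hPlam] at happ
      have hα0 : (0:ℝ) ≤ α := by linarith
      have hup : ‖Qv f vt‖^α ≤ (lam a + K2*t^2)^α :=
        Real.rpow_le_rpow (norm_nonneg _) hQt_norm hα0
      have hdown : t^α ≤ ‖Qv f vt - P‖^α := Real.rpow_le_rpow ht0.le hdiff_ge hα0
      have hrd := rpow_diff_le (lam a) (K2*t^2) α (by linarith) (by positivity) (by linarith)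
      have h6 : r * t^α ≤ D * t^2 := by
        have h7 : r * t^α ≤ r * ‖Qv f vt - P‖^α := mul_le_mul_of_nonneg_left hdown hr.le
        have h9 : r * t^α ≤ (lam a + K2*t^2)^2 - (lam a)^2 := by linarith
        have h11 : t^2 ≤ 1 := by nlinarith
        have h12 : (K2*t^2)^2 ≤ K2^2 * t^2 := by nlinarith [sq_nonneg (K2*t), sq_nonneg t]
        have h10 : (lam a + K2*t^2)^2 - (lam a)^2 = 2*lam a*(K2*t^2) + (K2*t^2)^2 := by ring
        have h13 : 2*lam a*(K2*t^2) + (K2*t^2)^2 ≤ D * t^2 := by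
          rw [hD_def]
          nlinarith [h12]
        linarith
      have htα : 0 < t^α := Real.rpow_pos_of_pos ht0 α
      have h14 : t^2 = t^α * t^(2-α) := by
        rw [← Real.rpow_add ht0]
        norm_num
      have h15 : r * t^α ≤ (D * t^(2-α)) * t^α := by
        rw [h14] at h6
        linarith [h6]
      exact le_of_mul_le_mul_right (by linarith) htα
    have hrD : 0 < r/(2*D) := by positivity
    set ttry := min 1 ((r/(2*D))^((2-α)⁻¹)) with httry
    have htp : 0 < ttry := lt_min one_pos (Real.rpow_pos_of_pos hrD _)
    have htl : ttry ≤ 1 := min_le_left _ _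
    have hfin := hmain ttry htp htl
    have h14 : ttry^(2-α) ≤ r/(2*D) := by
      have h15 : ttry ≤ (r/(2*D))^((2-α)⁻¹) := min_le_right _ _
      have h16 := Real.rpow_le_rpow htp.le h15 h2α.le
      rwa [Real.rpow_inv_rpow hrD.le h2α.ne'] at h16
    have h17 : D * ttry^(2-α) ≤ D * (r/(2*D)) := mul_le_mul_of_nonneg_left h14 hDpos.le
    have hhalf : D * (r/(2*D)) = r/2 := by
      have hD0 : D ≠ 0 := hDpos.ne'
      field_simp
    have hcontr : r ≤ r/2 := le_trans hfin (le_trans h17 (le_of_eq hhalf))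
    linarith
end
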